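/- arXiv:1801.01873 — 8 statements merged into one kernel-verified Lean document; each statement's English description precedes it below -/
import Mathlib

section
/- Let X be the set of ordinals {α : α ≤ ω} with the subspace topology inherited from the order topology on the ordinals. Then the Cartesian product X × X with the product topology is homeomorphic to X × X equipped with the lexicographic order and the order topology induced by that lexicographic order. -/
/-- The order topology induced by the lexicographic order on `A ×ₗ B`. -/
noncomputable def lexTop (A B : Type*) [LinearOrder A] [LinearOrder B] :
    TopologicalSpace (A ×ₗ B) := Preorder.topology (A ×ₗ B)


noncomputable section
namespace LexO

open Topology Filter

abbrev N := WithTop ℕ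

local instance topN : TopologicalSpace N := Preorder.topology _
local instance : OrderTopology N := ⟨rfl⟩
local instance topL : TopologicalSpace (N ×ₗ N) := Preorder.topology _
local instance : OrderTopology (N ×ₗ N) := ⟨rfl⟩

def F : N × N → N ×ₗ N := fun p =>
  WithTop.recTopCoe
    (WithTop.recTopCoe (toLex (⊤, WithTop.some 0))
      (fun b => toLex (WithTop.some (2*b+1), ⊤)) p.2)
    (fun a =>
      WithTop.recTopCoe
        (if a = 0 then toLex ((⊤ : N), (⊤ : N)) else toLex (WithTop.some (2*(a-1)), ⊤))
        (fun b =>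
          if a = 0 then toLex ((⊤ : N), WithTop.some (b+1))
          else if a - 1 ≤ b then toLex (WithTop.some (2*(a-1)), WithTop.some (b - (a-1)))
          else toLex (WithTop.some (2*b+1), WithTop.some (a - b - 2)))
        p.2)
    p.1

def G : N ×ₗ N → N × N := fun x =>
  WithTop.recTopCoe
    (WithTop.recTopCoe (WithTop.some 0, (⊤ : N))
      (fun j => if j = 0 then ((⊤ : N), (⊤ : N)) else (WithTop.some 0, WithTop.some (j-1)))
      (ofLex x).2)
    (fun k =>
      WithTop.recTopCoe
        (if k % 2 = 0 then (WithTop.some (k/2 + 1), (⊤ : N))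
         else ((⊤ : N), WithTop.some (k/2)))
        (fun j =>
          if k % 2 = 0 then (WithTop.some (k/2 + 1), WithTop.some (k/2 + j))
          else (WithTop.some (k/2 + j + 2), WithTop.some (k/2)))
        (ofLex x).2)
    (ofLex x).1

-- evaluation lemmas for F
lemma F_tt : F (⊤, ⊤) = toLex (⊤, WithTop.some 0) := rfl
lemma F_tc (b : ℕ) : F (⊤, WithTop.some b) = toLex (WithTop.some (2*b+1), ⊤) := rfl
lemma F_0t : F (WithTop.some 0, ⊤) = toLex ((⊤:N), (⊤:N)) := rfl
lemma F_st {a : ℕ} (h : a ≠ 0) : F (WithTop.some a, ⊤) = toLex (WithTop.some (2*(a-1)), ⊤) := by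
  simp only [F, WithTop.recTopCoe_coe, WithTop.recTopCoe_top]
  rw [if_neg h]
lemma F_0c (b : ℕ) : F (WithTop.some 0, WithTop.some b) = toLex ((⊤:N), WithTop.some (b+1)) := rfl
lemma F_sc_le {a b : ℕ} (h : a ≠ 0) (h2 : a - 1 ≤ b) :
    F (WithTop.some a, WithTop.some b) = toLex (WithTop.some (2*(a-1)), WithTop.some (b - (a-1))) := by
  simp only [F, WithTop.recTopCoe_coe]
  rw [if_neg h, if_pos h2]
lemma F_sc_gt {a b : ℕ} (h : a ≠ 0) (h2 : b < a - 1) :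
    F (WithTop.some a, WithTop.some b) = toLex (WithTop.some (2*b+1), WithTop.some (a - b - 2)) := by
  simp only [F, WithTop.recTopCoe_coe]
  rw [if_neg h, if_neg (Nat.not_le.mpr h2)]

-- evaluation lemmas for G
lemma G_tt : G (toLex (⊤, (⊤:N))) = (WithTop.some 0, ⊤) := rfl
lemma G_t0 : G (toLex ((⊤:N), WithTop.some 0)) = ((⊤:N), (⊤:N)) := rfl
lemma G_ts {j : ℕ} (h : j ≠ 0) : G (toLex ((⊤:N), WithTop.some j)) = (WithTop.some 0, WithTop.some (j-1)) := by
  simp only [G, ofLex_toLex, WithTop.recTopCoe_coe, WithTop.recTopCoe_top]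
  rw [if_neg h]
lemma G_ec {k : ℕ} (hk : k % 2 = 0) (j : ℕ) :
    G (toLex (WithTop.some k, WithTop.some j)) = (WithTop.some (k/2+1), WithTop.some (k/2+j)) := by
  simp only [G, ofLex_toLex, WithTop.recTopCoe_coe]
  rw [if_pos hk]
lemma G_et {k : ℕ} (hk : k % 2 = 0) :
    G (toLex (WithTop.some k, (⊤:N))) = (WithTop.some (k/2+1), (⊤:N)) := by
  simp only [G, ofLex_toLex, WithTop.recTopCoe_coe, WithTop.recTopCoe_top]
  rw [if_pos hk]
lemma G_oc {k : ℕ} (hk : k % 2 = 1) (j : ℕ) :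
    G (toLex (WithTop.some k, WithTop.some j)) = (WithTop.some (k/2+j+2), WithTop.some (k/2)) := by
  simp only [G, ofLex_toLex, WithTop.recTopCoe_coe]
  rw [if_neg (by omega)]
lemma G_ot {k : ℕ} (hk : k % 2 = 1) :
    G (toLex (WithTop.some k, (⊤:N))) = ((⊤:N), WithTop.some (k/2)) := by
  simp only [G, ofLex_toLex, WithTop.recTopCoe_coe, WithTop.recTopCoe_top]
  rw [if_neg (by omega)]

lemma some_eq_some {m n : ℕ} (h : m = n) : WithTop.some m = WithTop.some n := by rw [h]

lemma leftInv : Function.LeftInverse G F := by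
  rintro ⟨a, b⟩
  induction a using WithTop.recTopCoe with
  | top =>
    induction b using WithTop.recTopCoe with
    | top => rw [F_tt, G_t0]
    | coe b =>
      rw [F_tc, G_ot (by omega)]
      exact Prod.ext rfl (some_eq_some (by omega))
  | coe a =>
    rcases Nat.eq_zero_or_pos a with rfl | ha
    · induction b using WithTop.recTopCoe with
      | top => rw [F_0t, G_tt]
      | coe b =>
        rw [F_0c, G_ts (by omega)]
        exact Prod.ext rfl (some_eq_some (by omega))
    · induction b using WithTop.recTopCoe with
      | top =>
        rw [F_st (by omega), G_et (by omega)]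
        exact Prod.ext (some_eq_some (by omega)) rfl
      | coe b =>
        rcases le_or_gt (a-1) b with h | h
        · rw [F_sc_le (by omega) h, G_ec (by omega)]
          exact Prod.ext (some_eq_some (by omega)) (some_eq_some (by omega))
        · rw [F_sc_gt (by omega) h, G_oc (by omega)]
          exact Prod.ext (some_eq_some (by omega)) (some_eq_some (by omega))

lemma rightInv : Function.RightInverse G F := by
  intro x
  obtain ⟨p, rfl⟩ : ∃ p : N × N, toLex p = x := ⟨ofLex x, rfl⟩
  obtain ⟨k, j⟩ := p
  induction k using WithTop.recTopCoe with
  | top =>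
    induction j using WithTop.recTopCoe with
    | top => rw [G_tt, F_0t]
    | coe j =>
      rcases Nat.eq_zero_or_pos j with rfl | hj
      · rw [G_t0, F_tt]
      · rw [G_ts (by omega), F_0c]
        exact congrArg toLex (Prod.ext rfl (some_eq_some (by omega)))
  | coe k =>
    rcases Nat.even_or_odd k with hk | hk
    · have hk2 : k % 2 = 0 := Nat.even_iff.mp hk
      induction j using WithTop.recTopCoe with
      | top =>
        rw [G_et hk2, F_st (by omega)]
        exact congrArg toLex (Prod.ext (some_eq_some (by omega)) rfl)
      | coe j =>
        rw [G_ec hk2, F_sc_le (by omega) (by omega)]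
        exact congrArg toLex (Prod.ext (some_eq_some (by omega)) (some_eq_some (by omega)))
    · have hk2 : k % 2 = 1 := Nat.odd_iff.mp hk
      induction j using WithTop.recTopCoe with
      | top =>
        rw [G_ot hk2, F_tc]
        exact congrArg toLex (Prod.ext (some_eq_some (by omega)) rfl)
      | coe j =>
        rw [G_oc hk2, F_sc_gt (by omega) (by omega)]
        exact congrArg toLex (Prod.ext (some_eq_some (by omega)) (some_eq_some (by omega)))

def E : (N × N) ≃ (N ×ₗ N) := ⟨F, G, leftInv, rightInv⟩

-- basic N facts
lemma some_lt_some {m n : ℕ} (h : m < n) : (WithTop.some m : N) < WithTop.some n :=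
  WithTop.coe_lt_coe.mpr h
lemma some_lt_top (n : ℕ) : (WithTop.some n : N) < ⊤ := WithTop.coe_lt_top n

lemma lt_top_exists {x : N} (h : x < ⊤) : ∃ d : ℕ, x = WithTop.some d := by
  obtain ⟨d, hd⟩ := WithTop.ne_top_iff_exists.mp (WithTop.lt_top_iff_ne_top.mp h)
  exact ⟨d, hd.symm⟩

lemma lt_some_exists {x : N} {n : ℕ} (h : x < WithTop.some n) : ∃ d : ℕ, x = WithTop.some d ∧ d < n := by
  obtain ⟨d, hd⟩ := lt_top_exists (h.trans (some_lt_top n))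
  subst hd
  exact ⟨d, rfl, WithTop.coe_lt_coe.mp h⟩

lemma lex_lt_fst {x y u v : N} (h : x < u) : toLex (x, y) < toLex (u, v) :=
  Prod.Lex.toLex_lt_toLex.mpr (Or.inl h)
lemma lex_lt_snd {x y v : N} (h : y < v) : toLex (x, y) < toLex (x, v) :=
  Prod.Lex.toLex_lt_toLex.mpr (Or.inr ⟨rfl, h⟩)

-- isolated points of N
lemma isOpen_singleton_some (n : ℕ) : IsOpen ({WithTop.some n} : Set N) := by
  cases n with
  | zero =>
    have : ({WithTop.some 0} : Set N) = Set.Iio (WithTop.some 1) := by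
      ext x
      induction x using WithTop.recTopCoe with
      | top => simp [lt_irrefl]
      | coe m =>
        simp only [Set.mem_singleton_iff, Set.mem_Iio, WithTop.coe_lt_coe]
        constructor
        · rintro h; rw [show m = 0 from by exact_mod_cast h]; omega
        · intro h; have : m = 0 := by omega
          rw [this]
    rw [this]; exact isOpen_Iio
  | succ m =>
    have : ({WithTop.some (m+1)} : Set N) = Set.Ioo (WithTop.some m) (WithTop.some (m+2)) := by
      ext x
      induction x using WithTop.recTopCoe with
      | top =>
        simp only [Set.mem_singleton_iff, Set.mem_Ioo]
        constructor
        · rintro h; exact absurd h.symm (WithTop.coe_ne_top)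
        · rintro ⟨_, h⟩; exact absurd h (by simp)
      | coe p =>
        simp only [Set.mem_singleton_iff, Set.mem_Ioo, WithTop.coe_lt_coe]
        constructor
        · intro h
          have : p = m + 1 := by exact_mod_cast h
          omega
        · rintro ⟨h1, h2⟩
          have : p = m + 1 := by omega
          rw [this]
    rw [this]; exact isOpen_Ioo

lemma singleton_mem_nhds_some (n : ℕ) : {(WithTop.some n : N)} ∈ 𝓝 (WithTop.some n : N) :=
  (isOpen_singleton_some n).mem_nhds rfl

lemma Ioi_mem_nhds_top (m : ℕ) : Set.Ioi (WithTop.some m : N) ∈ 𝓝 (⊤ : N) :=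
  Ioi_mem_nhds (some_lt_top m)

lemma not_lt_some_zero (x : N) : ¬ x < WithTop.some 0 := by
  intro h
  obtain ⟨d, rfl, hd⟩ := lt_some_exists h
  omega

lemma contF : Continuous F := by
  rw [continuous_iff_continuousAt]
  rintro ⟨a, b⟩
  induction a using WithTop.recTopCoe with
  | top =>
    induction b using WithTop.recTopCoe with
    | top =>
      -- p = (⊤,⊤), F p = toLex (⊤, some 0)
      rw [ContinuousAt, F_tt, tendsto_order]
      constructor
      · rintro c hc
        obtain ⟨⟨c1, c2⟩, rfl⟩ : ∃ p : N × N, toLex p = c := ⟨ofLex c, rfl⟩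
        rcases Prod.Lex.toLex_lt_toLex.mp hc with h | ⟨h1, h2⟩
        · -- c1 < ⊤
          obtain ⟨e, rfl⟩ := lt_top_exists h
          have hmem : (Set.Ioi (WithTop.some (e+1)) ×ˢ Set.Ioi (WithTop.some (e+1))) ∈
              𝓝 ((⊤:N), (⊤:N)) := by
            rw [nhds_prod_eq]
            exact Filter.prod_mem_prod (Ioi_mem_nhds_top _) (Ioi_mem_nhds_top _)
          filter_upwards [hmem]
          rintro ⟨x, y⟩ ⟨hx, hy⟩
          simp only [Set.mem_Ioi] at hx hy
          induction x using WithTop.recTopCoe with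
          | top =>
            induction y using WithTop.recTopCoe with
            | top => rw [F_tt]; exact lex_lt_fst (some_lt_top e)
            | coe yb =>
              have hyb : e + 1 < yb := WithTop.coe_lt_coe.mp hy
              rw [F_tc]; exact lex_lt_fst (some_lt_some (by omega))
          | coe xa =>
            have hxa : e + 1 < xa := WithTop.coe_lt_coe.mp hx
            induction y using WithTop.recTopCoe with
            | top =>
              rw [F_st (by omega)]; exact lex_lt_fst (some_lt_some (by omega))
            | coe yb =>
              have hyb : e + 1 < yb := WithTop.coe_lt_coe.mp hy
              rcases le_or_gt (xa - 1) yb with hle | hgt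
              · rw [F_sc_le (by omega) hle]; exact lex_lt_fst (some_lt_some (by omega))
              · rw [F_sc_gt (by omega) hgt]; exact lex_lt_fst (some_lt_some (by omega))
        · exact absurd h2 (not_lt_some_zero c2)
      · rintro c hc
        obtain ⟨⟨c1, c2⟩, rfl⟩ : ∃ p : N × N, toLex p = c := ⟨ofLex c, rfl⟩
        rcases Prod.Lex.toLex_lt_toLex.mp hc with h | ⟨h1, h2⟩
        · exact absurd h (not_top_lt)
        · -- c1 = ⊤, some 0 < c2
          have hmem : (Set.Ioi (WithTop.some 0) ×ˢ Set.Ioi (WithTop.some 0)) ∈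
              𝓝 ((⊤:N), (⊤:N)) := by
            rw [nhds_prod_eq]
            exact Filter.prod_mem_prod (Ioi_mem_nhds_top _) (Ioi_mem_nhds_top _)
          filter_upwards [hmem]
          rintro ⟨x, y⟩ ⟨hx, hy⟩
          simp only [Set.mem_Ioi] at hx hy
          subst h1
          induction x using WithTop.recTopCoe with
          | top =>
            induction y using WithTop.recTopCoe with
            | top => rw [F_tt]; exact lex_lt_snd h2
            | coe yb => rw [F_tc]; exact lex_lt_fst (some_lt_top _)
          | coe xa =>
            have hxa : 0 < xa := by exact_mod_cast hx
            induction y using WithTop.recTopCoe with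
            | top => rw [F_st (by omega)]; exact lex_lt_fst (some_lt_top _)
            | coe yb =>
              rcases le_or_gt (xa - 1) yb with hle | hgt
              · rw [F_sc_le (by omega) hle]; exact lex_lt_fst (some_lt_top _)
              · rw [F_sc_gt (by omega) hgt]; exact lex_lt_fst (some_lt_top _)
    | coe b =>
      -- p = (⊤, some b), F p = toLex (some (2b+1), ⊤)
      rw [ContinuousAt, F_tc, tendsto_order]
      constructor
      · rintro c hc
        obtain ⟨⟨c1, c2⟩, rfl⟩ : ∃ p : N × N, toLex p = c := ⟨ofLex c, rfl⟩
        rcases Prod.Lex.toLex_lt_toLex.mp hc with h | ⟨h1, h2⟩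
        · obtain ⟨e, rfl, he⟩ := lt_some_exists h
          have hmem : (Set.Ioi (WithTop.some (b+1)) ×ˢ {WithTop.some b}) ∈
              𝓝 ((⊤:N), WithTop.some b) := by
            rw [nhds_prod_eq]
            exact Filter.prod_mem_prod (Ioi_mem_nhds_top _) (singleton_mem_nhds_some b)
          filter_upwards [hmem]
          rintro ⟨x, y⟩ ⟨hx, hy⟩
          simp only [Set.mem_Ioi] at hx
          simp only [Set.mem_singleton_iff] at hy
          subst hy
          induction x using WithTop.recTopCoe with
          | top => rw [F_tc]; exact lex_lt_fst (some_lt_some he)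
          | coe xa =>
            have hxa : b + 1 < xa := WithTop.coe_lt_coe.mp hx
            rw [F_sc_gt (by omega) (by omega)]
            exact lex_lt_fst (some_lt_some he)
        · obtain ⟨d, rfl⟩ := lt_top_exists h2
          have hmem : (Set.Ioi (WithTop.some (b+2+d)) ×ˢ {WithTop.some b}) ∈
              𝓝 ((⊤:N), WithTop.some b) := by
            rw [nhds_prod_eq]
            exact Filter.prod_mem_prod (Ioi_mem_nhds_top _) (singleton_mem_nhds_some b)
          filter_upwards [hmem]
          rintro ⟨x, y⟩ ⟨hx, hy⟩
          simp only [Set.mem_Ioi] at hx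
          simp only [Set.mem_singleton_iff] at hy
          subst hy
          subst h1
          induction x using WithTop.recTopCoe with
          | top => rw [F_tc]; exact lex_lt_snd (some_lt_top d)
          | coe xa =>
            have hxa : b + 2 + d < xa := WithTop.coe_lt_coe.mp hx
            rw [F_sc_gt (by omega) (by omega)]
            exact lex_lt_snd (some_lt_some (by omega))
      · rintro c hc
        obtain ⟨⟨c1, c2⟩, rfl⟩ : ∃ p : N × N, toLex p = c := ⟨ofLex c, rfl⟩
        rcases Prod.Lex.toLex_lt_toLex.mp hc with h | ⟨h1, h2⟩
        · -- some (2b+1) < c1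
          have hmem : (Set.Ioi (WithTop.some (b+1)) ×ˢ {WithTop.some b}) ∈
              𝓝 ((⊤:N), WithTop.some b) := by
            rw [nhds_prod_eq]
            exact Filter.prod_mem_prod (Ioi_mem_nhds_top _) (singleton_mem_nhds_some b)
          filter_upwards [hmem]
          rintro ⟨x, y⟩ ⟨hx, hy⟩
          simp only [Set.mem_Ioi] at hx
          simp only [Set.mem_singleton_iff] at hy
          subst hy
          induction x using WithTop.recTopCoe with
          | top => rw [F_tc]; exact lex_lt_fst h
          | coe xa =>
            have hxa : b + 1 < xa := WithTop.coe_lt_coe.mp hx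
            rw [F_sc_gt (by omega) (by omega)]
            exact lex_lt_fst h
        · exact absurd h2 not_top_lt
  | coe a =>
    induction b using WithTop.recTopCoe with
    | top =>
      rcases Nat.eq_zero_or_pos a with rfl | ha
      · -- p = (some 0, ⊤), F p = toLex (⊤, ⊤)
        rw [ContinuousAt, F_0t, tendsto_order]
        constructor
        · rintro c hc
          obtain ⟨⟨c1, c2⟩, rfl⟩ : ∃ p : N × N, toLex p = c := ⟨ofLex c, rfl⟩
          rcases Prod.Lex.toLex_lt_toLex.mp hc with h | ⟨h1, h2⟩
          · -- c1 < ⊤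
            have hmem : ({WithTop.some 0} ×ˢ Set.Ioi (WithTop.some 0)) ∈
                𝓝 (WithTop.some 0, (⊤:N)) := by
              rw [nhds_prod_eq]
              exact Filter.prod_mem_prod (singleton_mem_nhds_some 0) (Ioi_mem_nhds_top _)
            filter_upwards [hmem]
            rintro ⟨x, y⟩ ⟨hx, hy⟩
            simp only [Set.mem_singleton_iff] at hx
            subst hx
            induction y using WithTop.recTopCoe with
            | top => rw [F_0t]; exact lex_lt_fst h
            | coe yb => rw [F_0c]; exact lex_lt_fst h
          · obtain ⟨d, rfl⟩ := lt_top_exists h2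
            subst h1
            have hmem : ({WithTop.some 0} ×ˢ Set.Ioi (WithTop.some d)) ∈
                𝓝 (WithTop.some 0, (⊤:N)) := by
              rw [nhds_prod_eq]
              exact Filter.prod_mem_prod (singleton_mem_nhds_some 0) (Ioi_mem_nhds_top _)
            filter_upwards [hmem]
            rintro ⟨x, y⟩ ⟨hx, hy⟩
            simp only [Set.mem_singleton_iff] at hx
            simp only [Set.mem_Ioi] at hy
            subst hx
            induction y using WithTop.recTopCoe with
            | top => rw [F_0t]; exact lex_lt_snd (some_lt_top d)
            | coe yb =>
              have hyb : d < yb := WithTop.coe_lt_coe.mp hy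
              rw [F_0c]; exact lex_lt_snd (some_lt_some (by omega))
        · rintro c hc
          obtain ⟨⟨c1, c2⟩, rfl⟩ : ∃ p : N × N, toLex p = c := ⟨ofLex c, rfl⟩
          rcases Prod.Lex.toLex_lt_toLex.mp hc with h | ⟨h1, h2⟩
          · exact absurd h not_top_lt
          · exact absurd h2 not_top_lt
      · -- p = (some a, ⊤), a ≠ 0, F p = toLex (some (2*(a-1)), ⊤)
        rw [ContinuousAt, F_st (by omega), tendsto_order]
        constructor
        · rintro c hc
          obtain ⟨⟨c1, c2⟩, rfl⟩ : ∃ p : N × N, toLex p = c := ⟨ofLex c, rfl⟩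
          rcases Prod.Lex.toLex_lt_toLex.mp hc with h | ⟨h1, h2⟩
          · obtain ⟨e, rfl, he⟩ := lt_some_exists h
            have hmem : ({WithTop.some a} ×ˢ Set.Ioi (WithTop.some a)) ∈
                𝓝 (WithTop.some a, (⊤:N)) := by
              rw [nhds_prod_eq]
              exact Filter.prod_mem_prod (singleton_mem_nhds_some a) (Ioi_mem_nhds_top _)
            filter_upwards [hmem]
            rintro ⟨x, y⟩ ⟨hx, hy⟩
            simp only [Set.mem_singleton_iff] at hx
            simp only [Set.mem_Ioi] at hy
            subst hx
            induction y using WithTop.recTopCoe with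
            | top => rw [F_st (by omega)]; exact lex_lt_fst (some_lt_some he)
            | coe yb =>
              have hyb : a < yb := WithTop.coe_lt_coe.mp hy
              rw [F_sc_le (by omega) (by omega)]
              exact lex_lt_fst (some_lt_some he)
          · obtain ⟨d, rfl⟩ := lt_top_exists h2
            subst h1
            have hmem : ({WithTop.some a} ×ˢ Set.Ioi (WithTop.some (a + d))) ∈
                𝓝 (WithTop.some a, (⊤:N)) := by
              rw [nhds_prod_eq]
              exact Filter.prod_mem_prod (singleton_mem_nhds_some a) (Ioi_mem_nhds_top _)
            filter_upwards [hmem]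
            rintro ⟨x, y⟩ ⟨hx, hy⟩
            simp only [Set.mem_singleton_iff] at hx
            simp only [Set.mem_Ioi] at hy
            subst hx
            induction y using WithTop.recTopCoe with
            | top => rw [F_st (by omega)]; exact lex_lt_snd (some_lt_top d)
            | coe yb =>
              have hyb : a + d < yb := WithTop.coe_lt_coe.mp hy
              rw [F_sc_le (by omega) (by omega)]
              exact lex_lt_snd (some_lt_some (by omega))
        · rintro c hc
          obtain ⟨⟨c1, c2⟩, rfl⟩ : ∃ p : N × N, toLex p = c := ⟨ofLex c, rfl⟩
          rcases Prod.Lex.toLex_lt_toLex.mp hc with h | ⟨h1, h2⟩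
          · have hmem : ({WithTop.some a} ×ˢ Set.Ioi (WithTop.some a)) ∈
                𝓝 (WithTop.some a, (⊤:N)) := by
              rw [nhds_prod_eq]
              exact Filter.prod_mem_prod (singleton_mem_nhds_some a) (Ioi_mem_nhds_top _)
            filter_upwards [hmem]
            rintro ⟨x, y⟩ ⟨hx, hy⟩
            simp only [Set.mem_singleton_iff] at hx
            simp only [Set.mem_Ioi] at hy
            subst hx
            induction y using WithTop.recTopCoe with
            | top => rw [F_st (by omega)]; exact lex_lt_fst h
            | coe yb =>
              have hyb : a < yb := WithTop.coe_lt_coe.mp hy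
              rw [F_sc_le (by omega) (by omega)]
              exact lex_lt_fst h
          · exact absurd h2 not_top_lt
    | coe b =>
      -- isolated point
      have hsing : IsOpen ({(WithTop.some a, WithTop.some b)} : Set (N × N)) := by
        have : ({(WithTop.some a, WithTop.some b)} : Set (N × N)) =
            ({WithTop.some a} : Set N) ×ˢ ({WithTop.some b} : Set N) := by
          ext ⟨x, y⟩; simp [Prod.ext_iff]
        rw [this]
        exact (isOpen_singleton_some a).prod (isOpen_singleton_some b)
      rw [ContinuousAt, (isOpen_singleton_iff_nhds_eq_pure _).mp hsing]
      exact tendsto_pure_nhds F _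

lemma homeoNN : Nonempty ((N × N) ≃ₜ (N ×ₗ N)) := by
  have : Continuous (E : N × N → N ×ₗ N) := contF
  exact ⟨this.homeoOfEquivCompactToT2⟩

universe u v w z

abbrev X := {α : Ordinal.{u} // α ≤ Ordinal.omega0.{u}}

local instance ordTopX : OrderTopology (X.{u}) :=
  inferInstanceAs (OrderTopology (Set.Iic Ordinal.omega0.{u}))

local instance topXL : TopologicalSpace (X.{u} ×ₗ X.{v}) := Preorder.topology _
local instance : OrderTopology (X.{u} ×ₗ X.{v}) := ⟨rfl⟩

def toXfun : N → X.{u} :=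
  WithTop.recTopCoe ⟨Ordinal.omega0, le_rfl⟩ (fun n => ⟨(n : Ordinal), (Ordinal.nat_lt_omega0 n).le⟩)

lemma toXfun_mono : StrictMono (toXfun.{u}) := by
  intro x y h
  induction x using WithTop.recTopCoe with
  | top => exact absurd h (not_top_lt)
  | coe m =>
    induction y using WithTop.recTopCoe with
    | top =>
      show ((m : Ordinal.{u}) : Ordinal) < Ordinal.omega0
      exact Ordinal.nat_lt_omega0 m
    | coe n =>
      have hmn : m < n := WithTop.coe_lt_coe.mp h
      show ((m : ℕ) : Ordinal.{u}) < ((n : ℕ) : Ordinal)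
      exact_mod_cast hmn

lemma toXfun_surj : Function.Surjective (toXfun.{u}) := by
  rintro ⟨α, hα⟩
  rcases lt_or_eq_of_le hα with h | h
  · obtain ⟨n, rfl⟩ := Ordinal.lt_omega0.mp h
    exact ⟨WithTop.some n, rfl⟩
  · subst h
    exact ⟨⊤, rfl⟩

noncomputable def eNX : N ≃o X.{u} := StrictMono.orderIsoOfSurjective _ toXfun_mono toXfun_surj

noncomputable def eLex : (N ×ₗ N) ≃o (X.{u} ×ₗ X.{v}) where
  toEquiv := (ofLex.trans (eNX.{u}.toEquiv.prodCongr eNX.{v}.toEquiv)).trans toLex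
  map_rel_iff' := by
    rintro a b
    show toLex ((Prod.map eNX eNX) (ofLex a)) ≤ toLex ((Prod.map eNX eNX) (ofLex b)) ↔ a ≤ b
    conv_rhs => rw [← toLex_ofLex a, ← toLex_ofLex b]
    rw [Prod.Lex.toLex_le_toLex, Prod.Lex.toLex_le_toLex]
    simp only [Prod.map_fst, Prod.map_snd]
    rw [eNX.lt_iff_lt, eNX.le_iff_le, EmbeddingLike.apply_eq_iff_eq]

noncomputable def finalHomeo : Nonempty ((X.{w} × X.{z}) ≃ₜ (X.{u} ×ₗ X.{v})) := by
  obtain ⟨h⟩ := homeoNN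
  have h1 : N ≃ₜ X.{w} := eNX.toHomeomorph
  have h2 : N ≃ₜ X.{z} := eNX.toHomeomorph
  exact ⟨(h1.prodCongr h2).symm.trans (h.trans eLex.{u,v}.toHomeomorph)⟩

end LexO


/-- `X = {α : α ≤ ω}` with the subspace topology from the ordinals: `X × X` with the
product topology is homeomorphic to `X ×ₗ X` with the order topology of the
lexicographic order. -/
theorem stmt_0 :
    letI : TopologicalSpace
        ({α : Ordinal // α ≤ Ordinal.omega0} ×ₗ {α : Ordinal // α ≤ Ordinal.omega0}) :=
      lexTop _ _
    Nonempty (({α : Ordinal // α ≤ Ordinal.omega0} × {α : Ordinal // α ≤ Ordinal.omega0}) ≃ₜ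
      ({α : Ordinal // α ≤ Ordinal.omega0} ×ₗ {α : Ordinal // α ≤ Ordinal.omega0})) := by
  exact LexO.finalHomeo
end
end

section
/- The space ℚ × ℚ with the product topology (ℚ carrying its standard topology, which is the order topology of its usual order) is homeomorphic to ℚ × ℚ equipped with the lexicographic order (from the usual order on each factor) and the order topology induced by that lexicographic order. -/
open Finsupp Set TopologicalSpace

namespace Stmt2Aux

/-- Eventually-zero sequences of integers, with the lexicographic order. -/
abbrev S := Lex (ℕ →₀ ℤ)

/-- The "product" topology on `S`, induced from `ℕ → ℤ` (with `ℤ` discrete). -/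
def Tp : TopologicalSpace S :=
  TopologicalSpace.induced (fun f : S => ((ofLex f : ℕ →₀ ℤ) : ℕ → ℤ)) Pi.topologicalSpace

/-- Modify the value of `f` at `n` by adding `k`. -/
noncomputable def bump (f : S) (n : ℕ) (k : ℤ) : S := toLex (ofLex f + Finsupp.single n k)

lemma bump_apply (f : S) (n : ℕ) (k : ℤ) (i : ℕ) :
    ofLex (bump f n k) i = ofLex f i + if n = i then k else 0 := by
  simp [bump, Finsupp.single_apply]

lemma lt_bump (f : S) (n : ℕ) {k : ℤ} (hk : 0 < k) : f < bump f n k := by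
  refine Finsupp.Lex.lt_iff.mpr ⟨n, fun j hj => ?_, ?_⟩
  · rw [bump_apply, if_neg (by omega : ¬ n = j), add_zero]
  · rw [bump_apply, if_pos rfl]; omega

lemma bump_lt (f : S) (n : ℕ) {k : ℤ} (hk : k < 0) : bump f n k < f := by
  refine Finsupp.Lex.lt_iff.mpr ⟨n, fun j hj => ?_, ?_⟩
  · rw [bump_apply, if_neg (by omega : ¬ n = j), add_zero]
  · rw [bump_apply, if_pos rfl]; omega

instance : NoMaxOrder S := ⟨fun f => ⟨bump f 0 1, lt_bump f 0 one_pos⟩⟩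
instance : NoMinOrder S := ⟨fun f => ⟨bump f 0 (-1), bump_lt f 0 (by norm_num)⟩⟩
instance : Countable S := inferInstanceAs (Countable (ℕ →₀ ℤ))
instance : Nonempty S := ⟨toLex 0⟩

instance : DenselyOrdered S := by
  constructor
  intro f g h
  obtain ⟨j, hj, hjlt⟩ := Finsupp.Lex.lt_iff.mp h
  refine ⟨bump f (j + 1) 1, lt_bump f _ one_pos, Finsupp.Lex.lt_iff.mpr ⟨j, fun d hd => ?_, ?_⟩⟩
  · rw [bump_apply, if_neg (by omega), add_zero]; exact hj d hd
  · rw [bump_apply, if_neg (by omega), add_zero]; exact hjlt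

lemma mem_Ioo_agree {p g : S} {N : ℕ}
    (h1 : bump p N (-1) < g) (h2 : g < bump p N 1) :
    ∀ i, i < N → ofLex g i = ofLex p i := by
  intro i
  induction i using Nat.strong_induction_on with
  | _ i IH =>
    intro hi
    rcases lt_trichotomy (ofLex g i) (ofLex p i) with hlt | heq | hgt
    · exfalso
      have : g < bump p N (-1) := by
        refine Finsupp.Lex.lt_iff.mpr ⟨i, fun d hd => ?_, ?_⟩
        · rw [IH d hd (hd.trans hi), bump_apply, if_neg (by omega), add_zero]
        · rw [bump_apply, if_neg (by omega), add_zero]; exact hlt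
      exact absurd h1 (lt_asymm this)
    · exact heq
    · exfalso
      have : bump p N 1 < g := by
        refine Finsupp.Lex.lt_iff.mpr ⟨i, fun d hd => ?_, ?_⟩
        · rw [IH d hd (hd.trans hi), bump_apply, if_neg (by omega), add_zero]
        · rw [bump_apply, if_neg (by omega), add_zero]; exact hgt
      exact absurd h2 (lt_asymm this)

lemma continuous_coord (i : ℕ) : @Continuous S ℤ Tp _ (fun g : S => ofLex g i) :=
  @Continuous.comp _ _ _ Tp _ _ _ _ (continuous_apply i) continuous_induced_dom

lemma To_eq_Tp : Preorder.topology S = Tp := by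
  apply le_antisymm
  · -- order topology is finer: identity `(S, To) → (S, Tp)` is continuous
    show Preorder.topology S ≤ TopologicalSpace.induced
      (fun f : S => ((ofLex f : ℕ →₀ ℤ) : ℕ → ℤ)) Pi.topologicalSpace
    letI : TopologicalSpace S := Preorder.topology S
    haveI : OrderTopology S := ⟨rfl⟩
    rw [← continuous_iff_le_induced, continuous_pi_iff]
    intro i
    rw [continuous_discrete_rng]
    intro n
    rw [isOpen_iff_forall_mem_open]
    intro p (hp : ofLex p i = n)
    refine ⟨Ioo (bump p (i + 1) (-1)) (bump p (i + 1) 1), ?_, isOpen_Ioo,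
      bump_lt p _ (by norm_num), lt_bump p _ one_pos⟩
    intro g hg
    have := mem_Ioo_agree hg.1 hg.2 i (Nat.lt_succ_self i)
    simp only [Set.mem_preimage, Set.mem_singleton_iff]
    rw [this, hp]
  · -- Tp is finer than the generated order topology: each ray is Tp-open
    apply le_generateFrom
    rintro s ⟨a, rfl | rfl⟩
    · -- Ioi a
      letI : TopologicalSpace S := Tp
      rw [isOpen_iff_forall_mem_open]
      intro f (hf : a < f)
      obtain ⟨j, hj, hjlt⟩ := Finsupp.Lex.lt_iff.mp hf
      refine ⟨⋂ d ∈ Finset.range (j + 1), (fun g : S => ofLex g d) ⁻¹' {ofLex f d},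
        ?_, ?_, ?_⟩
      · intro g hg
        simp only [Finset.mem_range, Set.mem_iInter, Set.mem_preimage,
          Set.mem_singleton_iff] at hg
        show a < g
        refine Finsupp.Lex.lt_iff.mpr ⟨j, fun d hd => ?_, ?_⟩
        · rw [hj d hd, hg d (by omega)]
        · rw [hg j (by omega)]; exact hjlt
      · exact isOpen_biInter_finset fun d _ =>
          (continuous_coord d).isOpen_preimage _ (isOpen_discrete _)
      · simp
    · -- Iio a
      letI : TopologicalSpace S := Tp
      rw [isOpen_iff_forall_mem_open]
      intro f (hf : f < a)
      obtain ⟨j, hj, hjlt⟩ := Finsupp.Lex.lt_iff.mp hf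
      refine ⟨⋂ d ∈ Finset.range (j + 1), (fun g : S => ofLex g d) ⁻¹' {ofLex f d},
        ?_, ?_, ?_⟩
      · intro g hg
        simp only [Finset.mem_range, Set.mem_iInter, Set.mem_preimage,
          Set.mem_singleton_iff] at hg
        show g < a
        refine Finsupp.Lex.lt_iff.mpr ⟨j, fun d hd => ?_, ?_⟩
        · rw [hg d (by omega), hj d hd]
        · rw [hg j (by omega)]; exact hjlt
      · exact isOpen_biInter_finset fun d _ =>
          (continuous_coord d).isOpen_preimage _ (isOpen_discrete _)
      · simp

end Stmt2Aux
namespace Stmt2Aux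

noncomputable def interleave0 : (ℕ →₀ ℤ) × (ℕ →₀ ℤ) ≃ (ℕ →₀ ℤ) :=
  Finsupp.sumFinsuppEquivProdFinsupp.symm.trans
    (Finsupp.equivCongrLeft Equiv.natSumNatEquivNat)

noncomputable def interleave : S × S ≃ S :=
  ((ofLex.prodCongr ofLex).trans interleave0).trans toLex

lemma interleave_coord (x : S × S) (m : ℕ) :
    ofLex (interleave x) m =
      (Finsupp.sumFinsuppEquivProdFinsupp.symm ((ofLex x.1 : ℕ →₀ ℤ), (ofLex x.2 : ℕ →₀ ℤ)))
        (Equiv.natSumNatEquivNat.symm m) := by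
  simp [interleave, interleave0, Finsupp.equivCongrLeft_apply, Finsupp.equivMapDomain_apply]

lemma interleave_symm_coord_fst (h : S) (a : ℕ) :
    ofLex (interleave.symm h).1 a = ofLex h (Equiv.natSumNatEquivNat (Sum.inl a)) := by
  simp [interleave, interleave0, Finsupp.equivCongrLeft_symm, Finsupp.equivCongrLeft_apply,
    Finsupp.equivMapDomain_apply, Finsupp.fst_sumFinsuppEquivProdFinsupp]

lemma interleave_symm_coord_snd (h : S) (b : ℕ) :
    ofLex (interleave.symm h).2 b = ofLex h (Equiv.natSumNatEquivNat (Sum.inr b)) := by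
  simp [interleave, interleave0, Finsupp.equivCongrLeft_symm, Finsupp.equivCongrLeft_apply,
    Finsupp.equivMapDomain_apply, Finsupp.snd_sumFinsuppEquivProdFinsupp]

lemma continuous_to_S {X : Type*} [tX : TopologicalSpace X] {F : X → S}
    (h : ∀ i, Continuous fun x => ofLex (F x) i) : @Continuous X S tX Tp F :=
  continuous_induced_rng.mpr (continuous_pi h)

lemma continuous_interleave :
    @Continuous (S × S) S (@instTopologicalSpaceProd S S Tp Tp) Tp interleave := by
  letI : TopologicalSpace S := Tp
  apply continuous_to_S
  intro m
  rcases hm : Equiv.natSumNatEquivNat.symm m with a | b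
  · have : (fun x : S × S => ofLex (interleave x) m) = fun x : S × S => (ofLex x.1 : ℕ →₀ ℤ) a := by
      funext x
      rw [interleave_coord, hm, Finsupp.sumFinsuppEquivProdFinsupp_symm_inl]
    rw [this]
    exact (continuous_coord a).comp continuous_fst
  · have : (fun x : S × S => ofLex (interleave x) m) = fun x : S × S => (ofLex x.2 : ℕ →₀ ℤ) b := by
      funext x
      rw [interleave_coord, hm, Finsupp.sumFinsuppEquivProdFinsupp_symm_inr]
    rw [this]
    exact (continuous_coord b).comp continuous_snd

lemma continuous_interleave_symm :
    @Continuous S (S × S) Tp (@instTopologicalSpaceProd S S Tp Tp) interleave.symm := by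
  letI : TopologicalSpace S := Tp
  have h1 : Continuous fun h : S => (interleave.symm h).1 := by
    apply continuous_to_S
    intro a
    have : (fun h : S => ofLex (interleave.symm h).1 a) =
        fun h : S => ofLex h (Equiv.natSumNatEquivNat (Sum.inl a)) := by
      funext h; exact interleave_symm_coord_fst h a
    rw [this]
    exact continuous_coord _
  have h2 : Continuous fun h : S => (interleave.symm h).2 := by
    apply continuous_to_S
    intro b
    have : (fun h : S => ofLex (interleave.symm h).2 b) =
        fun h : S => ofLex h (Equiv.natSumNatEquivNat (Sum.inr b)) := by
      funext h; exact interleave_symm_coord_snd h b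
    rw [this]
    exact continuous_coord _
  exact h1.prodMk h2

noncomputable def interleaveHomeo :
    @Homeomorph (S × S) S (@instTopologicalSpaceProd S S Tp Tp) Tp :=
  @Homeomorph.mk (S × S) S (@instTopologicalSpaceProd S S Tp Tp) Tp interleave
    continuous_interleave continuous_interleave_symm

end Stmt2Aux

open Stmt2Aux in
/-- `ℚ × ℚ` with the product topology is homeomorphic to `ℚ ×ₗ ℚ` with the order topology
of the lexicographic order. -/
theorem stmt_2 :
    letI : TopologicalSpace (ℚ ×ₗ ℚ) := lexTop ℚ ℚ
    Nonempty ((ℚ × ℚ) ≃ₜ (ℚ ×ₗ ℚ)) := by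
  letI : TopologicalSpace (ℚ ×ₗ ℚ) := lexTop ℚ ℚ
  show Nonempty ((ℚ × ℚ) ≃ₜ (ℚ ×ₗ ℚ))
  haveI : OrderTopology (ℚ ×ₗ ℚ) := ⟨rfl⟩
  haveI : Countable (ℚ ×ₗ ℚ) := inferInstanceAs (Countable (ℚ × ℚ))
  haveI : Nonempty (ℚ ×ₗ ℚ) := inferInstanceAs (Nonempty (ℚ × ℚ))
  letI tS : TopologicalSpace S := Tp
  haveI : OrderTopology S := ⟨To_eq_Tp.symm⟩
  obtain ⟨e₁⟩ : Nonempty (ℚ ≃o S) := Order.iso_of_countable_dense ℚ S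
  obtain ⟨e₂⟩ : Nonempty (ℚ ≃o (ℚ ×ₗ ℚ)) := Order.iso_of_countable_dense ℚ (ℚ ×ₗ ℚ)
  exact ⟨((e₁.toHomeomorph.prodCongr e₁.toHomeomorph).trans interleaveHomeo).trans
    (e₁.toHomeomorph.symm.trans e₂.toHomeomorph)⟩
end

section
/- Let D be any topological space whose topology is discrete. Then there exists a linear order ≺ on D that is topology-compatible (the order topology of ≺ is the discrete topology of D) such that D × D with the product topology is homeomorphic to D × D equipped with the lexicographic order induced by ≺ and the order topology of that lexicographic order. -/
/-- If every element is covered and covers, the order topology is discrete. -/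
lemma orderTop_discrete {α : Type*} [LinearOrder α]
    (h : ∀ x : α, (∃ y, y ⋖ x) ∧ (∃ z, x ⋖ z)) :
    Preorder.topology α = ⊥ := by
  letI := Preorder.topology α
  haveI : OrderTopology α := ⟨rfl⟩
  apply eq_bot_of_singletons_open
  intro x
  obtain ⟨⟨y, hy⟩, ⟨z, hz⟩⟩ := h x
  have : {x} = Set.Ioo y z := by
    ext w
    simp only [Set.mem_singleton_iff, Set.mem_Ioo]
    constructor
    · rintro rfl; exact ⟨hy.1, hz.1⟩
    · rintro ⟨h1, h2⟩
      have hle : x ≤ w := not_lt.mp (fun hw => hy.2 h1 hw)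
      have hge : w ≤ x := not_lt.mp (fun hw => hz.2 hw h2)
      exact le_antisymm hge hle
  rw [this]
  exact isOpen_Ioo

/-- Covering relation transfers along a lifted linear order. -/
lemma covBy_lift' {α β : Type*} [LinearOrder β] (f : α ≃ β) {x y : α}
    (h : f x ⋖ f y) :
    @CovBy α (LinearOrder.lift' (⇑f) f.injective).toLT x y := by
  constructor
  · exact h.1
  · intro c hc1 hc2
    exact h.2 hc1 hc2

lemma exists_good_order {D β : Type*} [LinearOrder β] (e : D ≃ β)
    (hβ : ∀ b : β, (∃ y, y ⋖ b) ∧ (∃ z, b ⋖ z)) :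
    ∃ lo : LinearOrder D, ∀ x : D,
      (∃ y, @CovBy D lo.toLT y x) ∧ (∃ z, @CovBy D lo.toLT x z) := by
  refine ⟨LinearOrder.lift' (⇑e) e.injective, fun x => ?_⟩
  obtain ⟨⟨y, hy⟩, ⟨z, hz⟩⟩ := hβ (e x)
  refine ⟨⟨e.symm y, covBy_lift' e ?_⟩, ⟨e.symm z, covBy_lift' e ?_⟩⟩
  · rw [Equiv.apply_symm_apply]; exact hy
  · rw [Equiv.apply_symm_apply]; exact hz

lemma lex_covBy {α β : Type*} [LinearOrder α] [LinearOrder β] {a : α} {b b' : β}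
    (h : b ⋖ b') : (toLex (a, b) : α ×ₗ β) ⋖ toLex (a, b') := by
  constructor
  · rw [Prod.Lex.lt_iff]; exact Or.inr ⟨rfl, h.1⟩
  · intro w h1 h2
    have h1 := Prod.Lex.lt_iff.mp h1
    have h2 := Prod.Lex.lt_iff.mp h2
    simp only [ofLex_toLex] at h1 h2
    rcases h1 with h1 | ⟨heq1, h1⟩ <;> rcases h2 with h2 | ⟨heq2, h2⟩
    · exact absurd (h1.trans h2) (lt_irrefl _)
    · exact absurd (heq2 ▸ h1) (lt_irrefl _)
    · exact absurd (heq1 ▸ h2) (lt_irrefl _)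
    · exact h.2 h1 h2

/-- For any discrete topological space `D` there is a topology-compatible linear order `≺`
on `D` such that `D × D` with the product topology is homeomorphic to `D ×ₗ D` (lex order
from `≺`) with the order topology. -/
theorem stmt_5 (D : Type*) [t : TopologicalSpace D] [DiscreteTopology D] :
    ∃ lo : LinearOrder D,
      @Preorder.topology D lo.toPreorder = t ∧
      Nonempty (@Homeomorph (D × D) (D ×ₗ D) instTopologicalSpaceProd (@lexTop D D lo lo)) := by
  -- in all cases we produce a linear order whose order topology (and that of the lex square)
  -- is discrete
  have key : ∃ lo : LinearOrder D, @Preorder.topology D lo.toPreorder = ⊥ ∧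
      @lexTop D D lo lo = ⊥ := by
    cases finite_or_infinite D with
    | inl hfin =>
      letI lo : LinearOrder D := IsWellOrder.linearOrder WellOrderingRel
      refine ⟨lo, ?_, ?_⟩
      · letI := Preorder.topology D
        haveI : OrderTopology D := ⟨rfl⟩
        exact DiscreteTopology.eq_bot
      · haveI : Finite (D ×ₗ D) := Finite.of_equiv (D × D) toLex
        letI := lexTop D D
        haveI : OrderTopology (D ×ₗ D) := ⟨rfl⟩
        exact DiscreteTopology.eq_bot
    | inr hinf =>
      -- D ≃ D × ℤ
      have hcard : Nonempty (D ≃ D × ℤ) := by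
        rw [← Cardinal.eq]
        rw [Cardinal.mk_prod, Cardinal.mk_int, Cardinal.lift_aleph0, Cardinal.lift_uzero,
          Cardinal.mul_aleph0_eq (Cardinal.aleph0_le_mk D)]
      obtain ⟨e⟩ := hcard
      have hgood : ∃ lo : LinearOrder D, ∀ x : D,
          (∃ y, @CovBy D lo.toLT y x) ∧ (∃ z, @CovBy D lo.toLT x z) := by
        letI L0 : LinearOrder D := IsWellOrder.linearOrder WellOrderingRel
        refine exists_good_order (e.trans toLex) (fun b => ?_)
        exact ⟨⟨toLex ((ofLex b).1, (ofLex b).2 - 1),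
                 lex_covBy (Order.sub_one_covBy (ofLex b).2)⟩,
               ⟨toLex ((ofLex b).1, (ofLex b).2 + 1),
                 lex_covBy (Order.covBy_add_one (ofLex b).2)⟩⟩
      obtain ⟨lo, hcov⟩ := hgood
      letI := lo
      refine ⟨lo, orderTop_discrete hcov, ?_⟩
      have hcov2 : ∀ x : D ×ₗ D, (∃ y, y ⋖ x) ∧ (∃ z, x ⋖ z) := by
        intro x
        obtain ⟨⟨y, hy⟩, ⟨z, hz⟩⟩ := hcov (ofLex x).2
        exact ⟨⟨toLex ((ofLex x).1, y), lex_covBy hy⟩,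
               ⟨toLex ((ofLex x).1, z), lex_covBy hz⟩⟩
      exact orderTop_discrete hcov2
  obtain ⟨lo, h1, h2⟩ := key
  have ht : t = ⊥ := DiscreteTopology.eq_bot
  refine ⟨lo, by rw [h1, ht], ⟨?_⟩⟩
  letI : TopologicalSpace (D ×ₗ D) := @lexTop D D lo lo
  haveI : DiscreteTopology (D ×ₗ D) := ⟨h2⟩
  exact { toEquiv := (toLex : D × D ≃ D ×ₗ D)
          continuous_toFun := continuous_of_discreteTopology
          continuous_invFun := continuous_of_discreteTopology }
end

section
/- Let D be a discrete topological space of cardinality ℵ₁, let W = {α : α ≤ ω} be the set of ordinals at most ω with its subspace topology from the ordinals, and let X be the topological disjoint sum W ⊕ D. Then X is orderable: there exists a linear order on X whose order topology equals the topology of X. -/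
/-- `W = {α : α ≤ ω}` with the subspace topology from the ordinals. -/
abbrev Wspace : Type 1 := {α : Ordinal // α ≤ Ordinal.omega0}

section Aux

universe u
variable {D : Type u} [LinearOrder D]

/-- The linearly ordered target: `W` followed by `ℕ ⊕ₗ (D ×ₗ ℤ)`. -/
abbrev STarget (D : Type u) [LinearOrder D] : Type (max 1 u) :=
  Lex (Wspace ⊕ Lex (ℕ ⊕ Lex (D × ℤ)))

variable (e : D ≃ (ℕ ⊕ D × ℤ))

noncomputable def gmap : D → Lex (ℕ ⊕ Lex (D × ℤ)) :=
  fun d => toLex (Sum.map id toLex (e d))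

noncomputable def fmap : Wspace ⊕ D → STarget D :=
  fun x => toLex (Sum.map id (gmap e) x)

lemma gmap_inj : Function.Injective (gmap e) := by
  intro a b hab
  apply e.injective
  exact Function.Injective.sumMap (fun a b h => h) toLex.injective (toLex.injective hab)

lemma fmap_inj : Function.Injective (fmap e) := by
  intro a b hab
  exact Function.Injective.sumMap (fun a b h => h) (gmap_inj e) (toLex.injective hab)

lemma fmap_inl (w : Wspace) : fmap e (Sum.inl w) = toLex (Sum.inl w) := rfl

lemma fmap_inr (d : D) : fmap e (Sum.inr d) = toLex (Sum.inr (gmap e d)) := rfl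

lemma flt_inl_inl {w v : Wspace} : fmap e (Sum.inl w) < fmap e (Sum.inl v) ↔ w < v :=
  Sum.Lex.inl_lt_inl_iff

lemma flt_inl_inr (w : Wspace) (d : D) : fmap e (Sum.inl w) < fmap e (Sum.inr d) :=
  Sum.Lex.inl_lt_inr _ _

lemma flt_not_inr_inl (d : D) (w : Wspace) : ¬ fmap e (Sum.inr d) < fmap e (Sum.inl w) :=
  Sum.Lex.not_inr_lt_inl

lemma flt_inr_inr {d d' : D} :
    fmap e (Sum.inr d) < fmap e (Sum.inr d') ↔ gmap e d < gmap e d' :=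
  Sum.Lex.inr_lt_inr_iff

lemma gmap_eq_of_nat {d : D} {n : ℕ} (h : e d = Sum.inl n) :
    gmap e d = toLex (Sum.inl n) := by simp [gmap, h]

lemma gmap_eq_of_prod {d : D} {p : D × ℤ} (h : e d = Sum.inr p) :
    gmap e d = toLex (Sum.inr (toLex p)) := by simp [gmap, h]

end Aux

/-- If `D` is discrete of cardinality `ℵ₁`, then `X = W ⊕ D` is orderable: some linear
order on `X` induces exactly the (sum) topology of `X`. -/
theorem stmt_6 (D : Type*) [TopologicalSpace D] [DiscreteTopology D]
    (hD : Cardinal.mk D = Cardinal.aleph 1) :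
    ∃ lo : LinearOrder (Wspace ⊕ D),
      @Preorder.topology (Wspace ⊕ D) lo.toPreorder =
        (inferInstance : TopologicalSpace (Wspace ⊕ D)) := by
  classical
  haveI hOT : OrderTopology Wspace := (inferInstance : OrderTopology (Set.Iic Ordinal.omega0))
  letI : LinearOrder D := IsWellOrder.linearOrder WellOrderingRel
  obtain ⟨e⟩ : Nonempty (D ≃ (ℕ ⊕ D × ℤ)) := by
    rw [← Cardinal.eq]
    have h1 : Cardinal.mk (D × ℤ) = Cardinal.aleph 1 := by
      rw [Cardinal.mk_prod, hD]
      simp only [Cardinal.mk_int, Cardinal.lift_aleph0, Cardinal.lift_aleph, Ordinal.lift_one]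
      exact Cardinal.mul_aleph0_eq (Cardinal.aleph0_le_aleph 1)
    rw [Cardinal.mk_sum, h1, hD]
    simp only [Cardinal.mk_nat, Cardinal.lift_aleph0, Cardinal.lift_aleph, Ordinal.lift_one]
    exact (Cardinal.add_eq_right (Cardinal.aleph0_le_aleph 1) (Cardinal.aleph0_le_aleph 1)).symm
  refine ⟨LinearOrder.lift' (fmap e) (fmap_inj e), ?_⟩
  set S : Set (Set (Wspace ⊕ D)) :=
    {s | ∃ a, s = {b | fmap e a < fmap e b} ∨ s = {b | fmap e b < fmap e a}} with hS
  have htop : @Preorder.topology (Wspace ⊕ D)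
      (LinearOrder.lift' (fmap e) (fmap_inj e)).toPreorder = TopologicalSpace.generateFrom S :=
    rfl
  rw [htop]
  -- useful elements
  let ωW : Wspace := ⟨Ordinal.omega0, le_rfl⟩
  let wn : ℕ → Wspace := fun n => ⟨(n : Ordinal), (Ordinal.nat_lt_omega0 n).le⟩
  let dN : ℕ → D := fun n => e.symm (Sum.inl n)
  let dZ : D × ℤ → D := fun p => e.symm (Sum.inr p)
  have hedN : ∀ n, e (dN n) = Sum.inl n := fun n => e.apply_symm_apply _
  have hedZ : ∀ p, e (dZ p) = Sum.inr p := fun p => e.apply_symm_apply _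
  refine le_antisymm ?_ (le_generateFrom ?_)
  · -- hard direction: every sum-open set is order-open
    rw [TopologicalSpace.le_def]
    intro u hu
    show TopologicalSpace.GenerateOpen S u
    have key : ∀ x ∈ u, ∃ v, x ∈ v ∧ v ⊆ u ∧ TopologicalSpace.GenerateOpen S v := by
      intro x hx
      rcases x with w | d
      · by_cases hw : w.1 < Ordinal.omega0
        · obtain ⟨n, hn⟩ := Ordinal.lt_omega0.mp hw
          have hw' : w = wn n := Subtype.ext hn
          rcases n with _ | n
          · -- w = 0 : use Iio (wn 1)
            refine ⟨{b | fmap e b < fmap e (Sum.inl (wn 1))}, ?_, ?_, ?_⟩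
            · show fmap e (Sum.inl w) < fmap e (Sum.inl (wn 1))
              rw [flt_inl_inl, hw']
              show ((0:ℕ) : Ordinal) < ((1:ℕ) : Ordinal)
              exact_mod_cast Nat.zero_lt_one
            · rintro (v' | d') hy
              · have h1 : v' < wn 1 := (flt_inl_inl e).mp hy
                have h2a : v'.1 < ((1:ℕ) : Ordinal) := h1
                have h2 : v'.1 < (1 : Ordinal) := by exact_mod_cast h2a
                have h3 : v' = w := by
                  rw [hw']; exact Subtype.ext (by simpa [wn] using Ordinal.lt_one_iff_zero.mp h2)
                rwa [h3]
              · exact absurd hy (flt_not_inr_inl e d' (wn 1))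
            · exact .basic _ ⟨Sum.inl (wn 1), Or.inr rfl⟩
          · -- w = n+1 : use Ioo (wn n) (wn (n+2))
            refine ⟨{b | fmap e (Sum.inl (wn n)) < fmap e b} ∩
                {b | fmap e b < fmap e (Sum.inl (wn (n+2)))}, ⟨?_, ?_⟩, ?_, ?_⟩
            · show fmap e (Sum.inl (wn n)) < fmap e (Sum.inl w)
              rw [flt_inl_inl, hw']
              show ((n:ℕ) : Ordinal) < ((n+1:ℕ) : Ordinal)
              exact_mod_cast Nat.lt_succ_self n
            · show fmap e (Sum.inl w) < fmap e (Sum.inl (wn (n+2)))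
              rw [flt_inl_inl, hw']
              show ((n+1:ℕ) : Ordinal) < ((n+2:ℕ) : Ordinal)
              exact_mod_cast Nat.lt_succ_self (n+1)
            · rintro (v' | d') ⟨hy1, hy2⟩
              · have h1 : wn n < v' := (flt_inl_inl e).mp hy1
                have h2 : v' < wn (n+2) := (flt_inl_inl e).mp hy2
                have h3 : v'.1 < Ordinal.omega0 :=
                  lt_of_lt_of_le (show v'.1 < ((n+2:ℕ):Ordinal) from h2)
                    (Ordinal.nat_lt_omega0 (n+2)).le
                obtain ⟨m, hm⟩ := Ordinal.lt_omega0.mp h3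
                have h4 : n < m := by
                  have : ((n:ℕ):Ordinal) < ((m:ℕ):Ordinal) := by rw [← hm]; exact h1
                  exact_mod_cast this
                have h5 : m < n + 2 := by
                  have : ((m:ℕ):Ordinal) < ((n+2:ℕ):Ordinal) := by rw [← hm]; exact h2
                  exact_mod_cast this
                have h6 : v' = w := by
                  rw [hw']; exact Subtype.ext (by rw [hm]; congr 1; omega)
                rwa [h6]
              · exact absurd hy2 (flt_not_inr_inl e d' (wn (n+2)))
            · exact .inter _ _ (.basic _ ⟨Sum.inl (wn n), Or.inl rfl⟩)
                (.basic _ ⟨Sum.inl (wn (n+2)), Or.inr rfl⟩)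
        · -- w = ω : use Ioo (inl l) (inr d₀)
          have hw0 : w.1 = Ordinal.omega0 := le_antisymm w.2 (not_lt.mp hw)
          have hop : IsOpen (Sum.inl ⁻¹' u : Set Wspace) := (isOpen_sum_iff.mp hu).1
          have hnh : Sum.inl ⁻¹' u ∈ nhds w := hop.mem_nhds hx
          have hex : ∃ l, l < w := by
            refine ⟨wn 0, ?_⟩
            show ((0:ℕ) : Ordinal) < w.1
            rw [hw0]; simpa using Ordinal.omega0_pos
          obtain ⟨l, hl, hsub⟩ := exists_Ioc_subset_of_mem_nhds hnh hex
          refine ⟨{b | fmap e (Sum.inl l) < fmap e b} ∩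
              {b | fmap e b < fmap e (Sum.inr (dN 0))}, ⟨?_, ?_⟩, ?_, ?_⟩
          · exact (flt_inl_inl e).mpr hl
          · exact flt_inl_inr e w (dN 0)
          · rintro (v' | d') ⟨hy1, hy2⟩
            · have h1 : l < v' := (flt_inl_inl e).mp hy1
              have h2 : v' ≤ w := by show v'.1 ≤ w.1; rw [hw0]; exact v'.2
              exact hsub ⟨h1, h2⟩
            · exfalso
              have h1 : gmap e d' < gmap e (dN 0) := (flt_inr_inr e).mp hy2
              rw [gmap_eq_of_nat e (hedN 0)] at h1
              rcases h' : e d' with m | p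
              · rw [gmap_eq_of_nat e h'] at h1
                exact Nat.not_lt_zero m (Sum.Lex.inl_lt_inl_iff.mp h1)
              · rw [gmap_eq_of_prod e h'] at h1
                exact Sum.Lex.not_inr_lt_inl h1
          · exact .inter _ _ (.basic _ ⟨Sum.inl l, Or.inl rfl⟩)
              (.basic _ ⟨Sum.inr (dN 0), Or.inr rfl⟩)
      · -- x = inr d : isolated point
        rcases h' : e d with n | ⟨a, k⟩
        · rcases n with _ | n
          · -- e d = inl 0 : use Ioo (inl ω) (inr (dN 1))
            refine ⟨{b | fmap e (Sum.inl ωW) < fmap e b} ∩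
                {b | fmap e b < fmap e (Sum.inr (dN 1))}, ⟨?_, ?_⟩, ?_, ?_⟩
            · exact flt_inl_inr e ωW d
            · show fmap e (Sum.inr d) < fmap e (Sum.inr (dN 1))
              rw [flt_inr_inr, gmap_eq_of_nat e h', gmap_eq_of_nat e (hedN 1)]
              exact Sum.Lex.inl_lt_inl_iff.mpr Nat.zero_lt_one
            · rintro (v' | d') ⟨hy1, hy2⟩
              · exfalso
                have h1 : ωW < v' := (flt_inl_inl e).mp hy1
                have h2 : v'.1 ≤ Ordinal.omega0 := v'.2
                exact absurd h1 (not_lt.mpr h2)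
              · have h1 : gmap e d' < gmap e (dN 1) := (flt_inr_inr e).mp hy2
                rw [gmap_eq_of_nat e (hedN 1)] at h1
                rcases h'' : e d' with m | p
                · rw [gmap_eq_of_nat e h''] at h1
                  have hm : m = 0 := by
                    have := Sum.Lex.inl_lt_inl_iff.mp h1; omega
                  have : d' = d := e.injective (by rw [h', h'', hm])
                  rwa [this]
                · rw [gmap_eq_of_prod e h''] at h1
                  exact absurd h1 Sum.Lex.not_inr_lt_inl
            · exact .inter _ _ (.basic _ ⟨Sum.inl ωW, Or.inl rfl⟩)
                (.basic _ ⟨Sum.inr (dN 1), Or.inr rfl⟩)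
          · -- e d = inl (n+1) : use Ioo (inr (dN n)) (inr (dN (n+2)))
            refine ⟨{b | fmap e (Sum.inr (dN n)) < fmap e b} ∩
                {b | fmap e b < fmap e (Sum.inr (dN (n+2)))}, ⟨?_, ?_⟩, ?_, ?_⟩
            · show fmap e (Sum.inr (dN n)) < fmap e (Sum.inr d)
              rw [flt_inr_inr, gmap_eq_of_nat e (hedN n), gmap_eq_of_nat e h']
              exact Sum.Lex.inl_lt_inl_iff.mpr (Nat.lt_succ_self n)
            · show fmap e (Sum.inr d) < fmap e (Sum.inr (dN (n+2)))
              rw [flt_inr_inr, gmap_eq_of_nat e h', gmap_eq_of_nat e (hedN (n+2))]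
              exact Sum.Lex.inl_lt_inl_iff.mpr (Nat.lt_succ_self (n+1))
            · rintro (v' | d') ⟨hy1, hy2⟩
              · exact absurd hy1 (flt_not_inr_inl e (dN n) v')
              · have h1 : gmap e (dN n) < gmap e d' := (flt_inr_inr e).mp hy1
                have h2 : gmap e d' < gmap e (dN (n+2)) := (flt_inr_inr e).mp hy2
                rw [gmap_eq_of_nat e (hedN n)] at h1
                rw [gmap_eq_of_nat e (hedN (n+2))] at h2
                rcases h'' : e d' with m | p
                · rw [gmap_eq_of_nat e h''] at h1 h2
                  have hm1 := Sum.Lex.inl_lt_inl_iff.mp h1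
                  have hm2 := Sum.Lex.inl_lt_inl_iff.mp h2
                  have hm : m = n + 1 := by omega
                  have : d' = d := e.injective (by rw [h', h'', hm])
                  rwa [this]
                · rw [gmap_eq_of_prod e h''] at h2
                  exact absurd h2 Sum.Lex.not_inr_lt_inl
            · exact .inter _ _ (.basic _ ⟨Sum.inr (dN n), Or.inl rfl⟩)
                (.basic _ ⟨Sum.inr (dN (n+2)), Or.inr rfl⟩)
        · -- e d = inr (a, k) : use Ioo (inr (dZ (a,k-1))) (inr (dZ (a,k+1)))
          refine ⟨{b | fmap e (Sum.inr (dZ (a, k-1))) < fmap e b} ∩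
              {b | fmap e b < fmap e (Sum.inr (dZ (a, k+1)))}, ⟨?_, ?_⟩, ?_, ?_⟩
          · show fmap e (Sum.inr (dZ (a, k-1))) < fmap e (Sum.inr d)
            rw [flt_inr_inr, gmap_eq_of_prod e (hedZ (a, k-1)), gmap_eq_of_prod e h']
            exact Sum.Lex.inr_lt_inr_iff.mpr
              (Prod.Lex.toLex_lt_toLex.mpr (Or.inr ⟨rfl, by omega⟩))
          · show fmap e (Sum.inr d) < fmap e (Sum.inr (dZ (a, k+1)))
            rw [flt_inr_inr, gmap_eq_of_prod e h', gmap_eq_of_prod e (hedZ (a, k+1))]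
            exact Sum.Lex.inr_lt_inr_iff.mpr
              (Prod.Lex.toLex_lt_toLex.mpr (Or.inr ⟨rfl, by omega⟩))
          · rintro (v' | d') ⟨hy1, hy2⟩
            · exact absurd hy1 (flt_not_inr_inl e (dZ (a, k-1)) v')
            · have h1 : gmap e (dZ (a, k-1)) < gmap e d' := (flt_inr_inr e).mp hy1
              have h2 : gmap e d' < gmap e (dZ (a, k+1)) := (flt_inr_inr e).mp hy2
              rw [gmap_eq_of_prod e (hedZ (a, k-1))] at h1
              rw [gmap_eq_of_prod e (hedZ (a, k+1))] at h2
              rcases h'' : e d' with m | ⟨b, j⟩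
              · rw [gmap_eq_of_nat e h''] at h1
                exact absurd h1 Sum.Lex.not_inr_lt_inl
              · rw [gmap_eq_of_prod e h''] at h1 h2
                have hp1 := Prod.Lex.toLex_lt_toLex.mp (Sum.Lex.inr_lt_inr_iff.mp h1)
                have hp2 := Prod.Lex.toLex_lt_toLex.mp (Sum.Lex.inr_lt_inr_iff.mp h2)
                have hb : b = a ∧ j = k := by
                  rcases hp1 with h | ⟨hba, hj1⟩
                  · rcases hp2 with h2' | ⟨hab, hj2⟩
                    · exact absurd h2' (lt_asymm h)
                    · exact absurd (hab ▸ h) (lt_irrefl _)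
                  · rcases hp2 with h2' | ⟨hab, hj2⟩
                    · exact absurd (hba ▸ h2') (lt_irrefl _)
                    · exact ⟨hab, by omega⟩
                have : d' = d := e.injective (by rw [h', h'', hb.1, hb.2])
                rwa [this]
          · exact .inter _ _ (.basic _ ⟨Sum.inr (dZ (a, k-1)), Or.inl rfl⟩)
              (.basic _ ⟨Sum.inr (dZ (a, k+1)), Or.inr rfl⟩)
    choose! V hV1 hV2 hV3 using key
    have hu2 : u = ⋃ x ∈ u, V x :=
      subset_antisymm (fun x hx => Set.mem_biUnion hx (hV1 x hx))
        (Set.iUnion₂_subset fun x hx => hV2 x hx)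
    rw [hu2]
    exact @isOpen_biUnion _ _ (TopologicalSpace.generateFrom S) _ _ (fun x hx => hV3 x hx)
  · -- easy direction: subbasic order-opens are sum-open
    rintro s ⟨a, rfl | rfl⟩
    · -- Ioi a
      rcases a with w | d
      · refine isOpen_sum_iff.mpr ⟨?_, ?_⟩
        · have : Sum.inl ⁻¹' {b : Wspace ⊕ D | fmap e (Sum.inl w) < fmap e b} = Set.Ioi w := by
            ext v; exact flt_inl_inl e
          rw [this]; exact isOpen_Ioi
        · have : Sum.inr ⁻¹' {b : Wspace ⊕ D | fmap e (Sum.inl w) < fmap e b} = Set.univ := by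
            ext d; simpa using flt_inl_inr e w d
          rw [this]; exact isOpen_univ
      · refine isOpen_sum_iff.mpr ⟨?_, isOpen_discrete _⟩
        have : Sum.inl ⁻¹' {b : Wspace ⊕ D | fmap e (Sum.inr d) < fmap e b} = ∅ := by
          ext v; simpa using flt_not_inr_inl e d v
        rw [this]; exact isOpen_empty
    · -- Iio a
      rcases a with w | d
      · refine isOpen_sum_iff.mpr ⟨?_, ?_⟩
        · have : Sum.inl ⁻¹' {b : Wspace ⊕ D | fmap e b < fmap e (Sum.inl w)} = Set.Iio w := by
            ext v; exact flt_inl_inl e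
          rw [this]; exact isOpen_Iio
        · have : Sum.inr ⁻¹' {b : Wspace ⊕ D | fmap e b < fmap e (Sum.inl w)} = ∅ := by
            ext d'; simpa using flt_not_inr_inl e d' w
          rw [this]; exact isOpen_empty
      · refine isOpen_sum_iff.mpr ⟨?_, isOpen_discrete _⟩
        have : Sum.inl ⁻¹' {b : Wspace ⊕ D | fmap e b < fmap e (Sum.inr d)} = Set.univ := by
          ext v; simpa using flt_inl_inr e v d
        rw [this]; exact isOpen_univ
end

section
/- Let D be a discrete topological space of cardinality ℵ₁, let W = {α : α ≤ ω} be the set of ordinals at most ω with its subspace topology from the ordinals, and let X be the topological disjoint sum W ⊕ D. Then for EVERY topology-compatible linear order ≺ on X, the space X × X with the product topology is NOT homeomorphic to X × X equipped with the lexicographic order induced by ≺ and the order topology of that lexicographic order. -/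
open Set Filter Topology Order

section OrderAux
variable {α : Type*} [LinearOrder α] [TopologicalSpace α] [OrderTopology α]

lemma exists_ordConnected_nhds' {a : α} {U : Set α} (hU : U ∈ 𝓝 a) :
    ∃ I : Set α, I ∈ 𝓝 a ∧ I ⊆ U ∧ I.OrdConnected := by
  by_cases hl : ∃ l, l < a
  · by_cases hu : ∃ u, a < u
    · obtain ⟨l, u, hmem, hsub⟩ := (mem_nhds_iff_exists_Ioo_subset' hl hu).1 hU
      exact ⟨Ioo l u, Ioo_mem_nhds hmem.1 hmem.2, hsub, ordConnected_Ioo⟩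
    · obtain ⟨l, hla, hsub⟩ := exists_Ioc_subset_of_mem_nhds hU hl
      refine ⟨Ioi l, Ioi_mem_nhds hla, fun x hx => ?_, ordConnected_Ioi⟩
      exact hsub ⟨hx, not_lt.1 fun h => hu ⟨x, h⟩⟩
  · by_cases hu : ∃ u, a < u
    · obtain ⟨u, hau, hsub⟩ := exists_Ico_subset_of_mem_nhds hU hu
      refine ⟨Iio u, Iio_mem_nhds hau, fun x hx => ?_, ordConnected_Iio⟩
      exact hsub ⟨not_lt.1 fun h => hl ⟨x, h⟩, hx⟩
    · refine ⟨univ, univ_mem, fun x _ => ?_, ordConnected_univ⟩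
      have hxa : x = a :=
        le_antisymm (not_lt.1 fun h => hu ⟨x, h⟩) (not_lt.1 fun h => hl ⟨x, h⟩)
      exact hxa ▸ mem_of_mem_nhds hU

lemma isolated_exists_Ioo' {a : α} (h : IsOpen ({a} : Set α)) (h1 : ¬IsMin a) (h2 : ¬IsMax a) :
    ∃ l u, l < a ∧ a < u ∧ Set.Ioo l u = {a} := by
  have hl : ∃ l, l < a := not_isMin_iff.1 h1
  have hu : ∃ u, a < u := not_isMax_iff.1 h2
  obtain ⟨l, u, hmem, hsub⟩ := (mem_nhds_iff_exists_Ioo_subset' hl hu).1 (h.mem_nhds rfl)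
  exact ⟨l, u, hmem.1, hmem.2, Subset.antisymm hsub (singleton_subset_iff.2 hmem)⟩

end OrderAux


/-- If `D` is discrete of cardinality `ℵ₁` and `X = W ⊕ D`, then for every
topology-compatible linear order `≺` on `X`, the space `X × X` (product topology) is NOT
homeomorphic to `X ×ₗ X` (lex order from `≺`) with the order topology. -/
theorem stmt_7 (D : Type*) [TopologicalSpace D] [DiscreteTopology D]
    (hD : Cardinal.mk D = Cardinal.aleph 1)
    (lo : LinearOrder (Wspace ⊕ D))
    (hcompat : @Preorder.topology (Wspace ⊕ D) lo.toPreorder =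
      (inferInstance : TopologicalSpace (Wspace ⊕ D))) :
    ¬ Nonempty (@Homeomorph ((Wspace ⊕ D) × (Wspace ⊕ D)) ((Wspace ⊕ D) ×ₗ (Wspace ⊕ D))
      instTopologicalSpaceProd (@lexTop _ _ lo lo)) := by
  classical
  rintro ⟨e⟩
  letI : LinearOrder (Wspace ⊕ D) := lo
  haveI hOT : OrderTopology (Wspace ⊕ D) := ⟨hcompat.symm⟩
  letI tZ : TopologicalSpace ((Wspace ⊕ D) ×ₗ (Wspace ⊕ D)) := lexTop _ _
  haveI hOTZ : OrderTopology ((Wspace ⊕ D) ×ₗ (Wspace ⊕ D)) := ⟨rfl⟩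
  set pX : Wspace ⊕ D := Sum.inl ⟨Ordinal.omega0, le_refl _⟩ with hpXdef
  -- `pX` is not isolated
  have F1 : ∀ V ∈ 𝓝 pX, ∃ z ∈ V, z ≠ pX := by
    intro V hV
    rw [← (IsOpenEmbedding.inl).map_nhds_eq] at hV
    have h1 : Sum.inl ⁻¹' V ∈ 𝓝 (⟨Ordinal.omega0, le_refl _⟩ : Wspace) := hV
    rw [nhds_induced] at h1
    obtain ⟨O, hO, hOsub⟩ := h1
    obtain ⟨l, u, hmem, hsub⟩ := (mem_nhds_iff_exists_Ioo_subset'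
      ⟨0, Ordinal.omega0_pos⟩ ⟨_, lt_succ Ordinal.omega0⟩).1 hO
    have hβ : Order.succ l < Ordinal.omega0 := Ordinal.isSuccLimit_omega0.succ_lt hmem.1
    refine ⟨Sum.inl ⟨Order.succ l, hβ.le⟩, ?_, ?_⟩
    · exact hOsub (hsub ⟨lt_succ l, hβ.trans hmem.2⟩)
    · intro hEq
      exact hβ.ne (congrArg Subtype.val (Sum.inl.inj hEq))
  -- every point other than `pX` is isolated in `X`
  have subW : ∀ (w : Wspace) (T : Set Ordinal), IsOpen T → (∀ x : Wspace, x.1 ∈ T ↔ x = w) →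
      IsOpen ({Sum.inl w} : Set (Wspace ⊕ D)) := by
    intro w T hT hiff
    have hw : IsOpen ({w} : Set Wspace) := by
      have h2 := hT.preimage (continuous_subtype_val : Continuous (Subtype.val : Wspace → Ordinal))
      convert h2 using 1
      ext x
      simp [hiff x, eq_comm]
    simpa [Set.image_singleton] using isOpenMap_inl _ hw
  have F2 : ∀ y : Wspace ⊕ D, y ≠ pX → IsOpen ({y} : Set (Wspace ⊕ D)) := by
    rintro (⟨α, hα⟩ | d) hy
    · have hαω : α < Ordinal.omega0 := by
        rcases lt_or_eq_of_le hα with h | h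
        · exact h
        · exact absurd (by simp [hpXdef, h]) hy
      obtain ⟨n, rfl⟩ := Ordinal.lt_omega0.1 hαω
      cases n with
      | zero =>
        refine subW _ (Set.Iio 1) isOpen_Iio ?_
        intro x
        constructor
        · intro hx
          exact Subtype.ext (by simpa [Ordinal.lt_one_iff_zero] using hx)
        · rintro rfl
          simp [Ordinal.lt_one_iff_zero]
      | succ m =>
        refine subW _ (Set.Ioo (m : Ordinal) (Order.succ ((m+1 : ℕ) : Ordinal)))
          isOpen_Ioo ?_
        intro x
        constructor
        · rintro ⟨h1, h2⟩
          refine Subtype.ext ?_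
          have hle : ((m+1 : ℕ) : Ordinal) ≤ x.1 := by
            have : Order.succ (m : Ordinal) ≤ x.1 := Order.succ_le_of_lt h1
            rw [Nat.cast_succ, Ordinal.add_one_eq_succ]; exact this
          have hge : x.1 ≤ ((m+1 : ℕ) : Ordinal) := Order.lt_succ_iff.1 h2
          exact le_antisymm hge hle
        · rintro rfl
          refine ⟨?_, lt_succ _⟩
          have h0 : (m : Ordinal.{0}) < Order.succ (m : Ordinal.{0}) :=
            lt_succ ((m : ℕ) : Ordinal.{0})
          show (m : Ordinal) < ((m+1 : ℕ) : Ordinal)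
          rw [Nat.cast_succ, Ordinal.add_one_eq_succ]; exact h0
    · simpa [Set.image_singleton] using isOpenMap_inr _ (isOpen_discrete ({d} : Set D))
  -- `Wspace` is countable
  haveI cW : Countable Wspace := by
    have hinj : Function.Injective (fun w : Wspace =>
        if h : w.1 < Ordinal.omega0 then some (Classical.choose (Ordinal.lt_omega0.1 h))
        else (none : Option ℕ)) := by
      intro w v hwv
      dsimp only at hwv
      by_cases h1 : w.1 < Ordinal.omega0 <;> by_cases h2 : v.1 < Ordinal.omega0
      · rw [dif_pos h1, dif_pos h2] at hwv
        have e1 := Classical.choose_spec (Ordinal.lt_omega0.1 h1)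
        have e2 := Classical.choose_spec (Ordinal.lt_omega0.1 h2)
        exact Subtype.ext (by rw [e1, e2, Option.some_inj.1 hwv])
      · rw [dif_pos h1, dif_neg h2] at hwv
        exact absurd hwv (by simp)
      · rw [dif_neg h1, dif_pos h2] at hwv
        exact absurd hwv (by simp)
      · have hw : w.1 = Ordinal.omega0 := le_antisymm w.2 (not_lt.1 h1)
        have hv : v.1 = Ordinal.omega0 := le_antisymm v.2 (not_lt.1 h2)
        exact Subtype.ext (hw.trans hv.symm)
    exact hinj.countable
  -- `X` is uncountable
  have hXunc : ¬ Countable (Wspace ⊕ D) := by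
    intro h
    haveI : Countable D := (Sum.inr_injective : Function.Injective (Sum.inr : D → Wspace ⊕ D)).countable
    have hle : Cardinal.mk D ≤ Cardinal.aleph0 := Cardinal.mk_le_aleph0
    rw [hD] at hle
    exact absurd hle (not_le.2 Cardinal.aleph0_lt_aleph_one)
  -- product side: the point (pX, pX)
  have hq1 : ∀ V ∈ 𝓝 (pX, pX), ∃ y ∈ V, y ≠ (pX, pX) ∧
      ¬ IsOpen ({y} : Set ((Wspace ⊕ D) × (Wspace ⊕ D))) := by
    intro V hV
    rw [mem_nhds_prod_iff] at hV
    obtain ⟨u, hu, v, hv, huv⟩ := hV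
    obtain ⟨z, hz, hzne⟩ := F1 u hu
    refine ⟨(z, pX), huv ⟨hz, mem_of_mem_nhds hv⟩, ?_, ?_⟩
    · exact fun h => hzne (congrArg Prod.fst h)
    · intro hop
      have h2 : ({(z, pX)} : Set _) ∈ 𝓝 (z, pX) := hop.mem_nhds rfl
      rw [mem_nhds_prod_iff] at h2
      obtain ⟨u', hu', v', hv', huv'⟩ := h2
      obtain ⟨z', hz', hzne'⟩ := F1 v' hv'
      have h3 : (z, z') = (z, pX) := huv' ⟨mem_of_mem_nhds hu', hz'⟩
      exact hzne' (congrArg Prod.snd h3)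
  have hUmem : ((range (Sum.inl : Wspace → Wspace ⊕ D)) ×ˢ (range Sum.inl)) ∈ 𝓝 (pX, pX) :=
    (isOpen_range_inl.prod isOpen_range_inl).mem_nhds ⟨⟨_, rfl⟩, ⟨_, rfl⟩⟩
  have hUcount : ((range (Sum.inl : Wspace → Wspace ⊕ D)) ×ˢ (range Sum.inl)).Countable :=
    (countable_range (Sum.inl : Wspace → Wspace ⊕ D)).prod (countable_range (Sum.inl : Wspace → Wspace ⊕ D))
  -- transfer through the homeomorphism
  set q' := e (pX, pX) with hq'def
  set U' : Set ((Wspace ⊕ D) ×ₗ (Wspace ⊕ D)) :=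
    e '' ((range (Sum.inl : Wspace → Wspace ⊕ D)) ×ˢ (range Sum.inl)) with hU'def
  have hU'mem : U' ∈ 𝓝 q' := by
    rw [hU'def, ← e.map_nhds_eq]
    exact image_mem_map hUmem
  have hU'c : U'.Countable := hUcount.image _
  have h1' : ∀ V' ∈ 𝓝 q', ∃ y' ∈ V', y' ≠ q' ∧
      ¬ IsOpen ({y'} : Set ((Wspace ⊕ D) ×ₗ (Wspace ⊕ D))) := by
    intro V' hV'
    have hV : e ⁻¹' V' ∈ 𝓝 (pX, pX) := (e.continuous.tendsto _) hV'
    obtain ⟨y, hy, hyne, hyno⟩ := hq1 _ hV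
    refine ⟨e y, hy, fun h => hyne (e.injective h), fun hop => hyno ?_⟩
    have hpre : e ⁻¹' ({e y} : Set _) = {y} := by
      ext z; simp [e.injective.eq_iff]
    exact hpre ▸ hop.preimage e.continuous
  -- get an order-convex countable neighborhood of q'
  obtain ⟨I, hImem, hIsub, hIconn⟩ := exists_ordConnected_nhds' hU'mem
  -- a full slice inside I forces X countable
  have slice : ∀ x : Wspace ⊕ D, (∃ x₁ y₁, toLex (x₁, y₁) ∈ I ∧ x₁ < x) →
      (∃ x₃ y₃, toLex (x₃, y₃) ∈ I ∧ x < x₃) → False := by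
    rintro x ⟨x₁, y₁, h₁, hx₁⟩ ⟨x₃, y₃, h₃, hx₃⟩
    have hall : ∀ y : Wspace ⊕ D, toLex (x, y) ∈ I := by
      intro y
      refine hIconn.out h₁ h₃ ⟨?_, ?_⟩
      · exact Prod.Lex.le_iff.2 (Or.inl hx₁)
      · exact Prod.Lex.le_iff.2 (Or.inl hx₃)
    apply hXunc
    have hinj : Function.Injective (fun y : Wspace ⊕ D => toLex (x, y)) := by
      intro a b hab
      exact congrArg (fun z => (ofLex z).2) hab
    have hrc : (range (fun y : Wspace ⊕ D => toLex (x, y))).Countable := by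
      refine hU'c.mono ?_
      rintro z ⟨y, rfl⟩
      exact hIsub (hall y)
    haveI := hrc.to_subtype
    exact Countable.of_equiv _ (Equiv.ofInjective _ hinj).symm
  -- isolated points of the lex square
  have lexIso : ∀ x y : Wspace ⊕ D, y ≠ pX → ¬ IsMin y → ¬ IsMax y →
      IsOpen ({toLex (x, y)} : Set ((Wspace ⊕ D) ×ₗ (Wspace ⊕ D))) := by
    intro x y hyp hmin hmax
    obtain ⟨l, u, hl, hu, hIoo⟩ := isolated_exists_Ioo' (F2 y hyp) hmin hmax
    have hset : ({toLex (x, y)} : Set ((Wspace ⊕ D) ×ₗ (Wspace ⊕ D)))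
        = Ioo (toLex (x, l)) (toLex (x, u)) := by
      ext z
      constructor
      · intro hz
        rw [mem_singleton_iff] at hz
        rw [hz]
        exact ⟨Prod.Lex.lt_iff.2 (Or.inr ⟨rfl, hl⟩),
          Prod.Lex.lt_iff.2 (Or.inr ⟨rfl, hu⟩)⟩
      · rintro ⟨hz1, hz2⟩
        have h1 := (Prod.Lex.lt_iff (x := toLex (x, l)) (y := z)).1 hz1
        have h2 := (Prod.Lex.lt_iff (x := z) (y := toLex (x, u))).1 hz2
        have hax : (ofLex z).1 = x := by
          rcases h1 with h | ⟨h, _⟩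
          · rcases h2 with h' | ⟨h', _⟩
            · exact absurd (h.trans h') (lt_irrefl x)
            · exact h'
          · exact h.symm
        have hb1 : l < (ofLex z).2 := by
          rcases h1 with h | ⟨_, h⟩
          · exact absurd (hax ▸ h) (lt_irrefl x)
          · exact h
        have hb2 : (ofLex z).2 < u := by
          rcases h2 with h | ⟨_, h⟩
          · exact absurd (hax ▸ h) (lt_irrefl x)
          · exact h
        have hby : (ofLex z).2 ∈ Set.Ioo l u := ⟨hb1, hb2⟩
        rw [hIoo, mem_singleton_iff] at hby
        have : ofLex z = (x, y) := Prod.ext hax hby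
        show z = toLex (x, y)
        calc z = toLex (ofLex z) := rfl
          _ = toLex (x, y) := congrArg toLex this
    rw [hset]
    exact isOpen_Ioo
  -- the set of non-isolated points inside I is finite
  set SY : Set (Wspace ⊕ D) := {pX} ∪ {y | IsMin y} ∪ {y | IsMax y} with hSYdef
  have hSYfin : SY.Finite := by
    refine (Set.Finite.union (Set.Finite.union (finite_singleton _) ?_) ?_)
    · refine Set.Subsingleton.finite ?_
      intro a ha b hb
      rcases le_total a b with h | h
      · exact le_antisymm h (hb h)
      · exact le_antisymm (ha h) h
    · refine Set.Subsingleton.finite ?_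
      intro a ha b hb
      rcases le_total a b with h | h
      · exact le_antisymm h (ha h)
      · exact le_antisymm (hb h) h
  set B : Set ((Wspace ⊕ D) ×ₗ (Wspace ⊕ D)) :=
    {z | z ∈ I ∧ ¬ IsOpen ({z} : Set ((Wspace ⊕ D) ×ₗ (Wspace ⊕ D)))} with hBdef
  set F : Set (Wspace ⊕ D) := {x | ∃ y, toLex (x, y) ∈ B} with hFdef
  have hBsub : B ⊆ (fun p : (Wspace ⊕ D) × (Wspace ⊕ D) => toLex p) '' (F ×ˢ SY) := by
    intro z hz
    refine ⟨ofLex z, ⟨⟨(ofLex z).2, hz⟩, ?_⟩, rfl⟩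
    by_contra hbSY
    simp only [hSYdef, mem_union, mem_singleton_iff, mem_setOf_eq, not_or] at hbSY
    exact hz.2 (lexIso (ofLex z).1 (ofLex z).2 hbSY.1.1 hbSY.1.2 hbSY.2)
  have no3 : ∀ x₁ x₂ x₃ : Wspace ⊕ D, x₁ ∈ F → x₃ ∈ F → x₁ < x₂ → x₂ < x₃ → False := by
    rintro x₁ x₂ x₃ ⟨y₁, hy₁⟩ ⟨y₃, hy₃⟩ h12 h23
    exact slice x₂ ⟨x₁, y₁, hy₁.1, h12⟩ ⟨x₃, y₃, hy₃.1, h23⟩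
  have hF : F.Finite := by
    rcases F.eq_empty_or_nonempty with hFe | ⟨a, ha⟩
    · rw [hFe]; exact finite_empty
    rcases (F \ {a}).eq_empty_or_nonempty with hFa | ⟨b, hb⟩
    · exact (finite_singleton a).subset (diff_eq_empty.1 hFa)
    refine ((finite_singleton a).insert b).subset ?_
    intro c hc
    by_contra hcn
    simp only [mem_insert_iff, mem_singleton_iff, not_or] at hcn
    obtain ⟨hcb, hca⟩ := hcn
    have hbF : b ∈ F := hb.1
    have hba : b ≠ a := by simpa using hb.2
    rcases lt_trichotomy a b with h1 | h1 | h1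
    · rcases lt_trichotomy b c with h2 | h2 | h2
      · exact no3 a b c ha hc h1 h2
      · exact hcb h2.symm
      · rcases lt_trichotomy a c with h3 | h3 | h3
        · exact no3 a c b ha hbF h3 h2
        · exact hca h3.symm
        · exact no3 c a b hc hbF h3 h1
    · exact hba h1.symm
    · rcases lt_trichotomy a c with h3 | h3 | h3
      · exact no3 b a c hbF hc h1 h3
      · exact hca h3.symm
      · rcases lt_trichotomy b c with h2 | h2 | h2
        · exact no3 b c a hbF ha h2 h3
        · exact hcb h2.symm
        · exact no3 c b a hc ha h2 h1
  have hBfin : B.Finite := ((hF.prod hSYfin).image _).subset hBsub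
  have hB'fin : (B \ {q'}).Finite := hBfin.diff
  have hB'closed : IsClosed (B \ {q'}) := hB'fin.isClosed
  have hVmem : (I ∩ (B \ {q'})ᶜ) ∈ 𝓝 q' :=
    inter_mem hImem (hB'closed.isOpen_compl.mem_nhds (fun h => h.2 rfl))
  obtain ⟨y', hy'mem, hy'ne, hy'no⟩ := h1' _ hVmem
  exact hy'mem.2 ⟨⟨hy'mem.1, hy'no⟩, hy'ne⟩
end

section
/- Let X be a set of ordinals, carrying the subspace topology inherited from the order topology on the ordinals, and suppose X is homogeneous on its derived set X'. Then for every x ∈ X' there exists α ∈ X with α < x such that x is the unique non-isolated point of the subspace [α, x] ∩ X = {y ∈ X : α ≤ y ≤ x}. -/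
open Set Order

/-- A point of a topological space is non-isolated if its singleton is not open. -/
def NonIsolated {Y : Type*} [TopologicalSpace Y] (y : Y) : Prop := ¬ IsOpen ({y} : Set Y)

/-- `Y` is homogeneous on a subset `A` if any two points of `A` can be swapped by a
self-homeomorphism of `Y`. -/
def HomogeneousOn (Y : Type*) [TopologicalSpace Y] (A : Set Y) : Prop :=
  ∀ x ∈ A, ∀ y ∈ A, ∃ f : Y ≃ₜ Y, f x = y ∧ f y = x

lemma aux_isOpen_subtype {X : Set Ordinal} (s : Set ↥X) :
    IsOpen s ↔ ∃ U : Set Ordinal, IsOpen U ∧ Subtype.val ⁻¹' U = s := by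
  constructor
  · intro h; exact isOpen_induced_iff.mp h
  · rintro ⟨U, hU, rfl⟩; exact isOpen_induced_iff.mpr ⟨U, hU, rfl⟩

lemma aux_nonIsolated_iff {X : Set Ordinal} (y : ↥X) :
    NonIsolated y ↔ ((y:Ordinal) ≠ 0 ∧ ∀ β < (y:Ordinal), ∃ z ∈ X, β < z ∧ z < (y:Ordinal)) := by
  constructor
  · intro h
    by_contra hc
    push_neg at hc
    apply h
    rcases eq_or_ne (y:Ordinal) 0 with h0 | h0
    · rw [aux_isOpen_subtype]
      refine ⟨Iio 1, isOpen_Iio, ?_⟩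
      ext z
      simp only [mem_preimage, mem_Iio, mem_singleton_iff, Ordinal.lt_one_iff_zero]
      constructor
      · intro hz; exact Subtype.ext (hz.trans h0.symm)
      · rintro rfl; exact h0
    · obtain ⟨β, hβ, hno⟩ := hc h0
      rw [aux_isOpen_subtype]
      refine ⟨Ioo β (Order.succ (y:Ordinal)), isOpen_Ioo, ?_⟩
      ext z
      simp only [mem_preimage, mem_Ioo, mem_singleton_iff]
      constructor
      · rintro ⟨h1, h2⟩
        exact Subtype.ext (le_antisymm (Order.lt_succ_iff.mp h2) (hno z z.2 h1))
      · rintro rfl; exact ⟨hβ, Order.lt_succ _⟩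
  · rintro ⟨h0, hd⟩ hop
    have hlim : Order.IsSuccLimit (y:Ordinal) := by
      refine Ordinal.isSuccLimit_iff.mpr ⟨h0, Order.isSuccPrelimit_iff_succ_lt.mpr fun a ha => ?_⟩
      obtain ⟨z, _, h1, h2⟩ := hd a ha
      exact lt_of_le_of_lt (Order.succ_le_of_lt h1) h2
    rw [aux_isOpen_subtype] at hop
    obtain ⟨U, hU, hUeq⟩ := hop
    have hyU : (y:Ordinal) ∈ U := by
      have : y ∈ Subtype.val ⁻¹' U := by rw [hUeq]; rfl
      exact this
    obtain ⟨a, ha, hIoo⟩ := (Ordinal.isOpen_iff).mp hU _ hyU hlim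
    obtain ⟨z, hzX, h1, h2⟩ := hd a ha
    have : (⟨z, hzX⟩ : ↥X) ∈ Subtype.val ⁻¹' U := hIoo ⟨h1, h2⟩
    rw [hUeq] at this
    exact absurd (congrArg Subtype.val this) (ne_of_lt h2)

/-- If a set of ordinals `X` (subspace topology) is homogeneous on its derived set, then
for every non-isolated point `x` there is `α ∈ X`, `α < x`, such that `x` is the unique
non-isolated point of the subspace `[α, x] ∩ X`. -/
theorem stmt_8 (X : Set Ordinal)
    (hhom : HomogeneousOn ↥X {x : ↥X | NonIsolated x})
    (x : ↥X) (hx : NonIsolated x) :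
    ∃ α : ↥X, (α : Ordinal) < (x : Ordinal) ∧
      ∀ y : {z : ↥X // (α : Ordinal) ≤ (z : Ordinal) ∧ (z : Ordinal) ≤ (x : Ordinal)},
        (NonIsolated y ↔ (y : ↥X) = x) := by
  obtain ⟨hx0, hxd⟩ := (aux_nonIsolated_iff x).mp hx
  have hxlim : Order.IsSuccLimit (x:Ordinal) := by
    refine Ordinal.isSuccLimit_iff.mpr ⟨hx0, Order.isSuccPrelimit_iff_succ_lt.mpr fun a ha => ?_⟩
    obtain ⟨z, _, h1, h2⟩ := hxd a ha
    exact lt_of_le_of_lt (Order.succ_le_of_lt h1) h2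
  -- the set of non-isolated points
  set P : Set ↥X := {z : ↥X | NonIsolated z} with hP
  -- least element of P
  have hPne : ((fun z : ↥X => (z:Ordinal)) '' P).Nonempty := ⟨x, x, hx, rfl⟩
  obtain ⟨mv, hmv, hmin⟩ := Ordinal.lt_wf.has_min _ hPne
  obtain ⟨m, hmP, hmval⟩ := hmv
  have hminP : ∀ z ∈ P, (m:Ordinal) ≤ (z:Ordinal) := by
    intro z hz
    have h := not_lt.mp (hmin _ ⟨z, hz, rfl⟩)
    simpa [← hmval] using h
  -- V: open set in X isolating m within P
  have hV : IsOpen (Subtype.val ⁻¹' (Iio (Order.succ (m:Ordinal))) : Set ↥X) :=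
    (aux_isOpen_subtype _).mpr ⟨_, isOpen_Iio, rfl⟩
  set V : Set ↥X := Subtype.val ⁻¹' (Iio (Order.succ (m:Ordinal))) with hVdef
  have hPV : P ∩ V = {m} := by
    ext z
    simp only [mem_inter_iff, mem_singleton_iff, hVdef, mem_preimage, mem_Iio]
    constructor
    · rintro ⟨hz, hz2⟩
      have h1 : (z:Ordinal) ≤ (m:Ordinal) := Order.lt_succ_iff.mp hz2
      exact Subtype.ext (le_antisymm h1 (hminP z hz))
    · rintro rfl; exact ⟨hmP, Order.lt_succ _⟩
  -- homogeneity: swap m and x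
  obtain ⟨f, hfm, hfx⟩ := hhom m hmP x hx
  -- image of V is open and isolates x within P
  have hfP : ∀ z : ↥X, NonIsolated (f z) ↔ NonIsolated z := by
    intro z
    unfold NonIsolated
    rw [← Set.image_singleton, f.isOpen_image]
  have hW : IsOpen (f '' V) := f.isOpenMap V hV
  have hPW : P ∩ (f '' V) = {x} := by
    ext z
    constructor
    · rintro ⟨hz, w, hwV, rfl⟩
      have hwP : w ∈ P := (hfP w).mp hz
      have : w ∈ P ∩ V := ⟨hwP, hwV⟩
      rw [hPV] at this
      rw [this]
      exact hfm
    · rintro rfl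
      refine ⟨hx, m, ?_, hfm⟩
      have : m ∈ P ∩ V := by rw [hPV]; rfl
      exact this.2
  -- extract a tail interval of isolated points below x
  obtain ⟨U, hU, hUeq⟩ := (aux_isOpen_subtype _).mp hW
  have hxW : x ∈ f '' V := ⟨m, (show m ∈ P ∩ V by rw [hPV]; rfl).2, hfm⟩
  have hxU : (x:Ordinal) ∈ U := by rw [← hUeq] at hxW; exact hxW
  obtain ⟨β, hβ, hIoo⟩ := Ordinal.isOpen_iff.mp hU _ hxU hxlim
  -- all X-points strictly between β and x are isolated
  have hiso : ∀ z : ↥X, β < (z:Ordinal) → (z:Ordinal) < (x:Ordinal) → ¬ NonIsolated z := by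
    intro z h1 h2 hni
    have hzW : z ∈ f '' V := by rw [← hUeq]; exact hIoo ⟨h1, h2⟩
    have : z ∈ P ∩ f '' V := ⟨hni, hzW⟩
    rw [hPW] at this
    exact absurd (congrArg Subtype.val this) (ne_of_lt h2)
  -- choose α
  obtain ⟨a, haX, ha1, ha2⟩ := hxd β hβ
  refine ⟨⟨a, haX⟩, ha2, ?_⟩
  intro y
  constructor
  · -- non-isolated in S ⇒ y = x
    intro hni
    by_contra hne
    have hvne : ((y:↥X):Ordinal) ≠ (x:Ordinal) := fun h => hne (Subtype.ext h)
    have hlt : ((y:↥X):Ordinal) < (x:Ordinal) := lt_of_le_of_ne y.2.2 hvne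
    have hgt : β < ((y:↥X):Ordinal) := lt_of_lt_of_le ha1 y.2.1
    have := hiso (y:↥X) hgt hlt
    -- y is isolated in X, so isolated in S
    rw [aux_nonIsolated_iff] at this
    push_neg at this
    apply hni
    rcases eq_or_ne ((y:↥X):Ordinal) 0 with h0 | h0
    · refine isOpen_induced_iff.mpr ⟨Subtype.val ⁻¹' (Iio 1), (aux_isOpen_subtype _).mpr ⟨_, isOpen_Iio, rfl⟩, ?_⟩
      ext z
      simp only [mem_preimage, mem_Iio, mem_singleton_iff, Ordinal.lt_one_iff_zero]
      constructor
      · intro hz; exact Subtype.ext (Subtype.ext (hz.trans h0.symm))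
      · rintro rfl; exact h0
    · obtain ⟨γ, hγ, hno⟩ := this h0
      refine isOpen_induced_iff.mpr ⟨Subtype.val ⁻¹' (Ioo γ (Order.succ ((y:↥X):Ordinal))),
        (aux_isOpen_subtype _).mpr ⟨_, isOpen_Ioo, rfl⟩, ?_⟩
      ext z
      simp only [mem_preimage, mem_Ioo, mem_singleton_iff]
      constructor
      · rintro ⟨h1, h2⟩
        exact Subtype.ext (Subtype.ext
          (le_antisymm (Order.lt_succ_iff.mp h2) (hno _ (z:↥X).2 h1)))
      · rintro rfl; exact ⟨hγ, Order.lt_succ _⟩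
  · -- y = x ⇒ non-isolated in S
    rintro hyx hop
    obtain ⟨t, ht, hteq⟩ := isOpen_induced_iff.mp hop
    obtain ⟨U2, hU2, hU2eq⟩ := (aux_isOpen_subtype t).mp ht
    have hxU2 : (x:Ordinal) ∈ U2 := by
      have hy : y ∈ Subtype.val ⁻¹' t := by rw [hteq]; rfl
      have : (y:↥X) ∈ Subtype.val ⁻¹' U2 := by rw [hU2eq]; exact hy
      simpa [hyx] using this
    obtain ⟨γ, hγ, hIoo2⟩ := Ordinal.isOpen_iff.mp hU2 _ hxU2 hxlim
    set γ' := max γ a with hγ'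
    have hγ'x : γ' < (x:Ordinal) := max_lt hγ ha2
    obtain ⟨z, hzX, h1, h2⟩ := hxd γ' hγ'x
    have haz : a ≤ z := le_of_lt (lt_of_le_of_lt (le_max_right γ a) h1)
    have hzt : (⟨z, hzX⟩ : ↥X) ∈ t := by
      rw [← hU2eq]
      exact hIoo2 ⟨lt_of_le_of_lt (le_max_left γ a) h1, h2⟩
    have hzS : (⟨⟨z, hzX⟩, haz, le_of_lt h2⟩ :
        {w : ↥X // (a:Ordinal) ≤ (w:Ordinal) ∧ (w:Ordinal) ≤ (x:Ordinal)}) ∈ Subtype.val ⁻¹' t := hzt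
    rw [hteq, mem_singleton_iff] at hzS
    have : z = (x:Ordinal) := by
      have h2 := Subtype.ext_iff.mp hzS
      rw [hyx] at h2
      exact Subtype.ext_iff.mp h2
    exact absurd this (ne_of_lt h2)
end

section
/- Let X be a set of ordinals, carrying the subspace topology inherited from the order topology on the ordinals, and suppose X is homogeneous on its derived set X'. Then there exists a family (I_x)_{x ∈ X'} of pairwise disjoint clopen subsets of X with x ∈ I_x for every x ∈ X', such that: (1) the set D = X \ ⋃_{x ∈ X'} I_x is clopen in X and discrete; (2) for any x, y ∈ X', the subspaces I_x and I_y are homeomorphic; and (3) for each x ∈ X', the point x is the only non-isolated point of the subspace I_x. -/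
namespace Stmt9
open Set




theorem isClopen_Ioc_ord (a b : Ordinal) : IsClopen (Set.Ioc a b) := by
  constructor
  · have h : Set.Ioc a b = Set.Icc (a + 1) b := by
      ext z
      simp only [Set.mem_Ioc, Set.mem_Icc, Ordinal.add_one_eq_succ, Order.succ_le_iff]
    rw [h]; exact isClosed_Icc
  · have h : Set.Ioc a b = Set.Ioo a (b + 1) := by
      ext z
      simp only [Set.mem_Ioc, Set.mem_Ioo, Ordinal.add_one_eq_succ, Order.lt_succ_iff]
    rw [h]; exact isOpen_Ioo

theorem isClopen_pre {X : Set Ordinal} (a b : Ordinal) :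
    IsClopen (Subtype.val ⁻¹' Set.Ioc a b : Set ↥X) :=
  (isClopen_Ioc_ord a b).preimage continuous_subtype_val

theorem limit_of_nonIsolated {X : Set Ordinal} {x : ↥X} (h : NonIsolated x) :
    Order.IsSuccLimit x.1 := by
  by_contra hl
  apply h
  have he : ({x} : Set ↥X) = Subtype.val ⁻¹' {x.1} := by
    ext z; simp [Subtype.ext_iff]
  rw [he]
  exact (Ordinal.isOpen_singleton_iff.2 hl).preimage continuous_subtype_val

theorem shrink {X : Set Ordinal} {x : ↥X} (hlim : Order.IsSuccLimit x.1) {U : Set ↥X}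
    (hU : IsOpen U) (hxU : x ∈ U) :
    ∃ a < x.1, (Subtype.val ⁻¹' Set.Ioc a x.1 : Set ↥X) ⊆ U := by
  obtain ⟨V, hV, rfl⟩ := isOpen_induced_iff.mp hU
  obtain ⟨a, ha, hsub⟩ := (Ordinal.isOpen_iff.mp hV) x.1 hxU hlim
  refine ⟨a, ha, fun z hz => ?_⟩
  rcases eq_or_lt_of_le hz.2 with h | h
  · have hzx : z = x := Subtype.ext h
    rw [hzx]; exact hxU
  · exact hsub ⟨hz.1, h⟩

theorem nonIsolated_homeo {Y : Type*} [TopologicalSpace Y] (f : Y ≃ₜ Y) (z : Y) :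
    NonIsolated (f z) ↔ NonIsolated z := by
  unfold NonIsolated
  rw [← Set.image_singleton, f.isOpen_image]

theorem isOpen_singleton_subtype {Y : Type*} [TopologicalSpace Y] {A : Set Y} (hA : IsOpen A)
    (y : ↥A) : IsOpen ({y} : Set ↥A) ↔ IsOpen ({(y : Y)} : Set Y) := by
  constructor
  · intro h
    obtain ⟨U, hU, hUeq⟩ := isOpen_induced_iff.mp h
    have he : ({(y : Y)} : Set Y) = U ∩ A := by
      ext z
      constructor
      · rintro rfl
        have : y ∈ Subtype.val ⁻¹' U := by rw [hUeq]; rfl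
        exact ⟨this, y.2⟩
      · rintro ⟨hzU, hzA⟩
        have : (⟨z, hzA⟩ : ↥A) ∈ Subtype.val ⁻¹' U := hzU
        rw [hUeq] at this
        exact congrArg Subtype.val this
    rw [he]; exact hU.inter hA
  · intro h
    have he : ({y} : Set ↥A) = Subtype.val ⁻¹' {(y : Y)} := by
      ext z; simp [Subtype.ext_iff]
    rw [he]; exact h.preimage continuous_subtype_val

theorem nonIsolated_subtype {Y : Type*} [TopologicalSpace Y] {A : Set Y} (hA : IsOpen A)
    (y : ↥A) : NonIsolated y ↔ NonIsolated (y : Y) :=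
  not_congr (isOpen_singleton_subtype hA y)


theorem cont_aux {Y : Type*} [TopologicalSpace Y] {C E : Set Y} (g : ↥C → ↥E) (p : ↥C)
    (hC : ∀ z : ↥C, z ≠ p → IsOpen ({(z : Y)} : Set Y))
    (h1 : ∀ U : Set Y, IsOpen U → ((g p : Y)) ∈ U →
      ∃ W : Set Y, IsOpen W ∧ ((p : Y)) ∈ W ∧ ∀ z : ↥C, (z : Y) ∈ W → ((g z : Y)) ∈ U) :
    Continuous g := by
  rw [continuous_iff_continuousAt]
  intro z
  by_cases hz : z = p
  · subst hz
    rw [ContinuousAt, Filter.tendsto_def]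
    intro O hO
    obtain ⟨O', hO'sub, hO', hgO'⟩ := mem_nhds_iff.mp hO
    obtain ⟨V, hV, rfl⟩ := isOpen_induced_iff.mp hO'
    obtain ⟨W, hW, hpW, hWprop⟩ := h1 V hV hgO'
    apply Filter.mem_of_superset
      (IsOpen.mem_nhds (hW.preimage continuous_subtype_val) hpW)
    intro w hw
    exact hO'sub (hWprop w hw)
  · have hopen : IsOpen ({z} : Set ↥C) := by
      have he : ({z} : Set ↥C) = Subtype.val ⁻¹' {(z : Y)} := by
        ext w; simp [Subtype.ext_iff]
      rw [he]; exact (hC z hz).preimage continuous_subtype_val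
    rw [ContinuousAt, (isOpen_singleton_iff_nhds_eq_pure z).mp hopen]
    exact tendsto_pure_nhds g z

theorem homeo_glue {Y : Type*} [TopologicalSpace Y] {C E : Set Y} (f : ↥C ≃ ↥E) (p : ↥C)
    (hC : ∀ z : ↥C, z ≠ p → IsOpen ({(z : Y)} : Set Y))
    (hE : ∀ w : ↥E, w ≠ f p → IsOpen ({(w : Y)} : Set Y))
    (h1 : ∀ U : Set Y, IsOpen U → ((f p : Y)) ∈ U →
      ∃ W : Set Y, IsOpen W ∧ ((p : Y)) ∈ W ∧ ∀ z : ↥C, (z : Y) ∈ W → ((f z : Y)) ∈ U)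
    (h2 : ∀ U : Set Y, IsOpen U → ((p : Y)) ∈ U →
      ∃ W : Set Y, IsOpen W ∧ ((f p : Y)) ∈ W ∧ ∀ w : ↥E, (w : Y) ∈ W → ((f.symm w : Y)) ∈ U) :
    Nonempty (↥C ≃ₜ ↥E) := by
  refine ⟨{ toEquiv := f, continuous_toFun := cont_aux f p hC h1,
            continuous_invFun := cont_aux f.symm (f p) hE ?_ }⟩
  intro U hU hpU
  rw [f.symm_apply_apply] at hpU
  obtain ⟨W, hW, hfpW, hprop⟩ := h2 U hU hpU
  exact ⟨W, hW, hfpW, hprop⟩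

theorem inf_tail (X : Set Ordinal) {o : Ordinal}
    (ho : ∀ b < o, (X ∩ Set.Ioo b o).Nonempty) {c : Ordinal} (hc : c < o) :
    (X ∩ Set.Ioo c o).Infinite := by
  intro h
  obtain ⟨m, hm, hmax⟩ := Set.exists_max_image _ id h (ho c hc)
  obtain ⟨z, hzX, hz⟩ := ho m hm.2.2
  exact absurd (hmax z ⟨hzX, lt_trans hm.2.1 hz.1, hz.2⟩) (not_le.mpr hz.1)

theorem countable_chunks (X : Set Ordinal) {c o : Ordinal}
    (h : ∀ d, c < d → d < o → (X ∩ Set.Ioc c d).Finite) :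
    (X ∩ Set.Ioo c o).Countable := by
  rw [Set.countable_iff_exists_injOn]
  refine ⟨fun z => (X ∩ Set.Ioc c z).ncard, ?_⟩
  have haux : ∀ z ∈ X ∩ Set.Ioo c o, ∀ w ∈ X ∩ Set.Ioo c o, z < w →
      (X ∩ Set.Ioc c z).ncard < (X ∩ Set.Ioc c w).ncard := by
    intro z hz w hw hlt
    have hsub : X ∩ Set.Ioc c z ⊆ X ∩ Set.Ioc c w :=
      Set.inter_subset_inter_right _ (Set.Ioc_subset_Ioc_right hlt.le)
    have hss : X ∩ Set.Ioc c z ⊂ X ∩ Set.Ioc c w := by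
      rw [Set.ssubset_iff_of_subset hsub]
      exact ⟨w, ⟨hw.1, hw.2.1, le_refl w⟩, fun hmem => absurd hmem.2.2 (not_le.mpr hlt)⟩
    exact Set.ncard_lt_ncard hss (h w hw.2.1 hw.2.2)
  intro z hz w hw hzw
  by_contra hne
  rcases lt_or_gt_of_ne hne with hlt | hlt
  · exact absurd hzw (Nat.ne_of_lt (haux z hz w hw hlt))
  · exact absurd hzw.symm (Nat.ne_of_lt (haux w hw z hz hlt))

theorem card_glue (X : Set Ordinal) {c b d : Ordinal}
    (hinf : (X ∩ Set.Ioc b d).Infinite)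
    (hle : Cardinal.mk ↥(X ∩ Set.Ioc c b) ≤ Cardinal.mk ↥(X ∩ Set.Ioc b d)) :
    Cardinal.mk ↥(X ∩ Set.Ioc c d) ≤ Cardinal.mk ↥(X ∩ Set.Ioc b d) := by
  have hsub : X ∩ Set.Ioc c d ⊆ (X ∩ Set.Ioc c b) ∪ (X ∩ Set.Ioc b d) := by
    intro z hz
    rcases le_or_gt z b with hzb | hzb
    · exact Or.inl ⟨hz.1, hz.2.1, hzb⟩
    · exact Or.inr ⟨hz.1, hzb, hz.2.2⟩
  have hℵ : Cardinal.aleph0 ≤ Cardinal.mk ↥(X ∩ Set.Ioc b d) := by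
    rw [← Cardinal.infinite_iff, Set.infinite_coe_iff]
    exact hinf
  calc Cardinal.mk ↥(X ∩ Set.Ioc c d)
      ≤ Cardinal.mk ↥((X ∩ Set.Ioc c b) ∪ (X ∩ Set.Ioc b d)) := Cardinal.mk_le_mk_of_subset hsub
    _ ≤ Cardinal.mk ↥(X ∩ Set.Ioc c b) + Cardinal.mk ↥(X ∩ Set.Ioc b d) := Cardinal.mk_union_le _ _
    _ ≤ Cardinal.mk ↥(X ∩ Set.Ioc b d) + Cardinal.mk ↥(X ∩ Set.Ioc b d) := add_le_add hle le_rfl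
    _ = Cardinal.mk ↥(X ∩ Set.Ioc b d) := Cardinal.add_eq_self hℵ

theorem key (X : Set Ordinal) {o a : Ordinal}
    (ho : ∀ b < o, (X ∩ Set.Ioo b o).Nonempty) (ha : a < o) :
    ∃ c, a ≤ c ∧ c < o ∧
      ((∀ d, c < d → d < o → (X ∩ Set.Ioc c d).Finite) ∨
       (∀ b, c ≤ b → b < o → ∃ d, b < d ∧ d < o ∧ (X ∩ Set.Ioc b d).Infinite ∧
          Cardinal.mk ↥(X ∩ Set.Ioc c d) ≤ Cardinal.mk ↥(X ∩ Set.Ioc b d))) := by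
  have hne : ∀ b, b < o → Nonempty ↥(Set.Ioo b o) := fun b hb =>
    ⟨⟨(ho b hb).choose, (ho b hb).choose_spec.2⟩⟩
  set κ : Ordinal → Cardinal :=
    fun b => ⨆ d : ↥(Set.Ioo b o), Cardinal.mk ↥(X ∩ Set.Ioc b ↑d) with hκ
  have hbdd : ∀ b, BddAbove (Set.range fun d : ↥(Set.Ioo b o) =>
      Cardinal.mk ↥(X ∩ Set.Ioc b ↑d)) := by
    intro b
    refine ⟨Cardinal.mk ↥(X ∩ Set.Ioc b o), ?_⟩
    rintro x ⟨d, rfl⟩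
    exact Cardinal.mk_le_mk_of_subset
      (Set.inter_subset_inter_right _ (Set.Ioc_subset_Ioc_right d.2.2.le))
  have hle : ∀ b d, d ∈ Set.Ioo b o → Cardinal.mk ↥(X ∩ Set.Ioc b d) ≤ κ b := by
    intro b d hd
    exact le_ciSup (hbdd b) (⟨d, hd⟩ : ↥(Set.Ioo b o))
  have hmono : ∀ b b', b ≤ b' → b' < o → κ b' ≤ κ b := by
    intro b b' hbb' hb'
    have : Nonempty ↥(Set.Ioo b' o) := hne b' hb'
    refine ciSup_le fun d => ?_
    refine le_trans (Cardinal.mk_le_mk_of_subset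
      (Set.inter_subset_inter_right _ (Set.Ioc_subset_Ioc_left hbb'))) ?_
    exact hle b ↑d ⟨lt_of_le_of_lt hbb' d.2.1, d.2.2⟩
  obtain ⟨μ, hμmem, hμmin⟩ := Cardinal.lt_wf.has_min (κ '' Set.Ico a o)
    ⟨κ a, a, ⟨le_refl a, ha⟩, rfl⟩
  obtain ⟨c₁, hc₁, hκc₁⟩ := hμmem
  have hconst : ∀ b, c₁ ≤ b → b < o → κ b = μ := by
    intro b hb hbo
    refine le_antisymm ?_ ?_
    · rw [← hκc₁]; exact hmono c₁ b hb hbo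
    · by_contra hlt
      exact hμmin (κ b) ⟨b, ⟨le_trans hc₁.1 hb, hbo⟩, rfl⟩ (lt_of_not_ge hlt)
  have hμinf : Cardinal.aleph0 ≤ μ := by
    rw [Cardinal.aleph0_le]
    intro n
    rcases n with _ | n
    · simp
    · obtain ⟨t, hts, htf, htn⟩ := (inf_tail X ho hc₁.2).exists_subset_ncard_eq (n+1)
      have htne : t.Nonempty := Set.nonempty_of_ncard_ne_zero (by omega)
      obtain ⟨m, hmt, hmax⟩ := Set.exists_max_image t id htf htne
      have hmIoo : m ∈ Set.Ioo c₁ o := (hts hmt).2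
      have htsub : t ⊆ X ∩ Set.Ioc c₁ m := fun z hz =>
        ⟨(hts hz).1, (hts hz).2.1, hmax z hz⟩
      have h1 : ((n+1 : ℕ) : Cardinal) = Cardinal.mk ↥t := by
        rw [← htn, Set.ncard_eq_toFinset_card _ htf]
        rw [← Cardinal.mk_coe_finset]
        congr 1
        simp [Set.Finite.coe_toFinset]
      rw [h1, ← hκc₁]
      exact le_trans (Cardinal.mk_le_mk_of_subset htsub) (hle c₁ m hmIoo)
  by_cases hA : ∃ c', (c₁ ≤ c' ∧ c' < o) ∧ ∀ d, c' < d → d < o → (X ∩ Set.Ioc c' d).Finite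
  · obtain ⟨c', ⟨h1, h2⟩, h3⟩ := hA
    exact ⟨c', le_trans hc₁.1 h1, h2, Or.inl h3⟩
  · push_neg at hA
    by_cases hB : ∃ b₂, (c₁ ≤ b₂ ∧ b₂ < o) ∧
        ∀ d, b₂ < d → d < o → Cardinal.mk ↥(X ∩ Set.Ioc b₂ d) < μ
    · obtain ⟨c, ⟨hcc₁, hco⟩, hB2⟩ := hB
      refine ⟨c, le_trans hc₁.1 hcc₁, hco, Or.inr ?_⟩
      intro b hcb hbo
      have hμ' : Cardinal.mk ↥(X ∩ Set.Ioc c b) < μ := by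
        rcases eq_or_lt_of_le hcb with rfl | hlt
        · have hemp : X ∩ Set.Ioc c c = ∅ := by simp
          rw [hemp, Cardinal.mk_emptyCollection]
          exact lt_of_lt_of_le Cardinal.aleph0_pos hμinf
        · exact hB2 b hlt hbo
      obtain ⟨d₁, hbd₁, hd₁o, hd₁inf⟩ := hA b ⟨le_trans hcc₁ hcb, hbo⟩
      by_cases hcase : Cardinal.mk ↥(X ∩ Set.Ioc c b) ≤ Cardinal.mk ↥(X ∩ Set.Ioc b d₁)
      · exact ⟨d₁, hbd₁, hd₁o, hd₁inf, card_glue X hd₁inf hcase⟩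
      · have h8 : Cardinal.aleph0 ≤ Cardinal.mk ↥(X ∩ Set.Ioc c b) := by
          have : Cardinal.aleph0 ≤ Cardinal.mk ↥(X ∩ Set.Ioc b d₁) := by
            rw [← Cardinal.infinite_iff, Set.infinite_coe_iff]
            exact hd₁inf
          exact le_trans this (le_of_lt (lt_of_not_ge hcase))
        have h9 : Cardinal.mk ↥(X ∩ Set.Ioc c b) < κ b := by
          rw [hconst b (le_trans hcc₁ hcb) hbo]
          exact hμ'
        have : Nonempty ↥(Set.Ioo b o) := hne b hbo
        obtain ⟨d₂, hd₂⟩ := exists_lt_of_lt_ciSup h9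
        have hd₂inf : (X ∩ Set.Ioc b ↑d₂).Infinite := by
          rw [← Set.infinite_coe_iff, Cardinal.infinite_iff]
          exact le_trans h8 (le_of_lt hd₂)
        exact ⟨↑d₂, d₂.2.1, d₂.2.2, hd₂inf, card_glue X hd₂inf (le_of_lt hd₂)⟩
    · push_neg at hB
      refine ⟨c₁, hc₁.1, hc₁.2, Or.inr ?_⟩
      intro b hcb hbo
      obtain ⟨d, hbd, hdo, hdge⟩ := hB b ⟨hcb, hbo⟩
      have hinf : (X ∩ Set.Ioc b d).Infinite := by
        rw [← Set.infinite_coe_iff, Cardinal.infinite_iff]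
        exact le_trans hμinf hdge
      have hle2 : Cardinal.mk ↥(X ∩ Set.Ioc c₁ b) ≤ Cardinal.mk ↥(X ∩ Set.Ioc b d) := by
        refine le_trans ?_ hdge
        rw [← hκc₁]
        refine le_trans (Cardinal.mk_le_mk_of_subset
          (Set.inter_subset_inter_right _ (Set.Ioc_subset_Ioc_right hbd.le))) ?_
        exact hle c₁ d ⟨lt_of_le_of_lt hcb hbd, hdo⟩
      exact ⟨d, hbd, hdo, hinf, card_glue X hinf hle2⟩


theorem exists_bound {o lb : Ordinal} (hlb : lb < o) {A : Set Ordinal} (hA : A.Finite)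
    (hAlt : ∀ z ∈ A, z < o) : ∃ m, lb ≤ m ∧ m < o ∧ ∀ z ∈ A, z ≤ m := by
  obtain ⟨m, hm, hmax⟩ := Set.exists_max_image (insert lb A) id (hA.insert lb)
    ⟨lb, Set.mem_insert _ _⟩
  refine ⟨m, hmax lb (Set.mem_insert _ _), ?_, fun z hz => hmax z (Set.mem_insert_of_mem _ hz)⟩
  rcases hm with rfl | hm
  · exact hlb
  · exact hAlt m hm


theorem build_E (X : Set Ordinal) {aJ c : Ordinal} {x₀ : ↥X}
    (holim : Order.IsSuccLimit (x₀ : Ordinal))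
    (hclp : ∀ d, d < (x₀ : Ordinal) → ∀ S : Set ↥X,
      S ⊆ Subtype.val ⁻¹' (Set.Ioc aJ d) → IsClopen S)
    (hac : aJ ≤ c) (hco : c < (x₀ : Ordinal))
    (ho : ∀ b < (x₀ : Ordinal), (X ∩ Set.Ioo b (x₀ : Ordinal)).Nonempty)
    (hcase : (∀ d, c < d → d < (x₀ : Ordinal) → (X ∩ Set.Ioc c d).Finite) ∨
       (∀ b, c ≤ b → b < (x₀ : Ordinal) → ∃ d, b < d ∧ d < (x₀ : Ordinal) ∧
          (X ∩ Set.Ioc b d).Infinite ∧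
          Cardinal.mk ↥(X ∩ Set.Ioc c d) ≤ Cardinal.mk ↥(X ∩ Set.Ioc b d)))
    {b : Ordinal} (hcb : c ≤ b) (hbo : b < (x₀ : Ordinal)) :
    ∃ E : Set ↥X, IsClopen E ∧ x₀ ∈ E ∧
      E ⊆ Subtype.val ⁻¹' (Set.Ioc b (x₀ : Ordinal)) ∧
      Nonempty (↥(Subtype.val ⁻¹' (Set.Ioc c (x₀ : Ordinal)) : Set ↥X) ≃ₜ ↥E) := by
  set o := (x₀ : Ordinal) with ho'
  have hpre : ∀ s : Set Ordinal,
      Cardinal.mk ↥(Subtype.val ⁻¹' s : Set ↥X) = Cardinal.mk ↥(X ∩ s) := by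
    intro s
    have he : (Subtype.val ⁻¹' s : Set ↥X) = Subtype.val ⁻¹' (X ∩ s) := by
      ext z
      simp [z.2]
    rw [he]
    exact Cardinal.mk_preimage_of_injective_of_subset_range _ _ Subtype.val_injective
      (by rw [Subtype.range_val]; exact Set.inter_subset_left)
  have hiso : ∀ z : ↥X, aJ < (z : Ordinal) → (z : Ordinal) ≤ o → z ≠ x₀ →
      IsOpen ({z} : Set ↥X) := by
    intro z h1 h2 h3
    have hlt : (z : Ordinal) < o := lt_of_le_of_ne h2 (fun h => h3 (Subtype.ext h))
    exact (hclp (z : Ordinal) hlt {z} (by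
      intro w hw
      rw [Set.mem_singleton_iff] at hw
      subst hw
      exact ⟨h1, le_refl _⟩)).isOpen
  have hmemC : x₀ ∈ (Subtype.val ⁻¹' (Set.Ioc c o) : Set ↥X) := ⟨hco, le_refl o⟩
  have hmemT : x₀ ∈ (Subtype.val ⁻¹' (Set.Ioc b o) : Set ↥X) := ⟨hbo, le_refl o⟩
  set C : Set ↥X := Subtype.val ⁻¹' (Set.Ioc c o) with hC'
  set T : Set ↥X := Subtype.val ⁻¹' (Set.Ioc b o) with hT'
  have hCsingle : ∀ z : ↥C, z ≠ ⟨x₀, hmemC⟩ → IsOpen ({(z : ↥X)} : Set ↥X) := by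
    intro z hz
    exact hiso _ (lt_of_le_of_lt hac z.2.1) z.2.2 (fun h => hz (Subtype.ext h))
  rcases hcase with hfin | hcr
  · -- countable case: all chunks finite
    have hXfin : ∀ b' d', c ≤ b' → d' < o → (X ∩ Set.Ioc b' d').Finite := by
      intro b' d' hb' hd'
      rcases le_or_gt d' b' with h | h
      · rw [Set.Ioc_eq_empty (not_lt.mpr h), Set.inter_empty]
        exact Set.finite_empty
      · exact (hfin d' (lt_of_le_of_lt hb' h) hd').subset
          (Set.inter_subset_inter_right _ (Set.Ioc_subset_Ioc_left hb'))
    have hcardT : ∀ b', c ≤ b' → b' < o →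
        Cardinal.mk ↥(Subtype.val ⁻¹' (Set.Ioc b' o) : Set ↥X) = Cardinal.aleph0 := by
      intro b' hb' hb'o
      rw [hpre]
      apply le_antisymm
      · rw [Cardinal.mk_le_aleph0_iff, Set.countable_coe_iff]
        have hsub : X ∩ Set.Ioc b' o ⊆ (X ∩ Set.Ioo b' o) ∪ {o} := by
          intro z hz
          rcases eq_or_lt_of_le hz.2.2 with h | h
          · exact Or.inr (by rw [h]; rfl)
          · exact Or.inl ⟨hz.1, hz.2.1, h⟩
        refine Set.Countable.mono hsub ?_
        exact (countable_chunks X (fun d _ hd2 => hXfin b' d hb' hd2)).union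
          (Set.countable_singleton o)
      · rw [← Cardinal.infinite_iff, Set.infinite_coe_iff]
        exact (inf_tail X ho hb'o).mono
          (Set.inter_subset_inter_right _ Set.Ioo_subset_Ioc_self)
    obtain ⟨ψ⟩ := Cardinal.eq.mp ((hcardT c (le_refl c) hco).trans (hcardT b hcb hbo).symm)
    set pC : ↥C := ⟨x₀, hmemC⟩ with hpC'
    set pT : ↥T := ⟨x₀, hmemT⟩ with hpT'
    set f : ↥C ≃ ↥T := ψ.trans (Equiv.swap (ψ pC) pT) with hf'
    have hfp : f pC = pT := by
      simp [hf', Equiv.swap_apply_left]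
    have hTsingle : ∀ w : ↥T, w ≠ f pC → IsOpen ({(w : ↥X)} : Set ↥X) := by
      intro w hw
      refine hiso _ (lt_of_le_of_lt (le_trans hac hcb) w.2.1) w.2.2 (fun h => hw ?_)
      rw [hfp]
      exact Subtype.ext h
    -- finite complement lemmas
    have hKfin : ∀ U : Set ↥X, IsOpen U → x₀ ∈ U → ∀ b', c ≤ b' → b' < o →
        Set.Finite {w : ↥(Subtype.val ⁻¹' (Set.Ioc b' o) : Set ↥X) | (w : ↥X) ∉ U} := by
      intro U hU hx₀U b' hb' hb'o
      obtain ⟨a', ha', hsubU⟩ := shrink holim hU hx₀U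
      have hsub : {w : ↥(Subtype.val ⁻¹' (Set.Ioc b' o) : Set ↥X) | (w : ↥X) ∉ U} ⊆
          (fun w : ↥(Subtype.val ⁻¹' (Set.Ioc b' o) : Set ↥X) => ((w : ↥X) : Ordinal)) ⁻¹'
            (X ∩ Set.Ioc b' a') := by
        intro w hw
        have hle : ((w : ↥X) : Ordinal) ≤ a' := by
          by_contra hgt
          exact hw (hsubU ⟨not_le.mp hgt, w.2.2⟩)
        exact ⟨(w : ↥X).2, w.2.1, hle⟩
      exact Set.Finite.subset (Set.Finite.preimage
        ((Subtype.val_injective.comp Subtype.val_injective).injOn)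
        (hXfin b' a' hb' ha')) hsub
    refine ⟨T, isClopen_pre b o, hmemT, le_refl _, ?_⟩
    refine homeo_glue f pC hCsingle hTsingle ?_ ?_
    · intro U hU hfpU
      have hx₀U : x₀ ∈ U := by rwa [hfp] at hfpU
      have hF₀fin : Set.Finite {z : ↥C | ((f z : ↥T) : ↥X) ∉ U} := by
        have : {z : ↥C | ((f z : ↥T) : ↥X) ∉ U} = ⇑f ⁻¹' {w : ↥T | (w : ↥X) ∉ U} := rfl
        rw [this]
        exact (hKfin U hU hx₀U b hcb hbo).preimage f.injective.injOn
      have hAfin : Set.Finite ((fun z : ↥C => ((z : ↥X) : Ordinal)) ''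
          {z : ↥C | ((f z : ↥T) : ↥X) ∉ U}) := hF₀fin.image _
      have hAlt : ∀ v ∈ (fun z : ↥C => ((z : ↥X) : Ordinal)) ''
          {z : ↥C | ((f z : ↥T) : ↥X) ∉ U}, v < o := by
        rintro v ⟨z, hz, rfl⟩
        rcases eq_or_lt_of_le z.2.2 with h | h
        · exfalso
          have hzpC : z = pC := Subtype.ext (Subtype.ext h)
          rw [hzpC] at hz
          simp only [Set.mem_setOf_eq, hfp] at hz
          exact hz hx₀U
        · exact h
      obtain ⟨m, hbm, hmo, hmax⟩ := exists_bound hbo hAfin hAlt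
      refine ⟨Subtype.val ⁻¹' Set.Ioc m o, (isClopen_pre m o).isOpen, ⟨hmo, le_refl o⟩, ?_⟩
      intro z hzW
      by_contra hnot
      exact absurd (hmax _ ⟨z, hnot, rfl⟩) (not_le.mpr hzW.1)
    · intro U hU hpU
      have hF₀fin : Set.Finite {w : ↥T | ((f.symm w : ↥C) : ↥X) ∉ U} := by
        have : {w : ↥T | ((f.symm w : ↥C) : ↥X) ∉ U} =
            ⇑f.symm ⁻¹' {z : ↥C | (z : ↥X) ∉ U} := rfl
        rw [this]
        exact (hKfin U hU hpU c (le_refl c) hco).preimage f.symm.injective.injOn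
      have hAfin : Set.Finite ((fun w : ↥T => ((w : ↥X) : Ordinal)) ''
          {w : ↥T | ((f.symm w : ↥C) : ↥X) ∉ U}) := hF₀fin.image _
      have hAlt : ∀ v ∈ (fun w : ↥T => ((w : ↥X) : Ordinal)) ''
          {w : ↥T | ((f.symm w : ↥C) : ↥X) ∉ U}, v < o := by
        rintro v ⟨w, hw, rfl⟩
        rcases eq_or_lt_of_le w.2.2 with h | h
        · exfalso
          have hwpT : w = pT := Subtype.ext (Subtype.ext h)
          rw [hwpT] at hw
          simp only [Set.mem_setOf_eq, ← hfp, Equiv.symm_apply_apply] at hw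
          exact hw hpU
        · exact h
      obtain ⟨m, hbm, hmo, hmax⟩ := exists_bound hbo hAfin hAlt
      refine ⟨Subtype.val ⁻¹' Set.Ioc m o, (isClopen_pre m o).isOpen, ?_, ?_⟩
      · rw [hfp]
        exact ⟨hmo, le_refl o⟩
      · intro w hwW
        by_contra hnot
        exact absurd (hmax _ ⟨w, hnot, rfl⟩) (not_le.mpr hwW.1)
  · -- injection case
    obtain ⟨d, hbd, hdo, hinf, hcard⟩ := hcr b hcb hbo
    have hA12 : Cardinal.mk ↥(Subtype.val ⁻¹' (Set.Ioc c d) : Set ↥X) ≤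
        Cardinal.mk ↥(Subtype.val ⁻¹' (Set.Ioc b d) : Set ↥X) := by
      rw [hpre, hpre]
      exact hcard
    obtain ⟨ι⟩ := Cardinal.le_def _ _ |>.mp hA12
    set F : ↥C → ↥X := fun z =>
      if h : ((z : ↥X) : Ordinal) ≤ d then ↑(ι ⟨↑z, ⟨z.2.1, h⟩⟩) else ↑z with hF'
    have hFval_le : ∀ (z : ↥C) (h : ((z : ↥X) : Ordinal) ≤ d), F z = ↑(ι ⟨↑z, ⟨z.2.1, h⟩⟩) := by
      intro z h
      simp only [hF', dif_pos h]
    have hFval_gt : ∀ (z : ↥C), ¬ ((z : ↥X) : Ordinal) ≤ d → F z = ↑z := by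
      intro z h
      simp only [hF', dif_neg h]
    have hFA₂ : ∀ (z : ↥C) (h : ((z : ↥X) : Ordinal) ≤ d),
        F z ∈ (Subtype.val ⁻¹' (Set.Ioc b d) : Set ↥X) := by
      intro z h
      rw [hFval_le z h]
      exact (ι ⟨↑z, ⟨z.2.1, h⟩⟩).2
    have hFinj : Function.Injective F := by
      intro z w h
      by_cases hz : ((z : ↥X) : Ordinal) ≤ d
      · by_cases hw : ((w : ↥X) : Ordinal) ≤ d
        · rw [hFval_le z hz, hFval_le w hw] at h
          have h3 := ι.injective (Subtype.val_injective h)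
          have h4 := Subtype.ext_iff.mp h3
          exact Subtype.ext h4
        · exfalso
          have h1 := (hFA₂ z hz).2
          rw [h, hFval_gt w hw] at h1
          exact hw h1
      · by_cases hw : ((w : ↥X) : Ordinal) ≤ d
        · exfalso
          have h1 := (hFA₂ w hw).2
          rw [← h, hFval_gt z hz] at h1
          exact hz h1
        · rw [hFval_gt z hz, hFval_gt w hw] at h
          exact Subtype.ext h
    set E : Set ↥X := Set.range F with hE'
    set f : ↥C ≃ ↥E := Equiv.ofInjective F hFinj with hf'
    set pC : ↥C := ⟨x₀, hmemC⟩ with hpC'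
    have hFpC : F pC = x₀ := hFval_gt pC (not_le.mpr hdo)
    have hfcoe : ∀ z : ↥C, ((f z : ↥E) : ↥X) = F z := fun z => rfl
    have hfpc : ((f pC : ↥E) : ↥X) = x₀ := by rw [hfcoe, hFpC]
    have hEsub : E ⊆ T := by
      rintro _ ⟨z, rfl⟩
      by_cases hz : ((z : ↥X) : Ordinal) ≤ d
      · exact ⟨(hFA₂ z hz).1, le_trans (hFA₂ z hz).2 hdo.le⟩
      · rw [hFval_gt z hz]
        exact ⟨lt_trans hbd (not_le.mp hz), z.2.2⟩
    have hx₀E : x₀ ∈ E := ⟨pC, hFpC⟩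
    have hEeq : E = (E ∩ (Subtype.val ⁻¹' (Set.Ioc b d) : Set ↥X)) ∪
        (Subtype.val ⁻¹' (Set.Ioc d o) : Set ↥X) := by
      apply Set.Subset.antisymm
      · rintro _ ⟨z, rfl⟩
        by_cases hz : ((z : ↥X) : Ordinal) ≤ d
        · exact Or.inl ⟨⟨z, rfl⟩, hFA₂ z hz⟩
        · right
          rw [hFval_gt z hz]
          exact ⟨not_le.mp hz, z.2.2⟩
      · rintro w (hw | hw)
        · exact hw.1
        · have hwC : w ∈ C := ⟨lt_trans (lt_of_le_of_lt hcb hbd) hw.1, hw.2⟩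
          refine ⟨⟨w, hwC⟩, ?_⟩
          exact hFval_gt ⟨w, hwC⟩ (not_le.mpr hw.1)
    have hEclopen : IsClopen E := by
      rw [hEeq]
      refine IsClopen.union ?_ (isClopen_pre d o)
      refine hclp d hdo _ ?_
      intro w hw
      exact ⟨lt_of_le_of_lt hac (lt_of_le_of_lt hcb hw.2.1), hw.2.2⟩
    refine ⟨E, hEclopen, hx₀E, hEsub, ?_⟩
    have hEsingle : ∀ w : ↥E, w ≠ f pC → IsOpen ({(w : ↥X)} : Set ↥X) := by
      intro w hw
      refine hiso _ (lt_of_le_of_lt (le_trans hac hcb) (hEsub w.2).1) (hEsub w.2).2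
        (fun h => hw ?_)
      apply Subtype.ext
      rw [h, hfpc]
    refine homeo_glue f pC hCsingle hEsingle ?_ ?_
    · intro U hU hfpU
      have hx₀U : x₀ ∈ U := by rw [← hfpc]; exact hfpU
      refine ⟨U ∩ Subtype.val ⁻¹' Set.Ioi d, hU.inter (isOpen_Ioi.preimage continuous_subtype_val),
        ⟨hx₀U, hdo⟩, ?_⟩
      intro z hzW
      rw [hfcoe, hFval_gt z (not_le.mpr hzW.2)]
      exact hzW.1
    · intro U hU hpU
      refine ⟨U ∩ Subtype.val ⁻¹' Set.Ioi d, hU.inter (isOpen_Ioi.preimage continuous_subtype_val),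
        ?_, ?_⟩
      · rw [hfpc]
        exact ⟨hpU, hdo⟩
      · intro w hwW
        have hz : F (f.symm w) = ↑w := by
          rw [← hfcoe, Equiv.apply_symm_apply]
        by_cases hzd : ((f.symm w : ↥C) : Ordinal) ≤ d
        · exfalso
          have h1 := (hFA₂ (f.symm w) hzd).2
          rw [hz] at h1
          exact absurd hwW.2 (not_lt.mpr h1)
        · rw [hFval_gt (f.symm w) hzd] at hz
          rw [show ((f.symm w : ↥C) : ↥X) = ↑w from hz]
          exact hwW.1

end Stmt9

open Stmt9 Set in
/-- If a set of ordinals `X` (subspace topology) is homogeneous on its derived set `X'`,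
then there is a family `(I_x)_{x ∈ X'}` of pairwise disjoint clopen sets with `x ∈ I_x`,
whose complement `D` is clopen and discrete, with all `I_x` mutually homeomorphic, and
with `x` the only non-isolated point of `I_x`. -/
theorem stmt_9 (X : Set Ordinal)
    (hhom : HomogeneousOn ↥X {x : ↥X | NonIsolated x}) :
    ∃ I : {x : ↥X | NonIsolated x} → Set ↥X,
      (∀ x, IsClopen (I x)) ∧
      (Pairwise fun x y => Disjoint (I x) (I y)) ∧
      (∀ x, (x : ↥X) ∈ I x) ∧
      IsClopen ((⋃ x, I x)ᶜ) ∧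
      DiscreteTopology ↥((⋃ x, I x)ᶜ) ∧
      (∀ x y, Nonempty (↥(I x) ≃ₜ ↥(I y))) ∧
      (∀ x, ∀ y : ↥(I x), NonIsolated y ↔ (y : ↥X) = (x : ↥X)) := by
  classical
  rcases isEmpty_or_nonempty ↥{x : ↥X | NonIsolated x} with hemp | hne
  · refine ⟨fun _ => ∅, ?_, ?_, ?_, ?_, ?_, ?_, ?_⟩
    · intro x; exact (hemp.false x).elim
    · intro x y h; exact (hemp.false x).elim
    · intro x; exact (hemp.false x).elim
    · have h1 : (⋃ x : ↥{x : ↥X | NonIsolated x}, (∅ : Set ↥X)) = ∅ := by simp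
      rw [h1, Set.compl_empty]
      exact isClopen_univ
    · have hop : ∀ z : ↥X, IsOpen ({z} : Set ↥X) := by
        intro z
        by_contra hz
        exact hemp.false ⟨z, hz⟩
      apply discreteTopology_iff_isOpen_singleton.mpr
      intro a
      have he : ({a} : Set ↥((⋃ x : ↥{x : ↥X | NonIsolated x}, (∅ : Set ↥X))ᶜ)) =
          Subtype.val ⁻¹' {(a : ↥X)} := by
        ext w; simp [Subtype.ext_iff]
      rw [he]
      exact (hop ↑a).preimage continuous_subtype_val
    · intro x; exact (hemp.false x).elim
    · intro x; exact (hemp.false x).elim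
  · -- nonempty derived set
    obtain ⟨v₀, hv₀mem, hv₀min⟩ := Ordinal.lt_wf.has_min
      ((fun x : ↥X => (x : Ordinal)) '' {x : ↥X | NonIsolated x})
      (by obtain ⟨x⟩ := hne; exact ⟨↑↑x, ↑x, x.2, rfl⟩)
    obtain ⟨x₀, hx₀ni, hx₀v⟩ := hv₀mem
    have hx₀ni' : NonIsolated x₀ := hx₀ni
    have hx₀v' : (x₀ : Ordinal) = v₀ := hx₀v
    have hU₀open : IsOpen (Subtype.val ⁻¹' (Set.Iio (v₀ + 1)) : Set ↥X) :=
      isOpen_Iio.preimage continuous_subtype_val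
    have hx₀U₀ : x₀ ∈ (Subtype.val ⁻¹' (Set.Iio (v₀ + 1)) : Set ↥X) := by
      have : (x₀ : Ordinal) < v₀ + 1 := by
        rw [hx₀v', Ordinal.add_one_eq_succ]
        exact Order.lt_succ v₀
      exact this
    have hU₀cap : (Subtype.val ⁻¹' (Set.Iio (v₀ + 1)) : Set ↥X) ∩ {x : ↥X | NonIsolated x}
        = {x₀} := by
      apply Set.Subset.antisymm
      · rintro z ⟨hz1, hz2⟩
        have hle : (z : Ordinal) ≤ v₀ := by
          have : (z : Ordinal) < v₀ + 1 := hz1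
          rwa [Ordinal.add_one_eq_succ, Order.lt_succ_iff] at this
        have hge : ¬ ((z : Ordinal) < v₀) := fun h => hv₀min _ ⟨z, hz2, rfl⟩ h
        rw [Set.mem_singleton_iff]
        exact Subtype.ext ((le_antisymm hle (not_lt.mp hge)).trans hx₀v'.symm)
      · intro z hz
        rw [Set.mem_singleton_iff] at hz
        subst hz
        exact ⟨hx₀U₀, hx₀ni⟩
    have hJsel : ∀ x : ↥X, NonIsolated x → ∃ a, a < (x : Ordinal) ∧
        (Subtype.val ⁻¹' (Set.Ioc a (x : Ordinal)) : Set ↥X) ∩ {x : ↥X | NonIsolated x}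
          = {x} := by
      intro x hx
      obtain ⟨f, hf1, hf2⟩ := hhom x₀ hx₀ni x hx
      have hopen : IsOpen (⇑f '' (Subtype.val ⁻¹' (Set.Iio (v₀ + 1)))) :=
        f.isOpen_image.mpr hU₀open
      have hmem : x ∈ ⇑f '' (Subtype.val ⁻¹' (Set.Iio (v₀ + 1))) := ⟨x₀, hx₀U₀, hf1⟩
      have hcap : (⇑f '' (Subtype.val ⁻¹' (Set.Iio (v₀ + 1)))) ∩ {x : ↥X | NonIsolated x}
          = {x} := by
        apply Set.Subset.antisymm
        · rintro w ⟨⟨u, hu, rfl⟩, hw⟩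
          have huXd : NonIsolated u := (nonIsolated_homeo f u).mp hw
          have hu2 : u ∈ (Subtype.val ⁻¹' (Set.Iio (v₀ + 1)) : Set ↥X) ∩
              {x : ↥X | NonIsolated x} := ⟨hu, huXd⟩
          rw [hU₀cap, Set.mem_singleton_iff] at hu2
          rw [Set.mem_singleton_iff, hu2, hf1]
        · intro w hw
          rw [Set.mem_singleton_iff] at hw
          subst hw
          exact ⟨hmem, hx⟩
      obtain ⟨a, ha, hsub⟩ := shrink (limit_of_nonIsolated hx) hopen hmem
      refine ⟨a, ha, ?_⟩
      apply Set.Subset.antisymm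
      · intro z hz
        rw [← hcap]
        exact ⟨hsub hz.1, hz.2⟩
      · intro z hz
        rw [Set.mem_singleton_iff] at hz
        subst hz
        exact ⟨⟨ha, le_refl _⟩, hx⟩
    have hJx : ∀ x : ↥{x : ↥X | NonIsolated x}, ∃ a, a < ((x : ↥X) : Ordinal) ∧
        (Subtype.val ⁻¹' (Set.Ioc a ((x : ↥X) : Ordinal)) : Set ↥X) ∩
          {x : ↥X | NonIsolated x} = {↑x} :=
      fun x => hJsel ↑x x.2
    choose aa haa hJcap using hJx
    set x₀d : ↥{x : ↥X | NonIsolated x} := ⟨x₀, hx₀ni⟩ with hx₀d'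
    -- disjointness of the J intervals
    have hJd : ∀ x y : ↥{x : ↥X | NonIsolated x}, ((x : ↥X) : Ordinal) < ((y : ↥X) : Ordinal) →
        (Subtype.val ⁻¹' (Set.Ioc (aa x) ((x : ↥X) : Ordinal)) : Set ↥X) ∩
          (Subtype.val ⁻¹' (Set.Ioc (aa y) ((y : ↥X) : Ordinal)) : Set ↥X) = ∅ := by
      intro x y hxy
      have hxa : ((x : ↥X) : Ordinal) ≤ aa y := by
        by_contra h
        have hmem : (↑x : ↥X) ∈ (Subtype.val ⁻¹' (Set.Ioc (aa y) ((y : ↥X) : Ordinal)) : Set ↥X) ∩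
            {x : ↥X | NonIsolated x} := ⟨⟨not_le.mp h, hxy.le⟩, x.2⟩
        rw [hJcap y, Set.mem_singleton_iff] at hmem
        exact absurd (congrArg (fun z : ↥X => (z : Ordinal)) hmem) (ne_of_lt hxy)
      apply Set.eq_empty_iff_forall_notMem.mpr
      rintro z ⟨hz1, hz2⟩
      exact absurd (le_trans hz1.2 hxa) (not_le.mpr hz2.1)
    have hJdisj : ∀ x y : ↥{x : ↥X | NonIsolated x}, x ≠ y →
        (Subtype.val ⁻¹' (Set.Ioc (aa x) ((x : ↥X) : Ordinal)) : Set ↥X) ∩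
          (Subtype.val ⁻¹' (Set.Ioc (aa y) ((y : ↥X) : Ordinal)) : Set ↥X) = ∅ := by
      intro x y hxy
      rcases lt_trichotomy ((x : ↥X) : Ordinal) ((y : ↥X) : Ordinal) with h | h | h
      · exact hJd x y h
      · exact absurd (Subtype.ext (Subtype.ext h)) hxy
      · rw [Set.inter_comm]; exact hJd y x h
    have hXlim : ∀ b < (x₀ : Ordinal), (X ∩ Set.Ioo b (x₀ : Ordinal)).Nonempty := by
      intro b hb
      by_contra hempty
      rw [Set.not_nonempty_iff_eq_empty] at hempty
      apply hx₀ni'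
      have he : ({x₀} : Set ↥X) = Subtype.val ⁻¹' (Set.Ioc b (x₀ : Ordinal)) := by
        apply Set.Subset.antisymm
        · intro z hz
          rw [Set.mem_singleton_iff] at hz
          subst hz
          exact ⟨hb, le_refl _⟩
        · intro z hz
          rcases eq_or_lt_of_le hz.2 with h | h
          · exact Subtype.ext h
          · exfalso
            have : (z : Ordinal) ∈ X ∩ Set.Ioo b (x₀ : Ordinal) := ⟨z.2, hz.1, h⟩
            rw [hempty] at this
            exact this
      rw [he]
      exact (isClopen_pre b _).isOpen
    have hclp : ∀ d, d < (x₀ : Ordinal) → ∀ S : Set ↥X,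
        S ⊆ Subtype.val ⁻¹' (Set.Ioc (aa x₀d) d) → IsClopen S := by
      intro d hd S hS
      have hSJ : S ⊆ (Subtype.val ⁻¹' (Set.Ioc (aa x₀d) ((x₀d : ↥X) : Ordinal)) : Set ↥X) :=
        fun z hz => ⟨(hS hz).1, le_trans (hS hz).2 hd.le⟩
      have hSiso : ∀ z ∈ S, ¬ NonIsolated z := by
        intro z hz hni
        have hmem : z ∈ (Subtype.val ⁻¹' (Set.Ioc (aa x₀d) ((x₀d : ↥X) : Ordinal)) : Set ↥X) ∩
            {x : ↥X | NonIsolated x} := ⟨hSJ hz, hni⟩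
        rw [hJcap x₀d, Set.mem_singleton_iff] at hmem
        have hv := (hS hz).2
        rw [hmem] at hv
        exact absurd hv (not_le.mpr hd)
      constructor
      · rw [← isOpen_compl_iff, isOpen_iff_forall_mem_open]
        intro w hw
        by_cases hni : NonIsolated w
        · by_cases hwx : w = x₀
          · refine ⟨Subtype.val ⁻¹' (Set.Ioc d (x₀ : Ordinal)), ?_,
              (isClopen_pre d _).isOpen, ?_⟩
            · intro u hu hSu
              exact absurd (hS hSu).2 (not_le.mpr hu.1)
            · subst hwx
              exact ⟨hd, le_refl _⟩
          · set wd : ↥{x : ↥X | NonIsolated x} := ⟨w, hni⟩ with hwd'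
            have hne' : wd ≠ x₀d := fun h => hwx (congrArg Subtype.val h)
            refine ⟨Subtype.val ⁻¹' (Set.Ioc (aa wd) ((wd : ↥X) : Ordinal)), ?_,
              (isClopen_pre _ _).isOpen, ⟨haa wd, le_refl _⟩⟩
            intro u hu hSu
            have hmem : u ∈ (Subtype.val ⁻¹' (Set.Ioc (aa wd) ((wd : ↥X) : Ordinal)) : Set ↥X) ∩
                (Subtype.val ⁻¹' (Set.Ioc (aa x₀d) ((x₀d : ↥X) : Ordinal)) : Set ↥X) :=
              ⟨hu, hSJ hSu⟩
            rw [hJdisj wd x₀d hne'] at hmem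
            exact hmem
        · refine ⟨{w}, ?_, not_not.mp hni, rfl⟩
          intro u hu
          rw [Set.mem_singleton_iff] at hu
          subst hu
          exact hw
      · rw [isOpen_iff_forall_mem_open]
        intro z hz
        exact ⟨{z}, Set.singleton_subset_iff.mpr hz, not_not.mp (hSiso z hz), rfl⟩
    obtain ⟨c, hac, hco, hcase⟩ := key X hXlim (haa x₀d)
    have hbig : ∀ x : ↥{x : ↥X | NonIsolated x}, ∃ Ix : Set ↥X, IsClopen Ix ∧
        (↑x : ↥X) ∈ Ix ∧
        Ix ⊆ (Subtype.val ⁻¹' (Set.Ioc (aa x) ((x : ↥X) : Ordinal)) : Set ↥X) ∧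
        Nonempty (↥(Subtype.val ⁻¹' (Set.Ioc c (x₀ : Ordinal)) : Set ↥X) ≃ₜ ↥Ix) := by
      intro x
      obtain ⟨g, hg1, hg2⟩ := hhom x₀ hx₀ni ↑x x.2
      have hWopen : IsOpen ((Subtype.val ⁻¹' (Set.Ioc c (x₀ : Ordinal)) : Set ↥X) ∩
          ⇑g ⁻¹' (Subtype.val ⁻¹' (Set.Ioc (aa x) ((x : ↥X) : Ordinal)) : Set ↥X)) :=
        (isClopen_pre c _).isOpen.inter ((isClopen_pre _ _).isOpen.preimage g.continuous)
      have hWmem : x₀ ∈ (Subtype.val ⁻¹' (Set.Ioc c (x₀ : Ordinal)) : Set ↥X) ∩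
          ⇑g ⁻¹' (Subtype.val ⁻¹' (Set.Ioc (aa x) ((x : ↥X) : Ordinal)) : Set ↥X) := by
        refine ⟨⟨hco, le_refl _⟩, ?_⟩
        rw [Set.mem_preimage, hg1]
        exact ⟨haa x, le_refl _⟩
      obtain ⟨a', ha', hsubW⟩ := shrink (limit_of_nonIsolated hx₀ni') hWopen hWmem
      have hcb : c ≤ max a' c := le_max_right _ _
      have hbo : max a' c < (x₀ : Ordinal) := max_lt ha' hco
      obtain ⟨E, hEclopen, hEx₀, hEsub, ⟨hE⟩⟩ :=
        build_E X (limit_of_nonIsolated hx₀ni') hclp hac hco hXlim hcase hcb hbo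
      have hEW : E ⊆ ⇑g ⁻¹' (Subtype.val ⁻¹' (Set.Ioc (aa x) ((x : ↥X) : Ordinal)) : Set ↥X) := by
        intro z hz
        exact (hsubW ⟨lt_of_le_of_lt (le_max_left a' c) (hEsub hz).1, (hEsub hz).2⟩).2
      refine ⟨⇑g '' E, ?_, ⟨x₀, hEx₀, hg1⟩, ?_, ?_⟩
      · have he : ⇑g '' E = ⇑g.symm ⁻¹' E := by
          ext z
          constructor
          · rintro ⟨w, hw, rfl⟩; simpa using hw
          · intro hz; exact ⟨g.symm z, hz, by simp⟩
        rw [he]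
        exact hEclopen.preimage g.symm.continuous
      · rintro _ ⟨z, hz, rfl⟩
        exact hEW hz
      · exact ⟨hE.trans (Homeomorph.image g E)⟩
    choose I hIclopen hImem hIJ hIhomeo using hbig
    refine ⟨I, hIclopen, ?_, hImem, ?_, ?_, ?_, ?_⟩
    · intro x y hxy
      rw [Set.disjoint_iff_inter_eq_empty]
      apply Set.eq_empty_iff_forall_notMem.mpr
      intro z hz
      have hmem : z ∈ (Subtype.val ⁻¹' (Set.Ioc (aa x) ((x : ↥X) : Ordinal)) : Set ↥X) ∩
          (Subtype.val ⁻¹' (Set.Ioc (aa y) ((y : ↥X) : Ordinal)) : Set ↥X) :=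
        ⟨hIJ x hz.1, hIJ y hz.2⟩
      rw [hJdisj x y hxy] at hmem
      exact hmem
    · constructor
      · exact (isOpen_iUnion fun x => (hIclopen x).isOpen).isClosed_compl
      · rw [isOpen_iff_forall_mem_open]
        intro z hz
        have hni : ¬ NonIsolated z := by
          intro h
          exact hz (Set.mem_iUnion.mpr ⟨⟨z, h⟩, hImem ⟨z, h⟩⟩)
        exact ⟨{z}, Set.singleton_subset_iff.mpr hz, not_not.mp hni, rfl⟩
    · apply discreteTopology_iff_isOpen_singleton.mpr
      intro z
      have hni : ¬ NonIsolated (↑z : ↥X) := by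
        intro h
        exact z.2 (Set.mem_iUnion.mpr ⟨⟨↑z, h⟩, hImem ⟨↑z, h⟩⟩)
      have he : ({z} : Set ↥((⋃ x, I x)ᶜ)) = Subtype.val ⁻¹' {(z : ↥X)} := by
        ext w; simp [Subtype.ext_iff]
      rw [he]
      exact (not_not.mp hni).preimage continuous_subtype_val
    · intro x y
      exact ⟨((hIhomeo x).some.symm).trans (hIhomeo y).some⟩
    · intro x y
      rw [nonIsolated_subtype (hIclopen x).isOpen y]
      constructor
      · intro h
        have hmem : (↑y : ↥X) ∈
            (Subtype.val ⁻¹' (Set.Ioc (aa x) ((x : ↥X) : Ordinal)) : Set ↥X) ∩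
              {x : ↥X | NonIsolated x} := ⟨hIJ x y.2, h⟩
        rw [hJcap x, Set.mem_singleton_iff] at hmem
        exact hmem
      · intro h
        rw [h]
        exact x.2
end

section
/- For every infinite cardinal γ there exists a linear order ≺ on L_γ such that: (1) the order topology induced by ≺ on L_γ equals the topology of L_γ (the subspace topology from the ordinals); and (2) ≺ agrees with the usual ordinal order on all pairs containing a non-isolated point of L_γ, i.e., for every x in the derived set of L_γ and every y ∈ L_γ, if x < y then x ≺ y, and if y < x then y ≺ x. -/
namespace Stmt11

open Ordinal Set TopologicalSpace Topology

noncomputable section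

attribute [local instance] Classical.propDecidable

/-- zig-zag enumeration of ℤ by ℕ -/
def zeta (n : ℕ) : ℤ := if n % 2 = 0 then ((n / 2 : ℕ) : ℤ) else (-((n / 2 : ℕ) : ℤ) - 1)

lemma zeta_inj {m n : ℕ} (h : zeta m = zeta n) : m = n := by
  unfold zeta at h; split_ifs at h <;> omega

lemma zeta_surj (z : ℤ) : ∃ n, zeta n = z := by
  refine ⟨if 0 ≤ z then 2 * z.toNat else 2 * (-z).toNat - 1, ?_⟩
  unfold zeta; split_ifs <;> omega

/-- the natural number corresponding to a finite ordinal -/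
def nOf (a : Ordinal) : ℕ := Cardinal.toNat a.card

lemma nOf_cast (n : ℕ) : nOf (n : Ordinal) = n := by
  simp [nOf, Ordinal.card_nat]

lemma nOf_lt {a : Ordinal} (h : a < ω) : ((nOf a : ℕ) : Ordinal) = a := by
  obtain ⟨n, rfl⟩ := Ordinal.lt_omega0.1 h; rw [nOf_cast]

/-- chains with a pinned element below get ordered like ω, others like ℤ -/
def P (o μ : Ordinal) : Prop := μ = 0 ∨ ∃ β : Ordinal, μ = β + o

def zk (o μ : Ordinal) (n : ℕ) : ℤ := if P o μ then (n : ℤ) else zeta n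

def ISucc (x : Ordinal) : Prop := ∃ s : Ordinal, x = s + 1

/-- the key function determining the new order -/
def kp (o x : Ordinal) : Ordinal × ℤ :=
  if ISucc x then (ω * (x.pred / ω), zk o (ω * (x.pred / ω)) (nOf (x.pred % ω)))
  else (x, -1)

lemma kp_succ (o s : Ordinal) :
    kp o (s + 1) = (ω * (s / ω), zk o (ω * (s / ω)) (nOf (s % ω))) := by
  have hp : (s + 1).pred = s := by rw [Ordinal.add_one_eq_succ, Ordinal.pred_succ]
  rw [kp, if_pos ⟨s, rfl⟩, hp]

lemma kp_nonsucc (o : Ordinal) {x : Ordinal} (h : ¬ ISucc x) : kp o x = (x, -1) := by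
  rw [kp, if_neg h]

lemma kp_chain (o : Ordinal) {μ : Ordinal} (hd : ω ∣ μ) (n : ℕ) :
    kp o (μ + n + 1) = (μ, zk o μ n) := by
  obtain ⟨m, rfl⟩ := hd
  have hdiv : (ω * m + n) / ω = m := by
    rw [Ordinal.mul_add_div _ Ordinal.omega0_ne_zero,
      Ordinal.div_eq_zero_of_lt (Ordinal.nat_lt_omega0 n), add_zero]
  have hmod : (ω * m + n) % ω = (n : Ordinal) := by
    rw [Ordinal.mul_add_mod_self, Ordinal.mod_eq_of_lt (Ordinal.nat_lt_omega0 n)]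
  rw [kp_succ, hdiv, hmod, nOf_cast]

lemma succ_form (o : Ordinal) {x : Ordinal} (h : ISucc x) :
    ∃ (μ : Ordinal) (n : ℕ), ω ∣ μ ∧ x = μ + n + 1 ∧ kp o x = (μ, zk o μ n) := by
  obtain ⟨s, rfl⟩ := h
  refine ⟨ω * (s / ω), nOf (s % ω), ⟨_, rfl⟩, ?_, kp_succ o s⟩
  rw [nOf_lt (Ordinal.mod_lt s Ordinal.omega0_ne_zero), Ordinal.div_add_mod]

lemma zk_P {o μ : Ordinal} {n : ℕ} (h : P o μ) : zk o μ n = (n : ℤ) := if_pos h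

lemma zk_inj {o μ : Ordinal} {m n : ℕ} (h : zk o μ m = zk o μ n) : m = n := by
  unfold zk at h; split_ifs at h
  · exact_mod_cast h
  · exact zeta_inj h

lemma zk_zero (o μ : Ordinal) : zk o μ 0 = 0 := by
  unfold zk; split_ifs <;> simp [zeta]

lemma zk_exists (o μ : Ordinal) (z : ℤ) (hz : P o μ → 0 ≤ z) : ∃ n, zk o μ n = z := by
  unfold zk; split_ifs with h
  · exact ⟨z.toNat, by rw [Int.toNat_of_nonneg (hz h)]⟩
  · exact zeta_surj z

lemma not_succ_of_omega_dvd {μ : Ordinal} (hd : ω ∣ μ) : ¬ ISucc μ := by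
  obtain ⟨m, rfl⟩ := hd
  rcases eq_or_ne m 0 with rfl | hm
  · rintro ⟨s, hs⟩
    rw [mul_zero, Ordinal.add_one_eq_succ] at hs
    exact Ordinal.succ_ne_zero s hs.symm
  · have hl : Order.IsSuccLimit (ω * m) :=
      Ordinal.isSuccLimit_mul_left Ordinal.isSuccLimit_omega0 (pos_iff_ne_zero.2 hm)
    rintro ⟨s, hs⟩
    have h1 : s < ω * m := by rw [hs, Ordinal.add_one_eq_succ]; exact Order.lt_succ s
    have h2 := Order.IsSuccLimit.succ_lt hl h1
    rw [hs, Ordinal.add_one_eq_succ] at h2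
    exact lt_irrefl _ h2

/-- the set `Lset`, parameterized by the ordinal -/
def E (o : Ordinal) : Set Ordinal :=
  {α | α ≤ o * o ∧ (α = o * o ∨ α = 0 ∨ (∃ β, α = β + 1) ∨ ∃ β : Ordinal, α = β + o)}

lemma add_omega_le {a b : Ordinal} (ha : ω ∣ a) (hb : ω ∣ b) (h : a < b) : a + ω ≤ b := by
  obtain ⟨m, rfl⟩ := ha; obtain ⟨k, rfl⟩ := hb
  have hmk : m < k := lt_of_mul_lt_mul_left' h
  calc ω * m + ω = ω * (m + 1) := by rw [mul_add_one]
    _ ≤ ω * k := mul_le_mul_right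
        (by rw [Ordinal.add_one_eq_succ]; exact Order.succ_le_of_lt hmk) ω

lemma dvd_le_mu {a μ : Ordinal} {n : ℕ} (hd : ω ∣ a) (hdμ : ω ∣ μ) (h : a ≤ μ + n) : a ≤ μ := by
  by_contra h'
  push_neg at h'
  have h2 : μ + ω ≤ a := add_omega_le hdμ hd h'
  have h3 : a < μ + ω := lt_of_le_of_lt h (add_lt_add_right (Ordinal.nat_lt_omega0 n) μ)
  exact absurd h2 (not_le.2 h3)

section Main

variable {o : Ordinal} (ho : ω ≤ o) (hprin : ∀ a < o, ∀ b < o, a + b < o)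

include ho hprin

lemma o_limit : Order.IsSuccLimit o := by
  rw [Ordinal.isSuccLimit_iff, Order.isSuccPrelimit_iff_succ_lt]
  constructor
  · rintro rfl; exact absurd ho (not_le.2 Ordinal.omega0_pos)
  · intro a hao
    rw [← Ordinal.add_one_eq_succ]
    exact hprin a hao 1 (lt_of_lt_of_le Ordinal.one_lt_omega0 ho)

lemma absorb {a : Ordinal} (h : a < o) : a + o = o := by
  refine le_antisymm ((Ordinal.add_le_iff_of_isSuccLimit (o_limit ho hprin)).2
    fun b hb => (hprin a h b hb).le) (le_add_self)

lemma dvd_omega_o : ω ∣ o := ((Ordinal.isSuccLimit_iff_omega0_dvd).1 (o_limit ho hprin)).2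

lemma dvd_omega_oo : ω ∣ o * o := Dvd.dvd.mul_right (dvd_omega_o ho hprin) o

lemma oo_limit : Order.IsSuccLimit (o * o) :=
  Ordinal.isSuccLimit_mul_right (o_limit ho hprin).pos (o_limit ho hprin)

lemma addo_form (β : Ordinal) : β + o = o * (β / o + 1) := by
  have h0 : o ≠ 0 := (o_limit ho hprin).ne_zero
  conv_lhs => rw [← Ordinal.div_add_mod β o]
  rw [add_assoc, absorb ho hprin (Ordinal.mod_lt β h0), mul_add_one]

lemma nonsucc_mul {x : Ordinal} (hx : x ∈ E o) (hns : ¬ ISucc x) (h0 : x ≠ 0) :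
    ∃ q, q ≠ 0 ∧ x = o * q := by
  rcases hx.2 with h | h | h | ⟨β, rfl⟩
  · exact ⟨o, (o_limit ho hprin).ne_zero, h⟩
  · exact absurd h h0
  · exact absurd h hns
  · exact ⟨β / o + 1, by rw [Ordinal.add_one_eq_succ]; exact Ordinal.succ_ne_zero _,
      addo_form ho hprin β⟩

lemma dvd_nonsucc {x : Ordinal} (hx : x ∈ E o) (hns : ¬ ISucc x) : ω ∣ x := by
  rcases eq_or_ne x 0 with rfl | h0
  · exact dvd_zero ω
  · obtain ⟨q, _, rfl⟩ := nonsucc_mul ho hprin hx hns h0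
    exact Dvd.dvd.mul_right (dvd_omega_o ho hprin) q

lemma P_of_addomega {x μ : Ordinal} (hx : x ∈ E o) (hns : ¬ ISucc x) (h0 : x ≠ 0)
    (hdμ : ω ∣ μ) (heq : μ + ω = x) : P o μ := by
  rcases lt_or_eq_of_le ho with hlt | heq2
  · -- ω < o : impossible
    exfalso
    obtain ⟨q, hq0, hq⟩ := nonsucc_mul ho hprin hx hns h0
    have hone : o ≠ 0 := (o_limit ho hprin).ne_zero
    have h1 : x % o = 0 := by rw [hq, Ordinal.mul_mod]
    have h2 : x % o = μ % o + ω := by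
      conv_lhs => rw [← heq, ← Ordinal.div_add_mod μ o, add_assoc]
      rw [Ordinal.mul_add_mod_self,
        Ordinal.mod_eq_of_lt (hprin _ (Ordinal.mod_lt μ hone) _ hlt)]
    rw [h1] at h2
    exact absurd h2 (ne_of_lt (lt_of_lt_of_le Ordinal.omega0_pos (le_add_self)))
  · -- o = ω
    obtain ⟨m, rfl⟩ := hdμ
    have hxval : x = ω * (m + 1) := by rw [← heq, mul_add_one]
    have hle : m + 1 ≤ ω := by
      have := hx.1
      rw [hxval, ← heq2] at this
      exact (Ordinal.isNormal_mul_right Ordinal.omega0_pos).strictMono.le_iff_le.1 this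
    have hltω : m < ω := by
      rcases lt_or_eq_of_le hle with h | h
      · exact lt_of_le_of_lt (by rw [Ordinal.add_one_eq_succ]; exact Order.le_succ m) h
      · exfalso
        have : ISucc ω := ⟨m, h.symm⟩
        exact not_succ_of_omega_dvd ⟨1, (mul_one ω).symm⟩ this
    obtain ⟨n, rfl⟩ := Ordinal.lt_omega0.1 hltω
    rcases Nat.eq_zero_or_pos n with rfl | hn
    · left; rw [Nat.cast_zero, mul_zero]
    · right
      obtain ⟨k, rfl⟩ := Nat.exists_eq_add_of_lt hn
      refine ⟨ω * k, ?_⟩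
      rw [← heq2]
      have hc : ((0 + k + 1 : ℕ) : Ordinal) = (k : Ordinal) + 1 := by
        norm_num
      rw [hc, mul_add_one]

end Main

section Inj

variable {o : Ordinal}

lemma kp_zero : kp o 0 = (0, -1) := by
  refine kp_nonsucc o ?_
  rintro ⟨s, hs⟩
  rw [Ordinal.add_one_eq_succ] at hs
  exact Ordinal.succ_ne_zero s hs.symm

lemma kfst_le {x : Ordinal} : (kp o x).1 ≤ x := by
  by_cases sx : ISucc x
  · obtain ⟨μ, n, hd, hxe, hk⟩ := succ_form o sx
    rw [hk, hxe]
    exact le_trans (le_self_add)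
      (le_of_lt ((Ordinal.add_one_eq_succ (μ + n)).symm ▸ Order.lt_succ (μ + (n : Ordinal))))
  · rw [kp_nonsucc o sx]

lemma chain_lt_add_omega (μ : Ordinal) (n : ℕ) : μ + n + 1 < μ + ω := by
  rw [add_assoc]
  refine add_lt_add_right ?_ μ
  have : ((n : Ordinal) + 1) = ((n + 1 : ℕ) : Ordinal) := by push_cast; ring
  rw [this]
  exact Ordinal.nat_lt_omega0 (n + 1)

lemma kp_ne_of_succ_nonsucc {x y : Ordinal} (hx : x ∈ E o) (hy : y ∈ E o)
    (sx : ISucc x) (sy : ¬ ISucc y) : kp o x ≠ kp o y := by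
  obtain ⟨μ, n, hd, hxe, hk⟩ := succ_form o sx
  rw [hk, kp_nonsucc o sy]
  intro h
  obtain ⟨h1, h2⟩ := Prod.ext_iff.1 h
  simp only at h1 h2
  subst h1
  rcases hy.2 with htop | h0 | hs | hb
  · -- y = o * o, but x = y + n + 1 ≤ o * o
    have hle := hx.1
    rw [hxe, htop] at hle
    have hlt : o * o < o * o + n + 1 :=
      lt_of_le_of_lt (le_self_add)
        ((Ordinal.add_one_eq_succ (o * o + n)).symm ▸ Order.lt_succ (o * o + (n : Ordinal)))
    exact absurd hle (not_le.2 hlt)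
  · have hzk : zk o μ n = (n : ℤ) := zk_P (Or.inl h0)
    rw [hzk] at h2; omega
  · exact sy hs
  · have hzk : zk o μ n = (n : ℤ) := zk_P (Or.inr hb)
    rw [hzk] at h2; omega

lemma kp_inj_E {x y : Ordinal} (hx : x ∈ E o) (hy : y ∈ E o) (h : kp o x = kp o y) :
    x = y := by
  by_cases sx : ISucc x <;> by_cases sy : ISucc y
  · obtain ⟨μ, n, hd, hxe, hk⟩ := succ_form o sx
    obtain ⟨μ', n', hd', hye, hk'⟩ := succ_form o sy
    rw [hk, hk'] at h
    obtain ⟨h1, h2⟩ := Prod.ext_iff.1 h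
    simp only at h1 h2
    subst h1
    rw [hxe, hye, zk_inj h2]
  · exact absurd h (kp_ne_of_succ_nonsucc hx hy sx sy)
  · exact absurd h.symm (kp_ne_of_succ_nonsucc hy hx sy sx)
  · rw [kp_nonsucc o sx, kp_nonsucc o sy] at h
    exact (Prod.ext_iff.1 h).1

end Inj

section Order

variable {o : Ordinal}

/-- the new linear order on `E o` -/
def lo (o : Ordinal) : LinearOrder ↥(E o) :=
  LinearOrder.lift' (fun x : ↥(E o) => toLex (kp o x.1))
    (fun x y h => Subtype.ext (kp_inj_E x.2 y.2 (by exact toLex.injective h)))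

def klt (o x y : Ordinal) : Prop := toLex (kp o x) < toLex (kp o y)

lemma klt_iff {x y : Ordinal} : klt o x y ↔
    ((kp o x).1 < (kp o y).1 ∨ ((kp o x).1 = (kp o y).1 ∧ (kp o x).2 < (kp o y).2)) :=
  Prod.Lex.lt_iff

lemma lo_lt {x y : ↥(E o)} : (lo o).lt x y ↔ klt o x.1 y.1 := Iff.rfl

def SIoi (o : Ordinal) (a : ↥(E o)) : Set ↥(E o) := {y | klt o a.1 y.1}
def SIio (o : Ordinal) (a : ↥(E o)) : Set ↥(E o) := {y | klt o y.1 a.1}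

abbrev t1 (o : Ordinal) : TopologicalSpace ↥(E o) :=
  @Preorder.topology ↥(E o) (lo o).toPreorder

lemma t1_eq : t1 o = generateFrom {s | ∃ a : ↥(E o), s = SIoi o a ∨ s = SIio o a} := rfl

lemma isOpen_SIoi (a : ↥(E o)) : IsOpen[t1 o] (SIoi o a) := by
  rw [t1_eq]; exact TopologicalSpace.isOpen_generateFrom_of_mem ⟨a, Or.inl rfl⟩

lemma isOpen_SIio (a : ↥(E o)) : IsOpen[t1 o] (SIio o a) := by
  rw [t1_eq]; exact TopologicalSpace.isOpen_generateFrom_of_mem ⟨a, Or.inr rfl⟩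

lemma zero_mem_E : (0 : Ordinal) ∈ E o := ⟨zero_le, Or.inr (Or.inl rfl)⟩

lemma mem_E_succ {s : Ordinal} (h : s + 1 ≤ o * o) : s + 1 ∈ E o :=
  ⟨h, Or.inr (Or.inr (Or.inl ⟨s, rfl⟩))⟩

lemma chain_lt (μ : Ordinal) (n : ℕ) : μ < μ + n + 1 :=
  lt_of_le_of_lt (le_self_add)
    ((Ordinal.add_one_eq_succ (μ + n)).symm ▸ Order.lt_succ (μ + (n : Ordinal)))

lemma lt_add_omega (μ : Ordinal) : μ < μ + ω := by
  conv_lhs => rw [← add_zero μ]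
  exact add_lt_add_right Ordinal.omega0_pos μ

lemma kp_one : kp o (1 : Ordinal) = (0, 0) := by
  have h := kp_chain o (dvd_zero ω) 0
  simpa [zk_zero] using h

end Order

section Main2

variable {o : Ordinal} (ho : ω ≤ o) (hprin : ∀ a < o, ∀ b < o, a + b < o)

include ho hprin

lemma chain_mem {μ : Ordinal} (hd : ω ∣ μ) (hμ : μ < o * o) (n : ℕ) : μ + n + 1 ∈ E o := by
  refine mem_E_succ (le_trans (le_of_lt (chain_lt_add_omega μ n)) ?_)
  exact add_omega_le hd (dvd_omega_oo ho hprin) hμ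

omit ho hprin in
/-- isolated points have open singletons in the subspace topology -/
lemma t2_singleton {x : ↥(E o)} (h : ISucc x.1 ∨ x.1 = 0) : IsOpen ({x} : Set ↥(E o)) := by
  rcases h with ⟨s, hs⟩ | h0
  · have : ({x} : Set ↥(E o)) = Subtype.val ⁻¹' (Set.Ioo s (s + 1 + 1)) := by
      ext y
      simp only [Set.mem_singleton_iff, Set.mem_preimage, Set.mem_Ioo]
      constructor
      · rintro rfl; rw [hs]
        exact ⟨(Ordinal.add_one_eq_succ s).symm ▸ Order.lt_succ s,
          (Ordinal.add_one_eq_succ (s+1)).symm ▸ Order.lt_succ (s + 1)⟩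
      · rintro ⟨h1, h2⟩
        refine Subtype.ext ?_
        rw [hs]
        exact le_antisymm (Order.lt_add_one_iff.1 h2) (Order.add_one_le_iff.2 h1)
    rw [this]
    exact isOpen_Ioo.preimage continuous_subtype_val
  · have : ({x} : Set ↥(E o)) = Subtype.val ⁻¹' (Set.Iio 1) := by
      ext y
      simp only [Set.mem_singleton_iff, Set.mem_preimage, Set.mem_Iio, Ordinal.lt_one_iff_zero]
      constructor
      · rintro rfl; exact h0
      · intro h; exact Subtype.ext (h.trans h0.symm)
    rw [this]
    exact isOpen_Iio.preimage continuous_subtype_val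

/-- isolated points have open singletons in the new order topology -/
lemma t1_singleton {x : ↥(E o)} (h : ISucc x.1 ∨ x.1 = 0) : IsOpen[t1 o] ({x} : Set ↥(E o)) := by
  rcases h with hs | h0
  · obtain ⟨μ, n, hd, hxe, hk⟩ := succ_form o hs
    have hμx : μ < x.1 := by
      rw [hxe]
      exact lt_of_le_of_lt (le_self_add)
        ((Ordinal.add_one_eq_succ (μ + n)).symm ▸ Order.lt_succ (μ + (n : Ordinal)))
    have hμoo : μ < o * o := lt_of_lt_of_le hμx x.2.1
    -- successor neighbour
    obtain ⟨ns, hns⟩ := zk_exists o μ (zk o μ n + 1) (fun hp => by rw [zk_P hp]; omega)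
    have hx'mem : μ + ns + 1 ∈ E o := chain_mem ho hprin hd hμoo ns
    have hkx' : kp o (μ + ns + 1) = (μ, zk o μ n + 1) := by rw [kp_chain o hd ns, hns]
    -- predecessor neighbour
    have hpred : ∃ p ∈ E o, kp o p = (μ, zk o μ n - 1) := by
      by_cases hp : P o μ
      · rcases Nat.eq_zero_or_pos n with rfl | hn
        · refine ⟨μ, ?_, ?_⟩
          · rcases hp with rfl | ⟨β, hβ⟩
            · exact zero_mem_E
            · exact ⟨hμoo.le, Or.inr (Or.inr (Or.inr ⟨β, hβ⟩))⟩
          · rw [kp_nonsucc o (not_succ_of_omega_dvd hd), zk_P hp]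
            norm_num
        · obtain ⟨k, rfl⟩ := Nat.exists_eq_succ_of_ne_zero hn.ne'
          refine ⟨μ + k + 1, chain_mem ho hprin hd hμoo k, ?_⟩
          rw [kp_chain o hd k, zk_P hp, zk_P hp]
          push_cast; ring_nf
      · obtain ⟨m, hm⟩ := zeta_surj (zeta n - 1)
        refine ⟨μ + m + 1, chain_mem ho hprin hd hμoo m, ?_⟩
        rw [kp_chain o hd m]
        unfold zk
        rw [if_neg hp, if_neg hp, hm]
    obtain ⟨p, hpmem, hkp⟩ := hpred
    have heq : ({x} : Set ↥(E o)) = SIoi o ⟨p, hpmem⟩ ∩ SIio o ⟨μ + ns + 1, hx'mem⟩ := by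
      ext y
      simp only [Set.mem_singleton_iff, Set.mem_inter_iff, SIoi, SIio, Set.mem_setOf_eq]
      constructor
      · rintro rfl
        constructor
        · rw [klt_iff, hkp, hk]; right; exact ⟨rfl, by omega⟩
        · rw [klt_iff, hkx', hk]; right; exact ⟨rfl, by omega⟩
      · rintro ⟨h1, h2⟩
        rw [klt_iff, hkp] at h1
        rw [klt_iff, hkx'] at h2
        have hfst : (kp o y.1).1 = μ := by
          rcases h1 with h1 | ⟨h1, _⟩
          · rcases h2 with h2 | ⟨h2, _⟩
            · exact absurd (h1.trans h2) (lt_irrefl μ)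
            · exact h2
          · exact h1.symm
        have hsnd : (kp o y.1).2 = zk o μ n := by
          rcases h1 with h1 | ⟨_, h1⟩
          · rw [hfst] at h1; exact absurd h1 (lt_irrefl μ)
          · rcases h2 with h2 | ⟨_, h2⟩
            · rw [hfst] at h2; exact absurd h2 (lt_irrefl μ)
            · simp only at h1 h2; omega
        by_cases sy : ISucc y.1
        · obtain ⟨μy, ny, hdy, hye, hky⟩ := succ_form o sy
          rw [hky] at hfst hsnd
          simp only at hfst hsnd
          subst hfst
          have hnn : ny = n := zk_inj hsnd
          exact Subtype.ext (by rw [hye, hnn, ← hxe])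
        · exfalso
          rw [kp_nonsucc o sy] at hfst hsnd
          simp only at hfst hsnd
          rcases y.2.2 with htop | hy0 | hsy | ⟨β, hβ⟩
          · rw [hfst.symm.trans htop] at hμoo; exact lt_irrefl _ hμoo
          · have hpμ : P o μ := Or.inl (hfst.symm.trans hy0)
            rw [zk_P hpμ] at hsnd; omega
          · exact sy hsy
          · have hpμ : P o μ := Or.inr ⟨β, hfst.symm.trans hβ⟩
            rw [zk_P hpμ] at hsnd; omega
    rw [heq]
    exact @IsOpen.inter _ (t1 o) _ _ (isOpen_SIoi _) (isOpen_SIio _)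
  · have h1mem : (1 : Ordinal) ∈ E o := by
      have h := mem_E_succ (o := o) (s := 0)
        (by rw [zero_add]; exact Order.one_le_iff_pos.2 (oo_limit ho hprin).pos)
      rwa [zero_add] at h
    have heq : ({x} : Set ↥(E o)) = SIio o ⟨1, h1mem⟩ := by
      ext y
      simp only [Set.mem_singleton_iff, SIio, Set.mem_setOf_eq]
      rw [klt_iff, kp_one]
      constructor
      · rintro rfl
        rw [h0, kp_zero]
        right; exact ⟨rfl, by norm_num⟩
      · intro h
        rcases h with h | ⟨h1, h2⟩
        · exact absurd h not_lt_zero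
        · by_cases sy : ISucc y.1
          · exfalso
            obtain ⟨μy, ny, hdy, hye, hky⟩ := succ_form o sy
            rw [hky] at h1 h2
            simp only at h1 h2
            subst h1
            rw [zk_P (Or.inl rfl)] at h2
            omega
          · rw [kp_nonsucc o sy] at h1
            exact Subtype.ext (by simp only at h1; rw [h1, h0])
    rw [heq]
    exact isOpen_SIio _

/-- `Ioi` rays of the new order are open in the subspace topology -/
lemma open_SIoi_t2 (a : ↥(E o)) : IsOpen (SIoi o a) := by
  rw [isOpen_iff_forall_mem_open]
  intro x hx
  have hx' : klt o a.1 x.1 := hx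
  by_cases hiso : ISucc x.1 ∨ x.1 = 0
  · exact ⟨{x}, by rintro y rfl; exact hx, t2_singleton hiso, rfl⟩
  · push_neg at hiso
    obtain ⟨hnsx, h0⟩ := hiso
    have hkx : kp o x.1 = (x.1, -1) := kp_nonsucc o hnsx
    have hdx : ω ∣ x.1 := dvd_nonsucc ho hprin x.2 hnsx
    suffices hsuff : ∃ w, w < x.1 ∧ ∀ y : ↥(E o), w < y.1 → y.1 ≤ x.1 → klt o a.1 y.1 by
      obtain ⟨w, hw1, hw2⟩ := hsuff
      refine ⟨Subtype.val ⁻¹' (Set.Ioo w (x.1 + 1)), ?_, ?_, ?_⟩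
      · intro y hy
        exact hw2 y hy.1 (Order.lt_add_one_iff.1 hy.2)
      · exact isOpen_Ioo.preimage continuous_subtype_val
      · exact ⟨hw1, (Ordinal.add_one_eq_succ x.1).symm ▸ Order.lt_succ x.1⟩
    by_cases sa : ISucc a.1
    · obtain ⟨μa, na, hda, hae, hka⟩ := succ_form o sa
      have hμx : μa < x.1 := by
        rw [klt_iff, hka, hkx] at hx'
        rcases hx' with hx' | ⟨hx1, hx2⟩
        · exact hx'
        · exfalso
          simp only at hx1 hx2
          rcases x.2.2 with htop | h0' | hs' | ⟨β, hβ⟩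
          · have hle := a.2.1
            rw [hae, hx1, htop] at hle
            exact absurd hle (not_le.2 (chain_lt (o * o) na))
          · exact h0 h0'
          · exact hnsx hs'
          · have hpμ : P o μa := Or.inr ⟨β, hx1.trans hβ⟩
            rw [zk_P hpμ] at hx2; omega
      have hμωx : μa + ω ≤ x.1 := add_omega_le hda hdx hμx
      have hμa_a : μa < a.1 := by rw [hae]; exact chain_lt μa na
      by_cases hpa : P o μa
      · -- w := a
        refine ⟨a.1, lt_of_lt_of_le (by rw [hae]; exact chain_lt_add_omega μa na) hμωx, ?_⟩
        intro y hwy hyx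
        rw [klt_iff, hka]
        by_cases sy : ISucc y.1
        · obtain ⟨μy, ny, hdy, hye, hky⟩ := succ_form o sy
          rw [hky]
          have hay : a.1 ≤ μy + ny := by
            rw [← Order.lt_add_one_iff, ← hye]; exact hwy
          have hμμ : μa ≤ μy := dvd_le_mu hda hdy (le_trans hμa_a.le hay)
          rcases lt_or_eq_of_le hμμ with hlt | heq
          · left; exact hlt
          · right
            refine ⟨heq, ?_⟩
            simp only
            have hyy : y.1 = μa + ny + 1 := by rw [hye, heq]
            have hlt2 : (na : Ordinal) < (ny : Ordinal) := by
              have hw2 := hwy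
              rw [hae, hyy, Ordinal.add_one_eq_succ, Ordinal.add_one_eq_succ] at hw2
              exact (add_lt_add_iff_left μa).1 (Order.succ_lt_succ_iff.1 hw2)
            have hnan : na < ny := by exact_mod_cast hlt2
            rw [← heq, zk_P hpa, zk_P hpa]
            exact_mod_cast hnan
        · rw [kp_nonsucc o sy]
          left
          exact lt_trans hμa_a hwy
      · -- w := μa + ω
        have hne : μa + ω ≠ x.1 := fun he => hpa (P_of_addomega ho hprin x.2 hnsx h0 hda he)
        refine ⟨μa + ω, lt_of_le_of_ne hμωx hne, ?_⟩
        intro y hwy hyx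
        rw [klt_iff, hka]
        left
        by_cases sy : ISucc y.1
        · obtain ⟨μy, ny, hdy, hye, hky⟩ := succ_form o sy
          rw [hky]
          have h1 : μa + ω ≤ μy + ny := by
            rw [← Order.lt_add_one_iff, ← hye]; exact hwy
          have h2 : μa + ω ≤ μy :=
            dvd_le_mu (Dvd.dvd.add hda ⟨1, (mul_one ω).symm⟩) hdy h1
          exact lt_of_lt_of_le (lt_add_omega μa) h2
        · rw [kp_nonsucc o sy]
          exact lt_of_lt_of_le (lt_add_omega μa) hwy.le
    · have hka : kp o a.1 = (a.1, -1) := kp_nonsucc o sa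
      have hax : a.1 < x.1 := by
        rw [klt_iff, hka, hkx] at hx'
        rcases hx' with hx' | ⟨hx1, hx2⟩
        · exact hx'
        · simp only at hx2; omega
      refine ⟨a.1, hax, ?_⟩
      intro y hwy hyx
      rw [klt_iff, hka]
      by_cases sy : ISucc y.1
      · obtain ⟨μy, ny, hdy, hye, hky⟩ := succ_form o sy
        rw [hky]
        have hda : ω ∣ a.1 := dvd_nonsucc ho hprin a.2 sa
        have hay : a.1 ≤ μy := by
          refine dvd_le_mu (n := ny) hda hdy ?_
          rw [← Order.lt_add_one_iff, ← hye]; exact hwy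
        rcases lt_or_eq_of_le hay with h | h
        · left; exact h
        · right
          refine ⟨h, ?_⟩
          simp only
          have hpμ : P o μy := by
            rcases a.2.2 with htop | h0' | hs' | ⟨β, hβ⟩
            · exfalso
              have hgt : o * o < y.1 := by
                rw [hye, ← h, htop]
                exact chain_lt (o * o) ny
              exact absurd y.2.1 (not_le.2 hgt)
            · exact Or.inl (h ▸ h0')
            · exact absurd hs' sa
            · exact Or.inr ⟨β, h ▸ hβ⟩
          rw [zk_P hpμ]
          omega
      · rw [kp_nonsucc o sy]
        left; exact hwy

/-- `Iio` rays of the new order are open in the subspace topology -/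
lemma open_SIio_t2 (a : ↥(E o)) : IsOpen (SIio o a) := by
  rw [isOpen_iff_forall_mem_open]
  intro x hx
  have hx' : klt o x.1 a.1 := hx
  by_cases hiso : ISucc x.1 ∨ x.1 = 0
  · exact ⟨{x}, by rintro y rfl; exact hx, t2_singleton hiso, rfl⟩
  · push_neg at hiso
    obtain ⟨hnsx, h0⟩ := hiso
    have hkx : kp o x.1 = (x.1, -1) := kp_nonsucc o hnsx
    refine ⟨Subtype.val ⁻¹' (Set.Iio (x.1 + 1)), ?_, isOpen_Iio.preimage continuous_subtype_val,
      (Ordinal.add_one_eq_succ x.1).symm ▸ Order.lt_succ x.1⟩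
    intro y hy
    have hyx : y.1 ≤ x.1 := Order.lt_add_one_iff.1 hy
    show klt o y.1 a.1
    rw [klt_iff]
    rw [klt_iff, hkx] at hx'
    rcases hx' with hx' | ⟨hx1, hx2⟩
    · -- x < (kp a).1
      left
      exact lt_of_le_of_lt (le_trans kfst_le hyx) hx'
    · simp only at hx1 hx2
      by_cases sy : ISucc y.1
      · obtain ⟨μy, ny, hdy, hye, hky⟩ := succ_form o sy
        rw [hky]
        left
        rw [← hx1]
        exact lt_of_lt_of_le (by rw [hye]; exact chain_lt μy ny) hyx
      · rw [kp_nonsucc o sy]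
        rcases lt_or_eq_of_le hyx with h | h
        · left; rw [← hx1]; exact h
        · right; exact ⟨h.trans hx1, by simp only; omega⟩

/-- preimages of ordinal `Ioi` rays are open in the new order topology -/
lemma preim_Ioi_open (c : Ordinal) :
    IsOpen[t1 o] (Subtype.val ⁻¹' (Set.Ioi c) : Set ↥(E o)) := by
  refine (@isOpen_iff_forall_mem_open _ (t1 o) _).2 ?_
  intro x hx
  have hcx : c < x.1 := hx
  by_cases hiso : ISucc x.1 ∨ x.1 = 0
  · exact ⟨{x}, by rintro y rfl; exact hx, t1_singleton ho hprin hiso, rfl⟩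
  · push_neg at hiso
    obtain ⟨hnsx, h0⟩ := hiso
    have hkx : kp o x.1 = (x.1, -1) := kp_nonsucc o hnsx
    have hdx : ω ∣ x.1 := dvd_nonsucc ho hprin x.2 hnsx
    set μ0 := ω * (c / ω) with hμ0
    have hd0 : ω ∣ μ0 := ⟨c / ω, rfl⟩
    have hc1 : c < μ0 + ω := by
      conv_lhs => rw [← Ordinal.div_add_mod c ω]
      exact add_lt_add_right (Ordinal.mod_lt c Ordinal.omega0_ne_zero) μ0
    have hμ0c : μ0 ≤ c := by
      conv_rhs => rw [← Ordinal.div_add_mod c ω]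
      exact le_self_add
    have hν : μ0 + ω ≤ x.1 := add_omega_le hd0 hdx (lt_of_le_of_lt hμ0c hcx)
    rcases lt_or_eq_of_le hν with hν | hν
    · -- a' := μ0 + ω + 1
      have hmem : μ0 + ω + 1 ∈ E o := mem_E_succ (Order.add_one_le_iff.2 (lt_of_lt_of_le hν x.2.1))
      have hka' : kp o (μ0 + ω + 1) = (μ0 + ω, 0) := by
        have hd : ω ∣ μ0 + ω := Dvd.dvd.add hd0 dvd_rfl
        have h := kp_chain o hd 0
        simpa [zk_zero] using h
      refine ⟨SIoi o ⟨μ0 + ω + 1, hmem⟩, ?_, isOpen_SIoi _, ?_⟩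
      · intro y hy
        have hy' : klt o (μ0 + ω + 1) y.1 := hy
        rw [klt_iff, hka'] at hy'
        have h1 : μ0 + ω ≤ (kp o y.1).1 := by
          rcases hy' with h | ⟨h, _⟩
          · exact h.le
          · exact h.le
        exact lt_of_lt_of_le hc1 (le_trans h1 kfst_le)
      · show klt o (μ0 + ω + 1) x.1
        rw [klt_iff, hka', hkx]
        left; exact hν
    · -- μ0 + ω = x : the chain below x is pinned, use a' := c + 1
      have hpμ0 : P o μ0 := P_of_addomega ho hprin x.2 hnsx h0 hd0 hν
      have hmem : c + 1 ∈ E o := mem_E_succ (Order.add_one_le_iff.2 (lt_of_lt_of_le hcx x.2.1))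
      set nc : ℕ := nOf (c % ω) with hnc
      have hncc : (nc : Ordinal) = c % ω := nOf_lt (Ordinal.mod_lt c Ordinal.omega0_ne_zero)
      have hceq : c = μ0 + nc := by
        rw [hncc]
        exact (Ordinal.div_add_mod c ω).symm
      have hka' : kp o (c + 1) = (μ0, (nc : ℤ)) := by
        rw [kp_succ, ← hμ0, ← hnc, zk_P hpμ0]
      refine ⟨SIoi o ⟨c + 1, hmem⟩, ?_, isOpen_SIoi _, ?_⟩
      · intro y hy
        have hy' : klt o (c + 1) y.1 := hy
        rw [klt_iff, hka'] at hy'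
        show c < y.1
        rcases hy' with hfst | ⟨hfst, hsnd⟩
        · -- μ0 < (kp y).1
          by_cases sy : ISucc y.1
          · obtain ⟨μy, ny, hdy, hye, hky⟩ := succ_form o sy
            rw [hky] at hfst
            simp only at hfst
            have : μ0 + ω ≤ μy := add_omega_le hd0 hdy hfst
            calc c < μ0 + ω := hc1
              _ ≤ μy := this
              _ ≤ y.1 := by rw [hye]; exact (chain_lt μy ny).le
          · rw [kp_nonsucc o sy] at hfst
            simp only at hfst
            have hdyy : ω ∣ y.1 := dvd_nonsucc ho hprin y.2 sy
            calc c < μ0 + ω := hc1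
              _ ≤ y.1 := add_omega_le hd0 hdyy hfst
        · -- same chain : (kp y).1 = μ0, z > nc
          by_cases sy : ISucc y.1
          · obtain ⟨μy, ny, hdy, hye, hky⟩ := succ_form o sy
            rw [hky] at hfst hsnd
            simp only at hfst hsnd
            rw [← hfst, zk_P hpμ0] at hsnd
            have hnlt : nc < ny := by omega
            have : c < μ0 + ny := by
              rw [hceq]
              exact add_lt_add_right (by exact_mod_cast hnlt) μ0
            calc c < μ0 + ny := this
              _ < y.1 := by
                rw [hye, ← hfst, Ordinal.add_one_eq_succ]
                exact Order.lt_succ _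
          · rw [kp_nonsucc o sy] at hfst hsnd
            simp only at hsnd
            omega
      · show klt o (c + 1) x.1
        rw [klt_iff, hka', hkx]
        left
        simp only
        calc μ0 < μ0 + ω := lt_add_omega μ0
          _ = x.1 := hν

/-- preimages of ordinal `Iio` rays are open in the new order topology -/
lemma preim_Iio_open (c : Ordinal) :
    IsOpen[t1 o] (Subtype.val ⁻¹' (Set.Iio c) : Set ↥(E o)) := by
  refine (@isOpen_iff_forall_mem_open _ (t1 o) _).2 ?_
  intro x hx
  have hcx : x.1 < c := hx
  by_cases hiso : ISucc x.1 ∨ x.1 = 0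
  · exact ⟨{x}, by rintro y rfl; exact hx, t1_singleton ho hprin hiso, rfl⟩
  · push_neg at hiso
    obtain ⟨hnsx, h0⟩ := hiso
    have hkx : kp o x.1 = (x.1, -1) := kp_nonsucc o hnsx
    have hdx : ω ∣ x.1 := dvd_nonsucc ho hprin x.2 hnsx
    by_cases htop : x.1 = o * o
    · -- the whole space works
      refine ⟨Set.univ, ?_, @isOpen_univ _ (t1 o), trivial⟩
      intro y _
      show y.1 < c
      exact lt_of_le_of_lt (le_trans y.2.1 (htop ▸ le_rfl)) hcx
    · have hxoo : x.1 < o * o := lt_of_le_of_ne x.2.1 htop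
      have hmem : x.1 + 1 ∈ E o := mem_E_succ (Order.add_one_le_iff.2 hxoo)
      have hkb : kp o (x.1 + 1) = (x.1, 0) := by
        have h := kp_chain o hdx 0
        simpa [zk_zero] using h
      refine ⟨SIio o ⟨x.1 + 1, hmem⟩, ?_, isOpen_SIio _, ?_⟩
      · intro y hy
        have hy' : klt o y.1 (x.1 + 1) := hy
        rw [klt_iff, hkb] at hy'
        show y.1 < c
        rcases hy' with hfst | ⟨hfst, hsnd⟩
        · by_cases sy : ISucc y.1
          · obtain ⟨μy, ny, hdy, hye, hky⟩ := succ_form o sy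
            rw [hky] at hfst
            simp only at hfst
            have h1 : μy + ω ≤ x.1 := add_omega_le hdy hdx hfst
            calc y.1 < μy + ω := by rw [hye]; exact chain_lt_add_omega μy ny
              _ ≤ x.1 := h1
              _ < c := hcx
          · rw [kp_nonsucc o sy] at hfst
            exact lt_trans hfst hcx
        · by_cases sy : ISucc y.1
          · exfalso
            obtain ⟨μy, ny, hdy, hye, hky⟩ := succ_form o sy
            rw [hky] at hfst hsnd
            simp only at hfst hsnd
            have hpx : P o x.1 := by
              rcases x.2.2 with ht' | h0' | hs' | ⟨β, hβ⟩
              · exact absurd ht' htop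
              · exact absurd h0' h0
              · exact absurd hs' hnsx
              · exact Or.inr ⟨β, hβ⟩
            rw [← hfst] at hpx
            rw [zk_P hpx] at hsnd
            omega
          · rw [kp_nonsucc o sy] at hfst
            simp only at hfst
            rw [hfst]
            exact hcx
      · show klt o x.1 (x.1 + 1)
        rw [klt_iff, hkb, hkx]
        right
        exact ⟨rfl, by simp only; omega⟩

/-- the order topology of the new order equals the subspace topology -/
lemma topology_eq : t1 o = (inferInstance : TopologicalSpace ↥(E o)) := by
  apply le_antisymm
  · -- every subspace-open set is open in the new order topology
    have h2 : (inferInstance : TopologicalSpace ↥(E o)) =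
        TopologicalSpace.induced (Subtype.val : ↥(E o) → Ordinal) inferInstance := rfl
    rw [h2, OrderTopology.topology_eq_generate_intervals (α := Ordinal), Preorder.topology,
      induced_generateFrom_eq]
    apply le_generateFrom
    rintro s ⟨s', ⟨a, rfl | rfl⟩, rfl⟩
    · exact preim_Ioi_open ho hprin a
    · exact preim_Iio_open ho hprin a
  · rw [t1_eq]
    apply le_generateFrom
    rintro s ⟨a, rfl | rfl⟩
    · exact open_SIoi_t2 ho hprin a
    · exact open_SIio_t2 ho hprin a

lemma klt_of_lt_left {x y : Ordinal} (hx : x ∈ E o) (hy : y ∈ E o)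
    (hns : ¬ ISucc x) (hlt : x < y) : klt o x y := by
  have hkx : kp o x = (x, -1) := kp_nonsucc o hns
  have hdx : ω ∣ x := dvd_nonsucc ho hprin hx hns
  rw [klt_iff, hkx]
  by_cases sy : ISucc y
  · obtain ⟨μy, ny, hdy, hye, hky⟩ := succ_form o sy
    rw [hky]
    have hxy : x ≤ μy := dvd_le_mu (n := ny) hdx hdy
      (by rw [← Order.lt_add_one_iff, ← hye]; exact hlt)
    rcases lt_or_eq_of_le hxy with h | h
    · left; exact h
    · right
      refine ⟨h, ?_⟩
      simp only
      have hpμ : P o μy := by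
        rcases hx.2 with htop | h0' | hs' | ⟨β, hβ⟩
        · exfalso
          have hgt : o * o < y := by rw [hye, ← h, htop]; exact chain_lt (o * o) ny
          exact absurd hy.1 (not_le.2 hgt)
        · exact Or.inl (h ▸ h0')
        · exact absurd hs' hns
        · exact Or.inr ⟨β, h ▸ hβ⟩
      rw [zk_P hpμ]; omega
  · rw [kp_nonsucc o sy]; left; exact hlt

omit ho hprin in
lemma klt_of_lt_right {x y : Ordinal} (hns : ¬ ISucc x) (hlt : y < x) : klt o y x := by
  rw [klt_iff, kp_nonsucc o hns]
  left
  exact lt_of_le_of_lt kfst_le hlt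

end Main2

end

end Stmt11


/-- For an infinite cardinal `γ`, the set of ordinals
`L_γ = {α ≤ γ·γ : α = γ·γ, or α = 0, or α is a successor, or α = β + γ for some β}`. -/
def Lset (γ : Cardinal) : Set Ordinal :=
  {α | α ≤ γ.ord * γ.ord ∧
    (α = γ.ord * γ.ord ∨ α = 0 ∨ (∃ β, α = β + 1) ∨ ∃ β : Ordinal, α = β + γ.ord)}

/-- For every infinite cardinal `γ` there is a linear order `≺` on `L_γ` whose order
topology is the subspace topology of `L_γ`, and which agrees with the ordinal order on all
pairs containing a non-isolated point of `L_γ`. -/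
theorem stmt_11 (γ : Cardinal) (hγ : Cardinal.aleph0 ≤ γ) :
    ∃ lo : LinearOrder ↥(Lset γ),
      @Preorder.topology ↥(Lset γ) lo.toPreorder =
        (inferInstance : TopologicalSpace ↥(Lset γ)) ∧
      ∀ x y : ↥(Lset γ), NonIsolated x →
        (((x : Ordinal) < (y : Ordinal) → lo.lt x y) ∧
         ((y : Ordinal) < (x : Ordinal) → lo.lt y x)) := by
  have ho : Ordinal.omega0 ≤ γ.ord := by
    rw [← Cardinal.ord_aleph0]
    exact Cardinal.ord_le_ord.2 hγ
  have hprin : ∀ a < γ.ord, ∀ b < γ.ord, a + b < γ.ord :=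
    fun a ha b hb => Ordinal.isPrincipal_add_ord hγ ha hb
  refine ⟨Stmt11.lo γ.ord, Stmt11.topology_eq ho hprin, ?_⟩
  intro x y hni
  have hnsx : ¬ Stmt11.ISucc x.1 := by
    intro hs
    exact hni (Stmt11.t2_singleton (o := γ.ord) (Or.inl hs))
  constructor
  · intro hlt
    exact Stmt11.klt_of_lt_left ho hprin x.2 y.2 hnsx hlt
  · intro hlt
    exact Stmt11.klt_of_lt_right hnsx hlt
end
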